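/- arXiv:2104.05278 — 4 statements merged into one kernel-verified Lean document; each statement's English description precedes it below -/
import Mathlib

section
/- Let d ≥ 2, M ≥ 2, T > 0. Let {(x_i, y_i)}_{i=1}^N ⊂ ℝ^d × ℝ^d be a finite dataset with x_i ≠ x_j for i ≠ j, where each label y_i takes one of M distinct values, and let m(i) ∈ {1,…,M} be the index of the label of x_i. Fix real numbers α_1 < α_2 < ⋯ < α_{M−1} and define the strips S_1 = {x ∈ ℝ^d : x^{(1)} ≤ α_1}, S_m = {x ∈ ℝ^d : α_{m−1} < x^{(1)} ≤ α_m} for 2 ≤ m ≤ M−1, and S_M = {x ∈ ℝ^d : x^{(1)} > α_{M−1}}. Then there exist piecewise constant controls A, W : [0,T] → ℝ^{d×d} and b : [0,T] → ℝ^d, with finitely many switching times, such that for every i ∈ {1,…,N} the flow of the Neural ODE satisfies φ_T(x_i; A, W, b) ∈ S_{m(i)}. -/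
open MeasureTheory Set

noncomputable section

/-- The ReLU activation applied componentwise. -/
def reluVec {d : ℕ} (x : EuclideanSpace ℝ (Fin d)) : EuclideanSpace ℝ (Fin d) :=
  WithLp.toLp 2 (fun k => max (x k) 0)

/-- A matrix acting on a vector of `EuclideanSpace ℝ (Fin d)`. -/
def mvec {d : ℕ} (M : Matrix (Fin d) (Fin d) ℝ) (x : EuclideanSpace ℝ (Fin d)) :
    EuclideanSpace ℝ (Fin d) :=
  WithLp.toLp 2 (fun i => ∑ j, M i j * x j)

/-- `f` is piecewise constant on `[0,T]` with (finite) switching set `S`: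
it is constant on the pieces of `[0,T]` between consecutive points of `S`. -/
def PCOn {α : Type*} (f : ℝ → α) (T : ℝ) (S : Finset ℝ) : Prop :=
  ∀ t₁ ∈ Set.Icc (0:ℝ) T, ∀ t₂ ∈ Set.Icc (0:ℝ) T, t₁ ≤ t₂ →
    (∀ s ∈ S, s ∉ Set.Ioc t₁ t₂) → f t₁ = f t₂

/-- `x` is a solution on `[0,T]` of the neural ODE
`ẋ = W(t) σ(A(t) x + b(t))` (ReLU activation), with switching set `S`. -/
def SolvesNODE {d : ℕ} (A W : ℝ → Matrix (Fin d) (Fin d) ℝ)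
    (b : ℝ → EuclideanSpace ℝ (Fin d)) (T : ℝ) (S : Finset ℝ)
    (x : ℝ → EuclideanSpace ℝ (Fin d)) : Prop :=
  ContinuousOn x (Set.Icc 0 T) ∧
  ∀ t ∈ Set.Icc (0:ℝ) T, t ∉ S →
    HasDerivWithinAt x (mvec (W t) (reluVec (mvec (A t) (x t) + b t))) (Set.Icc 0 T) t

/-- `φ` is the time-`T` flow map of the neural ODE. -/
def IsFlowNODE {d : ℕ} (A W : ℝ → Matrix (Fin d) (Fin d) ℝ)
    (b : ℝ → EuclideanSpace ℝ (Fin d)) (T : ℝ) (S : Finset ℝ)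
    (φ : EuclideanSpace ℝ (Fin d) → EuclideanSpace ℝ (Fin d)) : Prop :=
  ∀ x₀, ∃ x, SolvesNODE A W b T S x ∧ x 0 = x₀ ∧ x T = φ x₀

/-- The operator norm of a matrix acting on Euclidean space. -/
def matOpNorm {d : ℕ} (M : Matrix (Fin d) (Fin d) ℝ) : ℝ :=
  sSup ((fun x => ‖mvec M x‖) '' Metric.closedBall (0 : EuclideanSpace ℝ (Fin d)) 1)

/-- `Γ` can be covered, for every `h ∈ (0,1)`, by at most `C h^(-D)` closed
axis-parallel cubes of side `h`. -/
def CoveredByCubes {d : ℕ} (Γ : Set (EuclideanSpace ℝ (Fin d))) (C D : ℝ) : Prop :=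
  ∀ h : ℝ, 0 < h → h < 1 →
    ∃ F : Finset (EuclideanSpace ℝ (Fin d)),
      (F.card : ℝ) ≤ C * h ^ (-D) ∧
      Γ ⊆ ⋃ c ∈ F, {x | ∀ k, c k ≤ x k ∧ x k ≤ c k + h}


/- ### Auxiliary machinery -/

namespace NP
variable {d : ℕ}

def dot (a x : EuclideanSpace ℝ (Fin d)) : ℝ := ∑ k, a k * x k

lemma dot_add (a x y : EuclideanSpace ℝ (Fin d)) : dot a (x + y) = dot a x + dot a y := by
  simp [dot, mul_add, Finset.sum_add_distrib]

lemma dot_smul (a : EuclideanSpace ℝ (Fin d)) (c : ℝ) (x : EuclideanSpace ℝ (Fin d)) :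
    dot a (c • x) = c * dot a x := by
  simp only [dot, Finset.mul_sum, PiLp.smul_apply, smul_eq_mul]
  exact Finset.sum_congr rfl fun k _ => by ring

lemma dot_sub (a x y : EuclideanSpace ℝ (Fin d)) : dot a (x - y) = dot a x - dot a y := by
  simp [dot, mul_sub, Finset.sum_sub_distrib]

def unitv (m : ℕ) : EuclideanSpace ℝ (Fin d) := WithLp.toLp 2 (fun k => if (k : ℕ) = m then 1 else 0)

lemma dot_unitv (m : ℕ) (hm : m < d) (x : EuclideanSpace ℝ (Fin d)) :
    dot (unitv m) x = x ⟨m, hm⟩ := by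
  rw [dot, Finset.sum_eq_single (⟨m, hm⟩ : Fin d)]
  · simp [unitv]
  · intro j _ hj
    have : (j : ℕ) ≠ m := fun h => hj (by exact Fin.ext h)
    simp [unitv, this]
  · simp

lemma unitv_apply_ne {m : ℕ} {k : Fin d} (h : (k : ℕ) ≠ m) : (unitv m : EuclideanSpace ℝ (Fin d)) k = 0 := by
  simp [unitv, h]

def Amat (a : EuclideanSpace ℝ (Fin d)) : Matrix (Fin d) (Fin d) ℝ :=
  fun i j => if (i : ℕ) = 0 then a j else 0

def Wmat (w : EuclideanSpace ℝ (Fin d)) : Matrix (Fin d) (Fin d) ℝ :=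
  fun i j => if (j : ℕ) = 0 then w i else 0

def bvec (β : ℝ) : EuclideanSpace ℝ (Fin d) := WithLp.toLp 2 (fun k => if (k : ℕ) = 0 then β else 0)

lemma field_eq (hd : 0 < d) (a w : EuclideanSpace ℝ (Fin d)) (β : ℝ)
    (x : EuclideanSpace ℝ (Fin d)) :
    mvec (Wmat w) (reluVec (mvec (Amat a) x + bvec β)) = max (dot a x + β) 0 • w := by
  ext i
  have h0 : ((⟨0, hd⟩ : Fin d) : ℕ) = 0 := rfl
  have hy : ∀ k : Fin d, reluVec (mvec (Amat a) x + bvec β) k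
      = if (k : ℕ) = 0 then max (dot a x + β) 0 else 0 := by
    intro k
    by_cases hk : (k : ℕ) = 0
    · simp only [reluVec, PiLp.add_apply, hk, if_pos, mvec, Amat, bvec]
      simp [hk, dot]
    · simp only [reluVec, PiLp.add_apply, mvec, Amat, bvec, hk, if_neg]
      simp [hk]
  show (∑ j, Wmat w i j * reluVec (mvec (Amat a) x + bvec β) j) = _
  rw [Finset.sum_eq_single (⟨0, hd⟩ : Fin d)]
  · rw [hy]
    simp [Wmat, h0, PiLp.smul_apply, mul_comm]
  · intro j _ hj
    have : (j : ℕ) ≠ 0 := fun h => hj (Fin.ext h)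
    simp [Wmat, this]
  · simp

end NP

namespace NP
variable {d : ℕ}

section Flow
variable (aS wS : ℕ → EuclideanSpace ℝ (Fin d)) (βS : ℕ → ℝ) (τ : ℝ)
  (x₀ : EuclideanSpace ℝ (Fin d))

/-- the state after `k` pieces. -/
def pseq : ℕ → EuclideanSpace ℝ (Fin d)
  | 0 => x₀
  | k + 1 => pseq k + (τ * max (dot (aS k) (pseq k) + βS k) 0) • wS k

/-- constant speed on piece `k`. -/
def cval (k : ℕ) : ℝ := max (dot (aS k) (pseq aS wS βS τ x₀ k) + βS k) 0

def clamp (c t : ℝ) : ℝ := min (max (t - c) 0) τ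

/-- the solution. -/
def sol (K : ℕ) (t : ℝ) : EuclideanSpace ℝ (Fin d) :=
  x₀ + ∑ k ∈ Finset.range K, (clamp τ ((k : ℝ) * τ) t * cval aS wS βS τ x₀ k) • wS k

variable {τ}

lemma pseq_eq (k : ℕ) :
    pseq aS wS βS τ x₀ k
      = x₀ + ∑ j ∈ Finset.range k, (τ * cval aS wS βS τ x₀ j) • wS j := by
  induction k with
  | zero => simp [pseq]
  | succ k ih =>
      rw [Finset.sum_range_succ, ← add_assoc, ← ih, pseq, cval]

lemma sol_piece (hτ : 0 < τ) {K k : ℕ} (hk : k < K) {t : ℝ}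
    (h1 : (k : ℝ) * τ ≤ t) (h2 : t ≤ ((k : ℝ) + 1) * τ) :
    sol aS wS βS τ x₀ K t
      = pseq aS wS βS τ x₀ k + ((t - (k : ℝ) * τ) * cval aS wS βS τ x₀ k) • wS k := by
  rw [sol, ← Finset.sum_range_add_sum_Ico _ (Nat.succ_le_of_lt hk)]
  have hz : ∑ j ∈ Finset.Ico (k + 1) K,
      (clamp τ ((j : ℝ) * τ) t * cval aS wS βS τ x₀ j) • wS j = 0 := by
    refine Finset.sum_eq_zero fun j hj => ?_
    have hj1 : (k : ℝ) + 1 ≤ (j : ℝ) := by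
      exact_mod_cast (Finset.mem_Ico.1 hj).1
    have : t - (j : ℝ) * τ ≤ 0 := by nlinarith
    have : clamp τ ((j : ℝ) * τ) t = 0 := by
      rw [clamp, max_eq_right this, min_eq_left hτ.le]
    simp [this]
  rw [hz, add_zero, Finset.sum_range_succ]
  have hck : clamp τ ((k : ℝ) * τ) t = t - (k : ℝ) * τ := by
    rw [clamp, max_eq_left (by linarith), min_eq_left (by linarith)]
  rw [hck]
  have hcj : ∀ j ∈ Finset.range k,
      (clamp τ ((j : ℝ) * τ) t * cval aS wS βS τ x₀ j) • wS j
        = (τ * cval aS wS βS τ x₀ j) • wS j := by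
    intro j hj
    have hj1 : (j : ℝ) + 1 ≤ (k : ℝ) := by exact_mod_cast Finset.mem_range.1 hj
    have h3 : τ ≤ t - (j : ℝ) * τ := by nlinarith
    rw [clamp, max_eq_left (by linarith), min_eq_right h3]
  rw [Finset.sum_congr rfl hcj, pseq_eq aS wS βS x₀ k, add_assoc]

lemma sol_zero (hτ : 0 < τ) (K : ℕ) : sol aS wS βS τ x₀ K 0 = x₀ := by
  rw [sol]
  have : ∀ k ∈ Finset.range K,
      (clamp τ ((k : ℝ) * τ) 0 * cval aS wS βS τ x₀ k) • wS k = 0 := by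
    intro k _
    have h1 : (0 : ℝ) - (k : ℝ) * τ ≤ 0 := by
      have : (0:ℝ) ≤ (k : ℝ) * τ := by positivity
      linarith
    rw [clamp, max_eq_right h1, min_eq_left hτ.le]
    simp
  rw [Finset.sum_eq_zero this, add_zero]

lemma sol_end (hτ : 0 < τ) (K : ℕ) :
    sol aS wS βS τ x₀ K ((K : ℝ) * τ) = pseq aS wS βS τ x₀ K := by
  rw [sol, pseq_eq]
  congr 1
  refine Finset.sum_congr rfl fun k hk => ?_
  have hk1 : (k : ℝ) + 1 ≤ (K : ℝ) := by exact_mod_cast Finset.mem_range.1 hk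
  have h3 : τ ≤ (K : ℝ) * τ - (k : ℝ) * τ := by nlinarith
  rw [clamp, max_eq_left (by linarith), min_eq_right h3]

lemma sol_cont (K : ℕ) : Continuous (sol aS wS βS τ x₀ K) := by
  refine continuous_const.add (continuous_finset_sum _ fun k _ => ?_)
  exact ((((continuous_id.sub continuous_const).max continuous_const).min
    continuous_const).mul continuous_const).smul continuous_const

lemma sol_deriv (hτ : 0 < τ) {K k : ℕ} (hk : k < K) {t : ℝ}
    (h1 : (k : ℝ) * τ < t) (h2 : t < ((k : ℝ) + 1) * τ) :
    HasDerivAt (sol aS wS βS τ x₀ K) (cval aS wS βS τ x₀ k • wS k) t := by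
  have haff : HasDerivAt
      (fun s => pseq aS wS βS τ x₀ k + ((s - (k : ℝ) * τ) * cval aS wS βS τ x₀ k) • wS k)
      (cval aS wS βS τ x₀ k • wS k) t := by
    have h : HasDerivAt (fun s : ℝ => (s - (k : ℝ) * τ) * cval aS wS βS τ x₀ k)
        (cval aS wS βS τ x₀ k) t := by
      simpa using ((hasDerivAt_id t).sub_const ((k : ℝ) * τ)).mul_const
        (cval aS wS βS τ x₀ k)
    simpa using (h.smul_const (wS k)).const_add (pseq aS wS βS τ x₀ k)
  refine haff.congr_of_eventuallyEq ?_
  filter_upwards [Ioo_mem_nhds h1 h2] with s hs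
  exact sol_piece aS wS βS x₀ hτ hk hs.1.le hs.2.le

end Flow
end NP

namespace NP
variable {d : ℕ}

def idx (τ t : ℝ) : ℕ := (⌊t / τ⌋).toNat

lemma idx_eq (hτ : 0 < τ) {k : ℕ} {t : ℝ} (h1 : (k : ℝ) * τ < t) (h2 : t < ((k : ℝ) + 1) * τ) :
    idx τ t = k := by
  have hfl : ⌊t / τ⌋ = (k : ℤ) := by
    rw [Int.floor_eq_iff]
    constructor
    · push_cast
      rw [le_div_iff₀ hτ]
      nlinarith
    · push_cast
      rw [div_lt_iff₀ hτ]
      nlinarith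
  simp [idx, hfl]

def swS (τ : ℝ) (K : ℕ) : Finset ℝ := (Finset.range (K + 1)).image (fun n : ℕ => (n : ℝ) * τ)

lemma mem_swS {τ : ℝ} {K : ℕ} {s : ℝ} :
    s ∈ swS τ K ↔ ∃ n : ℕ, n ≤ K ∧ s = (n : ℝ) * τ := by
  simp only [swS, Finset.mem_image, Finset.mem_range]
  constructor
  · rintro ⟨n, hn, rfl⟩; exact ⟨n, by omega, rfl⟩
  · rintro ⟨n, hn, rfl⟩; exact ⟨n, by omega, rfl⟩

lemma pcOn_comp {τ : ℝ} (hτ : 0 < τ) (K : ℕ) {α : Type*} (g : ℕ → α) :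
    PCOn (fun t => g (idx τ t)) ((K : ℝ) * τ) (swS τ K) := by
  intro t₁ ht₁ t₂ ht₂ hle hno
  suffices h : ⌊t₁ / τ⌋ = ⌊t₂ / τ⌋ by simp only [idx, h]
  by_contra hne
  have hmono : ⌊t₁ / τ⌋ ≤ ⌊t₂ / τ⌋ := Int.floor_le_floor ((div_le_div_iff_of_pos_right hτ).2 hle)
  have hlt : ⌊t₁ / τ⌋ < ⌊t₂ / τ⌋ := lt_of_le_of_ne hmono hne
  have h0 : 0 ≤ ⌊t₁ / τ⌋ := Int.floor_nonneg.2 (div_nonneg ht₁.1 hτ.le)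
  have hK : ⌊t₂ / τ⌋ ≤ (K : ℤ) := by
    have : t₂ / τ ≤ (K : ℝ) := by
      rw [div_le_iff₀ hτ]; exact ht₂.2
    calc ⌊t₂ / τ⌋ ≤ ⌊(K:ℝ)⌋ := Int.floor_le_floor this
      _ = (K:ℤ) := Int.floor_natCast K
  set m : ℕ := (⌊t₁ / τ⌋ + 1).toNat with hm
  have hmcast : ((m : ℤ) : ℝ) = ((⌊t₁ / τ⌋ : ℤ) : ℝ) + 1 := by
    rw [hm, Int.toNat_of_nonneg (by omega)]; push_cast; ring
  have hmem : ((m : ℝ) * τ) ∈ swS τ K := by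
    refine mem_swS.2 ⟨m, ?_, rfl⟩
    have : (m : ℤ) ≤ (K : ℤ) := by rw [hm, Int.toNat_of_nonneg (by omega)]; omega
    exact_mod_cast this
  refine hno _ hmem ⟨?_, ?_⟩
  · have := Int.lt_floor_add_one (t₁ / τ)
    have h2 : t₁ / τ < (m : ℝ) := by rw [show ((m:ℕ):ℝ) = ((m:ℤ):ℝ) from by push_cast; rfl, hmcast]; exact this
    calc t₁ = (t₁ / τ) * τ := by field_simp
    _ < (m : ℝ) * τ := by exact mul_lt_mul_of_pos_right h2 hτ
  · have h3 : (m : ℝ) ≤ t₂ / τ := by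
      have : ((⌊t₂ / τ⌋ : ℤ) : ℝ) ≤ t₂ / τ := Int.floor_le _
      have h4 : ((m : ℤ) : ℝ) ≤ ((⌊t₂ / τ⌋ : ℤ) : ℝ) := by
        have : (m : ℤ) ≤ ⌊t₂ / τ⌋ := by rw [hm, Int.toNat_of_nonneg (by omega)]; omega
        exact_mod_cast this
      calc ((m:ℕ):ℝ) = ((m : ℤ):ℝ) := by push_cast; rfl
      _ ≤ t₂ / τ := h4.trans this
    calc (m : ℝ) * τ ≤ (t₂ / τ) * τ := mul_le_mul_of_nonneg_right h3 hτ.le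
    _ = t₂ := by field_simp

lemma exists_piece {τ : ℝ} (hτ : 0 < τ) {K : ℕ} {t : ℝ} (ht : t ∈ Set.Icc 0 ((K : ℝ) * τ))
    (hS : t ∉ swS τ K) :
    idx τ t < K ∧ (idx τ t : ℝ) * τ < t ∧ t < ((idx τ t : ℝ) + 1) * τ := by
  have hne : ∀ n : ℕ, n ≤ K → t ≠ (n : ℝ) * τ := by
    intro n hn h
    exact hS (mem_swS.2 ⟨n, hn, h⟩)
  have ht0 : 0 < t := by
    rcases lt_or_eq_of_le ht.1 with h | h
    · exact h
    · exact absurd (h.symm.trans (by norm_num : (0:ℝ) = (0:ℕ) * τ)) (hne 0 (by omega))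
  have htK : t < (K : ℝ) * τ := by
    rcases lt_or_eq_of_le ht.2 with h | h
    · exact h
    · exact absurd h (hne K le_rfl)
  have h0 : 0 ≤ ⌊t / τ⌋ := Int.floor_nonneg.2 (div_nonneg ht0.le hτ.le)
  have hcast : ((idx τ t : ℕ) : ℝ) = ((⌊t / τ⌋ : ℤ) : ℝ) := by
    rw [idx]
    exact_mod_cast congrArg (fun z : ℤ => (z : ℝ)) (Int.toNat_of_nonneg h0)
  have hKlt : ⌊t / τ⌋ < (K : ℤ) := by
    rw [Int.floor_lt]
    push_cast
    rw [div_lt_iff₀ hτ]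
    exact htK
  have hidxK : idx τ t < K := by
    rw [idx]; omega
  have hle : (idx τ t : ℝ) * τ ≤ t := by
    rw [hcast]
    have := Int.floor_le (t / τ)
    calc ((⌊t / τ⌋ : ℤ) : ℝ) * τ ≤ (t / τ) * τ := mul_le_mul_of_nonneg_right this hτ.le
    _ = t := by field_simp
  refine ⟨hidxK, lt_of_le_of_ne hle (fun h => hne _ hidxK.le h.symm), ?_⟩
  rw [hcast]
  have := Int.lt_floor_add_one (t / τ)
  calc t = (t / τ) * τ := by field_simp
  _ < (((⌊t / τ⌋ : ℤ) : ℝ) + 1) * τ := mul_lt_mul_of_pos_right this hτ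

theorem solves (hd : 0 < d) {τ : ℝ} (hτ : 0 < τ) (K : ℕ)
    (aS wS : ℕ → EuclideanSpace ℝ (Fin d)) (βS : ℕ → ℝ)
    (horth : ∀ n, dot (aS n) (wS n) = 0) (x₀ : EuclideanSpace ℝ (Fin d)) :
    SolvesNODE (fun t => Amat (aS (idx τ t))) (fun t => Wmat (wS (idx τ t)))
      (fun t => bvec (βS (idx τ t))) ((K : ℝ) * τ) (swS τ K) (sol aS wS βS τ x₀ K) := by
  constructor
  · exact (sol_cont aS wS βS x₀ K).continuousOn
  · intro t ht hS
    obtain ⟨hk, h1, h2⟩ := exists_piece hτ ht hS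
    have hfield : mvec (Wmat (wS (idx τ t)))
        (reluVec (mvec (Amat (aS (idx τ t))) (sol aS wS βS τ x₀ K t) + bvec (βS (idx τ t))))
        = cval aS wS βS τ x₀ (idx τ t) • wS (idx τ t) := by
      rw [field_eq hd]
      congr 1
      rw [sol_piece aS wS βS x₀ hτ hk h1.le h2.le, dot_add, dot_smul, horth,
        mul_zero, add_zero, cval]
    rw [hfield]
    exact (sol_deriv aS wS βS x₀ hτ hk h1 h2).hasDerivWithinAt

end NP

namespace NP
open Polynomial

lemma exists_gap (s : Finset ℝ) (hs : ∀ r ∈ s, 0 < r) :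
    ∃ δ : ℝ, 0 < δ ∧ ∀ r ∈ s, 2 * δ < r := by
  rcases s.eq_empty_or_nonempty with h | h
  · exact ⟨1, one_pos, by simp [h]⟩
  · refine ⟨s.min' h / 3, by linarith [hs _ (s.min'_mem h)], fun r hr => ?_⟩
    have h1 := s.min'_le r hr
    have h2 := hs _ (s.min'_mem h)
    linarith

lemma exists_sep {d N : ℕ} (hd : 1 < d) (x : Fin N → EuclideanSpace ℝ (Fin d))
    (hx : Function.Injective x) :
    ∃ a : EuclideanSpace ℝ (Fin d),
      a ⟨1, hd⟩ = 0 ∧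
      ∀ i j : Fin N, i ≠ j →
        (x i ⟨1, hd⟩ - x j ⟨1, hd⟩) + dot a (x i - x j) ≠ 0 := by
  set degf : Fin d → ℕ := fun k => if (k : ℕ) = 1 then 0 else (k : ℕ) + 1 with hdegf
  have hinj : Function.Injective degf := by
    intro k k' h
    simp only [hdegf] at h
    apply Fin.ext
    by_cases h1 : (k : ℕ) = 1 <;> by_cases h2 : (k' : ℕ) = 1 <;> simp [h1, h2] at h <;> omega
  set pv : EuclideanSpace ℝ (Fin d) → ℝ[X] :=
    fun v => ∑ k : Fin d, Polynomial.C (v k) * Polynomial.X ^ (degf k) with hpv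
  have hcoeff : ∀ (v : EuclideanSpace ℝ (Fin d)) (k₀ : Fin d), (pv v).coeff (degf k₀) = v k₀ := by
    intro v k₀
    rw [hpv, Polynomial.finset_sum_coeff]
    rw [Finset.sum_eq_single k₀]
    · simp
    · intro k _ hk
      have : degf k ≠ degf k₀ := fun h => hk (hinj h)
      simp [Polynomial.coeff_X_pow, this, Ne.symm this]
    · simp
  have hne : ∀ v : EuclideanSpace ℝ (Fin d), v ≠ 0 → pv v ≠ 0 := by
    intro v hv hp
    apply hv
    ext k
    have := hcoeff v k
    rw [hp] at this
    simpa using this.symm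
  set B : Set ℝ := ⋃ p : Fin N × Fin N, {t | p.1 ≠ p.2 ∧ (pv (x p.1 - x p.2)).IsRoot t} with hB
  have hBfin : B.Finite := by
    refine Set.finite_iUnion fun p => ?_
    by_cases hp : p.1 = p.2
    · convert Set.finite_empty
      ext t; simp [hp]
    · have : pv (x p.1 - x p.2) ≠ 0 := hne _ (sub_ne_zero_of_ne (fun h => hp (hx h)))
      exact (Polynomial.finite_setOf_isRoot this).subset (fun t ht => ht.2)
  obtain ⟨t, ht⟩ := hBfin.infinite_compl.nonempty
  refine ⟨WithLp.toLp 2 (fun k : Fin d => if (k : ℕ) = 1 then 0 else t ^ ((k : ℕ) + 1)), by simp, ?_⟩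
  intro i j hij
  have heval : ∀ v : EuclideanSpace ℝ (Fin d),
      (pv v).eval t = v ⟨1, hd⟩ +
        dot (WithLp.toLp 2 (fun k : Fin d => if (k : ℕ) = 1 then 0 else t ^ ((k : ℕ) + 1))) v := by
    intro v
    rw [hpv]
    simp only [Polynomial.eval_finset_sum, Polynomial.eval_mul, Polynomial.eval_C,
      Polynomial.eval_pow, Polynomial.eval_X, dot]
    have hterm : ∀ k : Fin d, v k * t ^ degf k
        = (if (k : ℕ) = 1 then v k else 0)
          + (if (k : ℕ) = 1 then 0 else t ^ ((k : ℕ) + 1)) * v k := by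
      intro k
      by_cases hk : (k : ℕ) = 1 <;> simp [hdegf, hk] <;> ring
    rw [Finset.sum_congr rfl (fun k _ => hterm k), Finset.sum_add_distrib]
    congr 1
    rw [Finset.sum_eq_single (⟨1, hd⟩ : Fin d)]
    · simp
    · intro k _ hk
      have : (k : ℕ) ≠ 1 := fun h => hk (Fin.ext h)
      simp [this]
    · simp
  have hroot : ¬ (pv (x i - x j)).IsRoot t := by
    intro h
    exact ht (Set.mem_iUnion.2 ⟨(i, j), hij, h⟩)
  rw [Polynomial.IsRoot, heval] at hroot
  simpa [PiLp.sub_apply] using hroot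

end NP

namespace NP
variable {d N : ℕ}

lemma dot_comm (a b : EuclideanSpace ℝ (Fin d)) : dot a b = dot b a := by
  simp [dot, mul_comm]

lemma dot_zero (a : EuclideanSpace ℝ (Fin d)) : dot a (0 : EuclideanSpace ℝ (Fin d)) = 0 := by
  simp [dot]

def sg (r : ℕ) : ℝ := if r = 0 ∨ r = 3 then 1 else -1

def ee (r : ℕ) : ℝ := if r = 0 then -2 else if r = 1 then -1 else if r = 2 then 1 else 2

def stA (a0 : EuclideanSpace ℝ (Fin d)) : ℕ → EuclideanSpace ℝ (Fin d) :=
  fun n => if n = 0 then a0 else unitv 1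

def stW (τ : ℝ) (sc : Fin N → ℝ) : ℕ → EuclideanSpace ℝ (Fin d) :=
  fun n => if n = 0 then (1 / τ) • unitv 1
    else if h : (n - 1) / 4 < N then (sg ((n - 1) % 4) * sc ⟨(n - 1) / 4, h⟩) • unitv 0 else 0

def stβ (β0 : ℝ) (ℓv δv : Fin N → ℝ) : ℕ → ℝ :=
  fun n => if n = 0 then β0
    else if h : (n - 1) / 4 < N then
      -(ℓv ⟨(n - 1) / 4, h⟩ + ee ((n - 1) % 4) * δv ⟨(n - 1) / 4, h⟩) else 0

lemma st_orth (hd1 : 1 < d) (a0 : EuclideanSpace ℝ (Fin d)) (ha01 : a0 ⟨1, hd1⟩ = 0)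
    (τ : ℝ) (sc : Fin N → ℝ) :
    ∀ n, dot (stA a0 n) (stW τ sc n : EuclideanSpace ℝ (Fin d)) = 0 := by
  intro n
  by_cases hn : n = 0
  · rw [stA, stW, if_pos hn, if_pos hn, dot_smul, dot_comm, dot_unitv 1 hd1, ha01, mul_zero]
  · rw [stA, stW, if_neg hn, if_neg hn]
    by_cases h : (n - 1) / 4 < N
    · rw [dif_pos h, dot_smul, dot_unitv 1 hd1]
      have : (unitv 0 : EuclideanSpace ℝ (Fin d)) ⟨1, hd1⟩ = 0 := by simp [unitv]
      rw [this, mul_zero]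
    · rw [dif_neg h, dot_zero]

lemma pseq_final (hd1 : 1 < d) {τ : ℝ} (hτ : 0 < τ)
    (a0 : EuclideanSpace ℝ (Fin d)) (β0 : ℝ) (ℓv δv sc tv : Fin N → ℝ)
    (x : Fin N → EuclideanSpace ℝ (Fin d))
    (hβ : ∀ i, 0 < dot a0 (x i) + β0)
    (hℓ : ∀ i, ℓv i = x i ⟨1, hd1⟩ + (dot a0 (x i) + β0))
    (hδ : ∀ i, 0 < δv i)
    (hgap : ∀ i j : Fin N, j ≠ i → 2 * δv i < |ℓv j - ℓv i|)
    (hsc : ∀ i, sc i * (τ * δv i) = tv i - x i ⟨0, by omega⟩)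
    (i₀ : Fin N) :
    pseq (stA a0) (stW τ sc) (stβ β0 ℓv δv) τ (x i₀) (4 * N + 1) ⟨0, by omega⟩
      = tv i₀ := by
  have hd0 : 0 < d := by omega
  -- value after the preparation step
  have hq1 : pseq (stA a0) (stW τ sc) (stβ β0 ℓv δv) τ (x i₀) 1
      = x i₀ + (dot a0 (x i₀) + β0) • unitv 1 := by
    show pseq _ _ _ _ _ (0 + 1) = _
    rw [pseq]
    have h0 : pseq (stA a0) (stW τ sc) (stβ β0 ℓv δv) τ (x i₀) 0 = x i₀ := rfl
    rw [h0, stA, stW, stβ]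
    norm_num
    rw [max_eq_left (hβ i₀).le, smul_smul]
    congr 1
    field_simp
  -- coordinates other than 0 unchanged after step 1
  have hinv : ∀ k : Fin d, (k : ℕ) ≠ 0 →
      ∀ n, pseq (stA a0) (stW τ sc) (stβ β0 ℓv δv) τ (x i₀) (n + 1) k
        = pseq (stA a0) (stW τ sc) (stβ β0 ℓv δv) τ (x i₀) 1 k := by
    intro k hk n
    induction n with
    | zero => rfl
    | succ n ih =>
      rw [pseq, PiLp.add_apply, PiLp.smul_apply]
      have hw : (stW τ sc (n + 1) : EuclideanSpace ℝ (Fin d)) k = 0 := by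
        rw [stW, if_neg (Nat.succ_ne_zero n)]
        by_cases h : (n + 1 - 1) / 4 < N
        · rw [dif_pos h, PiLp.smul_apply, unitv_apply_ne hk, smul_zero]
        · rw [dif_neg h]; rfl
      rw [hw, smul_zero, add_zero]
      exact ih
  -- coordinate 1 equals ℓv i₀ from step 1 on
  have hc1 : ∀ n, pseq (stA a0) (stW τ sc) (stβ β0 ℓv δv) τ (x i₀) (n + 1) ⟨1, hd1⟩
      = ℓv i₀ := by
    intro n
    rw [hinv ⟨1, hd1⟩ (by simp) n, hq1, PiLp.add_apply, PiLp.smul_apply]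
    have : (unitv 1 : EuclideanSpace ℝ (Fin d)) ⟨1, hd1⟩ = 1 := by simp [unitv]
    rw [this, hℓ]
    simp
  -- coordinate-0 recursion for bump steps
  have hstep : ∀ n, ∀ h : n / 4 < N,
      pseq (stA a0) (stW τ sc) (stβ β0 ℓv δv) τ (x i₀) (n + 2) ⟨0, hd0⟩
        = pseq (stA a0) (stW τ sc) (stβ β0 ℓv δv) τ (x i₀) (n + 1) ⟨0, hd0⟩ +
          τ * sg (n % 4) * sc ⟨n / 4, h⟩ *
            max (ℓv i₀ - (ℓv ⟨n / 4, h⟩ + ee (n % 4) * δv ⟨n / 4, h⟩)) 0 := by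
    intro n h
    show pseq _ _ _ _ _ ((n + 1) + 1) ⟨0, hd0⟩ = _
    rw [pseq, PiLp.add_apply, PiLp.smul_apply]
    have hA : stA a0 (n + 1) = (unitv 1 : EuclideanSpace ℝ (Fin d)) := by
      rw [stA, if_neg (Nat.succ_ne_zero n)]
    have h' : (n + 1 - 1) / 4 < N := by simpa using h
    have hb : stβ β0 ℓv δv (n + 1)
        = -(ℓv ⟨n / 4, h⟩ + ee (n % 4) * δv ⟨n / 4, h⟩) := by
      rw [stβ, if_neg (Nat.succ_ne_zero n), dif_pos h']
      simp only [Nat.add_sub_cancel]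
    have hW : (stW τ sc (n + 1) : EuclideanSpace ℝ (Fin d)) ⟨0, hd0⟩
        = sg (n % 4) * sc ⟨n / 4, h⟩ := by
      rw [stW, if_neg (Nat.succ_ne_zero n), dif_pos h', PiLp.smul_apply]
      have : (unitv 0 : EuclideanSpace ℝ (Fin d)) ⟨0, hd0⟩ = 1 := by simp [unitv]
      rw [this, smul_eq_mul, mul_one]
      simp only [Nat.add_sub_cancel]
    rw [hA, hb, hW, dot_unitv 1 hd1, hc1 n, smul_eq_mul, ← sub_eq_add_neg]
    ring
  -- staged computation
  have hstage : ∀ i : ℕ, i ≤ N →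
      pseq (stA a0) (stW τ sc) (stβ β0 ℓv δv) τ (x i₀) (1 + 4 * i) ⟨0, hd0⟩
        = (if (i₀ : ℕ) < i then tv i₀ else x i₀ ⟨0, hd0⟩) := by
    intro i
    induction i with
    | zero =>
      intro _
      simp only [Nat.mul_zero, Nat.add_zero]
      rw [hq1, PiLp.add_apply, PiLp.smul_apply]
      have : (unitv 1 : EuclideanSpace ℝ (Fin d)) ⟨0, hd0⟩ = 0 := by simp [unitv]
      rw [this, smul_zero, add_zero, if_neg (by omega)]
    | succ i ih =>
      intro hiN
      have hiN' : i < N := by omega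
      have hfin : ∀ (r : ℕ), r < 4 →
          pseq (stA a0) (stW τ sc) (stβ β0 ℓv δv) τ (x i₀) (1 + 4 * i + r + 1) ⟨0, hd0⟩
            = pseq (stA a0) (stW τ sc) (stβ β0 ℓv δv) τ (x i₀) (1 + 4 * i + r) ⟨0, hd0⟩ +
              τ * sg r * sc ⟨i, hiN'⟩ *
                max (ℓv i₀ - (ℓv ⟨i, hiN'⟩ + ee r * δv ⟨i, hiN'⟩)) 0 := by
        intro r hr
        have hdiv : (4 * i + r) / 4 < N := by
          have : (4 * i + r) / 4 = i := by omega
          rw [this]; exact hiN'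
        have := hstep (4 * i + r) hdiv
        have e1 : 4 * i + r + 2 = 1 + 4 * i + r + 1 := by omega
        have e2 : 4 * i + r + 1 = 1 + 4 * i + r := by omega
        rw [e1, e2] at this
        have hfeq : (⟨(4 * i + r) / 4, hdiv⟩ : Fin N) = ⟨i, hiN'⟩ := Fin.ext (show (4 * i + r) / 4 = i from by omega)
        have hmod : (4 * i + r) % 4 = r := by omega
        rw [hfeq, hmod] at this
        exact this
      have hchain : pseq (stA a0) (stW τ sc) (stβ β0 ℓv δv) τ (x i₀) (1 + 4 * (i + 1)) ⟨0, hd0⟩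
          = pseq (stA a0) (stW τ sc) (stβ β0 ℓv δv) τ (x i₀) (1 + 4 * i) ⟨0, hd0⟩ +
            τ * sc ⟨i, hiN'⟩ *
              (sg 0 * max (ℓv i₀ - (ℓv ⟨i, hiN'⟩ + ee 0 * δv ⟨i, hiN'⟩)) 0
                + sg 1 * max (ℓv i₀ - (ℓv ⟨i, hiN'⟩ + ee 1 * δv ⟨i, hiN'⟩)) 0
                + sg 2 * max (ℓv i₀ - (ℓv ⟨i, hiN'⟩ + ee 2 * δv ⟨i, hiN'⟩)) 0
                + sg 3 * max (ℓv i₀ - (ℓv ⟨i, hiN'⟩ + ee 3 * δv ⟨i, hiN'⟩)) 0) := by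
        have e4 : 1 + 4 * (i + 1) = 1 + 4 * i + 3 + 1 := by omega
        rw [e4, hfin 3 (by omega)]
        have e3 : 1 + 4 * i + 3 = 1 + 4 * i + 2 + 1 := by omega
        rw [e3, hfin 2 (by omega)]
        have e2 : 1 + 4 * i + 2 = 1 + 4 * i + 1 + 1 := by omega
        rw [e2, hfin 1 (by omega)]
        have e1 : 1 + 4 * i + 1 = 1 + 4 * i + 0 + 1 := by omega
        rw [e1, hfin 0 (by omega)]
        have e0 : 1 + 4 * i + 0 = 1 + 4 * i := by omega
        rw [e0]
        ring
      by_cases hcase : (i₀ : ℕ) = i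
      · have hji : (⟨i, hiN'⟩ : Fin N) = i₀ := Fin.ext hcase.symm
        rw [hji] at hchain
        have hδ0 := hδ i₀
        have hB : (sg 0 * max (ℓv i₀ - (ℓv i₀ + ee 0 * δv i₀)) 0
              + sg 1 * max (ℓv i₀ - (ℓv i₀ + ee 1 * δv i₀)) 0
              + sg 2 * max (ℓv i₀ - (ℓv i₀ + ee 2 * δv i₀)) 0
              + sg 3 * max (ℓv i₀ - (ℓv i₀ + ee 3 * δv i₀)) 0) = δv i₀ := by
          rw [show sg 0 = 1 from rfl, show sg 1 = -1 from rfl, show sg 2 = -1 from rfl,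
            show sg 3 = 1 from rfl, show ee 0 = -2 from rfl, show ee 1 = -1 from rfl,
            show ee 2 = 1 from rfl, show ee 3 = 2 from rfl]
          rw [max_eq_left (by linarith), max_eq_left (by linarith),
            max_eq_right (by linarith), max_eq_right (by linarith)]
          ring
        rw [hchain, hB, ih (by omega), if_neg (by omega), if_pos (by omega)]
        linear_combination hsc i₀
      · have hB : (sg 0 * max (ℓv i₀ - (ℓv ⟨i, hiN'⟩ + ee 0 * δv ⟨i, hiN'⟩)) 0
              + sg 1 * max (ℓv i₀ - (ℓv ⟨i, hiN'⟩ + ee 1 * δv ⟨i, hiN'⟩)) 0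
              + sg 2 * max (ℓv i₀ - (ℓv ⟨i, hiN'⟩ + ee 2 * δv ⟨i, hiN'⟩)) 0
              + sg 3 * max (ℓv i₀ - (ℓv ⟨i, hiN'⟩ + ee 3 * δv ⟨i, hiN'⟩)) 0) = 0 := by
          have hji : i₀ ≠ (⟨i, hiN'⟩ : Fin N) := fun h => hcase (by rw [h])
          have hgapj := hgap ⟨i, hiN'⟩ i₀ hji
          have hδj := hδ (⟨i, hiN'⟩ : Fin N)
          rw [show sg 0 = 1 from rfl, show sg 1 = -1 from rfl, show sg 2 = -1 from rfl,
            show sg 3 = 1 from rfl, show ee 0 = -2 from rfl, show ee 1 = -1 from rfl,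
            show ee 2 = 1 from rfl, show ee 3 = 2 from rfl]
          rcases lt_abs.1 hgapj with hpos | hneg
          · rw [max_eq_left (by linarith), max_eq_left (by linarith),
              max_eq_left (by linarith), max_eq_left (by linarith)]
            ring
          · rw [max_eq_right (by linarith), max_eq_right (by linarith),
              max_eq_right (by linarith), max_eq_right (by linarith)]
            ring
        rw [hchain, hB, mul_zero, add_zero, ih (by omega)]
        by_cases hlt : (i₀ : ℕ) < i
        · rw [if_pos hlt, if_pos (by omega)]
        · rw [if_neg hlt, if_neg (by omega)]
  have hfin := hstage N le_rfl
  rw [if_pos i₀.isLt] at hfin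
  rw [show (4 * N + 1) = 1 + 4 * N from by omega]
  exact hfin

end NP

/-- **Classification by strips** (Theorem 1 of the paper).
Given pairwise distinct data in `ℝ^d` (`d ≥ 2`) with labels taking `M ≥ 2` distinct
values, and cut points `α 0 < α 1 < ⋯ < α (M-2)` defining `M` parallel strips,
there are piecewise constant controls whose neural-ODE flow sends each datum into
the strip of its label.  The strip of index `m` is
`{x : (0 < m → α (m-1) < x⁽¹⁾) ∧ (m < M-1 → x⁽¹⁾ ≤ α m)}`. -/
theorem classification_in_strips
    (d M N : ℕ) (hd : 2 ≤ d) (hM : 2 ≤ M) (T : ℝ) (hT : 0 < T)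
    (x y : Fin N → EuclideanSpace ℝ (Fin d))
    (hx : Function.Injective x)
    (val : Fin M → EuclideanSpace ℝ (Fin d)) (hval : Function.Injective val)
    (lab : Fin N → Fin M) (hlab : Function.Surjective lab)
    (hy : ∀ i, y i = val (lab i))
    (α : ℕ → ℝ) (hα : ∀ j, j + 1 ≤ M - 2 → α j < α (j + 1)) :
    ∃ (A W : ℝ → Matrix (Fin d) (Fin d) ℝ) (b : ℝ → EuclideanSpace ℝ (Fin d))
      (S : Finset ℝ),
      PCOn A T S ∧ PCOn W T S ∧ PCOn b T S ∧
      ∃ X : Fin N → ℝ → EuclideanSpace ℝ (Fin d),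
        (∀ i, SolvesNODE A W b T S (X i)) ∧
        (∀ i, X i 0 = x i) ∧
        (∀ i, (0 < (lab i).val → α ((lab i).val - 1) < X i T ⟨0, by omega⟩) ∧
              ((lab i).val < M - 1 → X i T ⟨0, by omega⟩ ≤ α (lab i).val)) := by
  have hd1 : 1 < d := by omega
  have hd0 : 0 < d := by omega
  set K : ℕ := 4 * N + 1 with hK
  have hKR : (0 : ℝ) < (K : ℝ) := by
    have : 0 < K := by omega
    exact_mod_cast this
  obtain ⟨τ, hτ, hTK⟩ : ∃ τ : ℝ, 0 < τ ∧ T = (K : ℝ) * τ :=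
    ⟨T / (K : ℝ), by positivity, by field_simp⟩
  obtain ⟨a0, ha01, hsep⟩ := NP.exists_sep hd1 x hx
  obtain ⟨β0, hβ⟩ : ∃ β0 : ℝ, ∀ i, 0 < NP.dot a0 (x i) + β0 := by
    refine ⟨1 + ∑ j, |NP.dot a0 (x j)|, fun i => ?_⟩
    have h1 : |NP.dot a0 (x i)| ≤ ∑ j, |NP.dot a0 (x j)| :=
      Finset.single_le_sum (f := fun j => |NP.dot a0 (x j)|)
        (fun j _ => abs_nonneg _) (Finset.mem_univ i)
    have h2 := neg_abs_le (NP.dot a0 (x i))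
    linarith
  set ℓv : Fin N → ℝ := fun i => x i ⟨1, hd1⟩ + (NP.dot a0 (x i) + β0) with hℓv
  have hℓne : ∀ i j : Fin N, i ≠ j → ℓv i ≠ ℓv j := by
    intro i j hij h
    apply hsep i j hij
    have hds : NP.dot a0 (x i - x j) = NP.dot a0 (x i) - NP.dot a0 (x j) := NP.dot_sub _ _ _
    rw [hds]
    rw [hℓv] at h
    simp only at h
    linarith [h]
  have hδex : ∀ i : Fin N, ∃ δ : ℝ, 0 < δ ∧ ∀ j, j ≠ i → 2 * δ < |ℓv j - ℓv i| := by
    intro i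
    have hpos : ∀ r ∈ ((Finset.univ : Finset (Fin N)).erase i).image
        (fun j => |ℓv j - ℓv i|), 0 < r := by
      intro r hr
      obtain ⟨j, hj, rfl⟩ := Finset.mem_image.1 hr
      exact abs_pos.2 (sub_ne_zero_of_ne (hℓne _ _ (Finset.mem_erase.1 hj).1))
    obtain ⟨δ, hδ0, hδlt⟩ := NP.exists_gap _ hpos
    exact ⟨δ, hδ0, fun j hj => hδlt _
      (Finset.mem_image_of_mem _ (Finset.mem_erase.2 ⟨hj, Finset.mem_univ j⟩))⟩
  choose δv hδprop using hδex
  have hδ0 : ∀ i, 0 < δv i := fun i => (hδprop i).1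
  have hgap : ∀ i j : Fin N, j ≠ i → 2 * δv i < |ℓv j - ℓv i| := fun i j h => (hδprop i).2 j h
  set tv : Fin N → ℝ :=
    fun i => if (lab i).val < M - 1 then α (lab i).val else α (M - 2) + 1 with htv
  set sc : Fin N → ℝ := fun i => (tv i - x i ⟨0, hd0⟩) / (τ * δv i) with hsc'
  have hsc : ∀ i, sc i * (τ * δv i) = tv i - x i ⟨0, hd0⟩ := by
    intro i
    rw [hsc']
    exact div_mul_cancel₀ _ (mul_pos hτ (hδ0 i)).ne'
  have horth := NP.st_orth hd1 a0 ha01 τ sc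
  have hXco : ∀ i, NP.sol (NP.stA a0) (NP.stW τ sc) (NP.stβ β0 ℓv δv) τ (x i) K T ⟨0, hd0⟩
      = tv i := by
    intro i
    rw [hTK, NP.sol_end (NP.stA a0) (NP.stW τ sc) (NP.stβ β0 ℓv δv) (x i) hτ K]
    exact NP.pseq_final hd1 hτ a0 β0 ℓv δv sc tv x hβ (fun _ => by rw [hℓv]) hδ0 hgap hsc i
  refine ⟨fun t => NP.Amat (NP.stA a0 (NP.idx τ t)),
      fun t => NP.Wmat (NP.stW τ sc (NP.idx τ t)),
      fun t => NP.bvec (NP.stβ β0 ℓv δv (NP.idx τ t)),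
      NP.swS τ K, ?_, ?_, ?_, ?_⟩
  · rw [hTK]; exact NP.pcOn_comp hτ K (fun n => NP.Amat (NP.stA a0 n))
  · rw [hTK]; exact NP.pcOn_comp hτ K (fun n => NP.Wmat (NP.stW τ sc n))
  · rw [hTK]; exact NP.pcOn_comp hτ K (fun n => NP.bvec (NP.stβ β0 ℓv δv n))
  refine ⟨fun i => NP.sol (NP.stA a0) (NP.stW τ sc) (NP.stβ β0 ℓv δv) τ (x i) K, ?_, ?_, ?_⟩
  · intro i
    rw [hTK]
    exact NP.solves hd0 hτ K _ _ _ horth (x i)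
  · intro i
    exact NP.sol_zero (NP.stA a0) (NP.stW τ sc) (NP.stβ β0 ℓv δv) (x i) hτ K
  · intro i
    constructor
    · intro hpos
      show α ((lab i).val - 1)
        < NP.sol (NP.stA a0) (NP.stW τ sc) (NP.stβ β0 ℓv δv) τ (x i) K T ⟨0, hd0⟩
      rw [hXco i, htv]
      simp only
      by_cases hm : (lab i).val < M - 1
      · rw [if_pos hm]
        have h1 : (lab i).val - 1 + 1 = (lab i).val := by omega
        have := hα ((lab i).val - 1) (by omega)
        rw [h1] at this
        exact this
      · rw [if_neg hm]
        have h1 : (lab i).val - 1 = M - 2 := by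
          have := (lab i).isLt
          omega
        rw [h1]
        linarith
    · intro hlt
      show NP.sol (NP.stA a0) (NP.stW τ sc) (NP.stβ β0 ℓv δv) τ (x i) K T ⟨0, hd0⟩
        ≤ α (lab i).val
      rw [hXco i, htv]
      simp only
      rw [if_pos hlt]
end
end

section
/- Let d ≥ 2, T > 0. Let {x_i}_{i=1}^N ⊂ ℝ^d be pairwise distinct points, let O_1, …, O_M ⊂ ℝ^d be pairwise disjoint nonempty open sets, and let m : {1,…,N} → {1,…,M} be any label assignment. Then there exist piecewise constant controls A, W : [0,T] → ℝ^{d×d} and b : [0,T] → ℝ^d such that for every i ∈ {1,…,N} the flow of the Neural ODE satisfies φ_T(x_i; A, W, b) ∈ O_{m(i)}. -/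
open MeasureTheory Set

noncomputable section

namespace NODE

variable {d : ℕ}

/-- plain dot product on Euclidean space -/
def dotE {d : ℕ} (n z : EuclideanSpace ℝ (Fin d)) : ℝ := ∑ j, n j * z j

lemma dotE_add_right (n z w : EuclideanSpace ℝ (Fin d)) :
    dotE n (z + w) = dotE n z + dotE n w := by
  simp [dotE, PiLp.add_apply, mul_add, Finset.sum_add_distrib]

lemma dotE_smul_right (n : EuclideanSpace ℝ (Fin d)) (c : ℝ) (z : EuclideanSpace ℝ (Fin d)) :
    dotE n (c • z) = c * dotE n z := by
  simp [dotE, PiLp.smul_apply, Finset.mul_sum]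
  ring_nf
  exact Finset.sum_congr rfl fun j _ => by ring

/-- A "move": the vector field `z ↦ max(⟨n,z⟩+β,0) • u` with `u ⊥ n`. -/
structure GMove (d : ℕ) where
  n : EuclideanSpace ℝ (Fin d)
  β : ℝ
  u : EuclideanSpace ℝ (Fin d)
  perp : dotE n u = 0

/-- time-one flow map of a move -/
def stepM (m : GMove d) (z : EuclideanSpace ℝ (Fin d)) : EuclideanSpace ℝ (Fin d) :=
  z + max (dotE m.n z + m.β) 0 • m.u

def applyL (L : List (GMove d)) (z : EuclideanSpace ℝ (Fin d)) : EuclideanSpace ℝ (Fin d) :=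
  L.foldl (fun w m => stepM m w) z

@[simp] lemma applyL_nil (z : EuclideanSpace ℝ (Fin d)) : applyL [] z = z := rfl

lemma applyL_cons (m : GMove d) (L : List (GMove d)) (z : EuclideanSpace ℝ (Fin d)) :
    applyL (m :: L) z = applyL L (stepM m z) := rfl

lemma applyL_append (L₁ L₂ : List (GMove d)) (z : EuclideanSpace ℝ (Fin d)) :
    applyL (L₁ ++ L₂) z = applyL L₂ (applyL L₁ z) := by
  simp [applyL, List.foldl_append]

lemma dotE_stepM (m : GMove d) (z : EuclideanSpace ℝ (Fin d)) :
    dotE m.n (stepM m z) = dotE m.n z := by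
  simp [stepM, dotE_add_right, dotE_smul_right, m.perp]

/-- realizability of a flow map by piecewise-constant controls on `[0,T]` -/
def Realizes (d : ℕ) (T : ℝ) (Φ : EuclideanSpace ℝ (Fin d) → EuclideanSpace ℝ (Fin d)) : Prop :=
  ∃ (A W : ℝ → Matrix (Fin d) (Fin d) ℝ) (b : ℝ → EuclideanSpace ℝ (Fin d)) (S : Finset ℝ),
    PCOn A T S ∧ PCOn W T S ∧ PCOn b T S ∧
    ∀ p, ∃ X, SolvesNODE A W b T S X ∧ X 0 = p ∧ X T = Φ p

section matrices

variable [NeZero d]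

def Amat (n : EuclideanSpace ℝ (Fin d)) : Matrix (Fin d) (Fin d) ℝ :=
  Matrix.of fun i j => if i = 0 then n j else 0

def Wmat (c : ℝ) (u : EuclideanSpace ℝ (Fin d)) : Matrix (Fin d) (Fin d) ℝ :=
  Matrix.of fun i j => if j = 0 then c * u i else 0

def bvec (β : ℝ) : EuclideanSpace ℝ (Fin d) := EuclideanSpace.single 0 β

lemma field_eval (n u : EuclideanSpace ℝ (Fin d)) (β c : ℝ) (z : EuclideanSpace ℝ (Fin d)) :
    mvec (Wmat c u) (reluVec (mvec (Amat n) z + bvec β)) =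
      (c * max (dotE n z + β) 0) • u := by
  have h0 : ((mvec (Amat n) z + bvec β : EuclideanSpace ℝ (Fin d))) 0 = dotE n z + β := by
    simp [mvec, Amat, bvec, PiLp.add_apply, EuclideanSpace.single_apply, dotE]
  ext i
  simp only [mvec, Wmat, Matrix.of_apply, reluVec, PiLp.toLp_apply, PiLp.smul_apply, ite_mul, zero_mul,
    Finset.sum_ite_eq', Finset.mem_univ, if_true]
  have h0' : ((WithLp.toLp 2 fun i => ∑ x, Amat n i x * z x) + bvec β :
      EuclideanSpace ℝ (Fin d)) 0 = dotE n z + β := h0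
  rw [h0']
  simp [smul_eq_mul]
  ring

lemma realizes_single (m : GMove d) {τ : ℝ} (hτ : 0 < τ) : Realizes d τ (stepM m) := by
  refine ⟨fun _ => Amat m.n, fun _ => Wmat τ⁻¹ m.u, fun _ => bvec m.β, ∅,
    ?_, ?_, ?_, ?_⟩
  · intro t₁ _ t₂ _ _ _; rfl
  · intro t₁ _ t₂ _ _ _; rfl
  · intro t₁ _ t₂ _ _ _; rfl
  intro p
  set c : ℝ := τ⁻¹ * max (dotE m.n p + m.β) 0 with hc
  refine ⟨fun t => p + (t * c) • m.u, ⟨?_, ?_⟩, ?_, ?_⟩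
  · exact (continuous_const.add ((continuous_id.mul continuous_const).smul
      continuous_const)).continuousOn
  · intro t ht _
    have hdot : dotE m.n (p + (t * c) • m.u) = dotE m.n p := by
      simp [dotE_add_right, dotE_smul_right, m.perp]
    rw [field_eval, hdot, ← hc]
    have h1 : HasDerivAt (fun t : ℝ => p + (t * c) • m.u) (c • m.u) t := by
      have h2 : HasDerivAt (fun t : ℝ => t • (c • m.u)) (c • m.u) t := by
        simpa using (hasDerivAt_id t).smul_const (c • m.u)
      simpa [smul_smul] using h2.const_add p
    exact h1.hasDerivWithinAt
  · simp
  · simp only [stepM, hc]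
    congr 1
    rw [← mul_assoc, mul_inv_cancel₀ (ne_of_gt hτ), one_mul]

end matrices

/-- gluing piecewise-constant controls -/
lemma PCOn.glue {α : Type*} {f₁ f₂ : ℝ → α} {T₁ T₂ : ℝ} (h₁ : 0 < T₁) (h₂ : 0 ≤ T₂)
    {S₁ S₂ : Finset ℝ} (H₁ : PCOn f₁ T₁ S₁) (H₂ : PCOn f₂ T₂ S₂) :
    PCOn (fun t => if t < T₁ then f₁ t else f₂ (t - T₁)) (T₁ + T₂)
      (S₁ ∪ {T₁} ∪ S₂.image (· + T₁)) := by
  intro t₁ ht₁ t₂ ht₂ hle hS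
  by_cases ha : t₂ < T₁
  · have hb : t₁ < T₁ := lt_of_le_of_lt hle ha
    simp only [if_pos ha, if_pos hb]
    refine H₁ t₁ ⟨ht₁.1, hb.le⟩ t₂ ⟨ht₂.1, ha.le⟩ hle ?_
    intro s hs
    exact hS s (by simp [hs])
  · push_neg at ha
    by_cases hb : t₁ < T₁
    · exfalso
      exact hS T₁ (by simp) ⟨hb, ha⟩
    · push_neg at hb
      simp only [if_neg (not_lt.mpr ha), if_neg (not_lt.mpr hb)]
      refine H₂ (t₁ - T₁) ⟨by linarith, by linarith [ht₁.2]⟩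
        (t₂ - T₁) ⟨by linarith, by linarith [ht₂.2]⟩ (by linarith) ?_
      intro s hs hmem
      refine hS (s + T₁)
        (Finset.mem_union.mpr (Or.inr (Finset.mem_image.mpr ⟨s, hs, rfl⟩))) ?_
      constructor
      · linarith [hmem.1]
      · linarith [hmem.2]

lemma realizes_glue {T₁ T₂ : ℝ} (h₁ : 0 < T₁) (h₂ : 0 < T₂)
    {Φ₁ Φ₂ : EuclideanSpace ℝ (Fin d) → EuclideanSpace ℝ (Fin d)}
    (H₁ : Realizes d T₁ Φ₁) (H₂ : Realizes d T₂ Φ₂) :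
    Realizes d (T₁ + T₂) (Φ₂ ∘ Φ₁) := by
  obtain ⟨A₁, W₁, b₁, S₁, hA₁, hW₁, hb₁, hsol₁⟩ := H₁
  obtain ⟨A₂, W₂, b₂, S₂, hA₂, hW₂, hb₂, hsol₂⟩ := H₂
  refine ⟨fun t => if t < T₁ then A₁ t else A₂ (t - T₁),
    fun t => if t < T₁ then W₁ t else W₂ (t - T₁),
    fun t => if t < T₁ then b₁ t else b₂ (t - T₁),
    S₁ ∪ {T₁} ∪ S₂.image (· + T₁),
    PCOn.glue h₁ h₂.le hA₁ hA₂, PCOn.glue h₁ h₂.le hW₁ hW₂, PCOn.glue h₁ h₂.le hb₁ hb₂, ?_⟩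
  intro p
  obtain ⟨X₁, ⟨hX₁c, hX₁d⟩, hX₁0, hX₁T⟩ := hsol₁ p
  obtain ⟨X₂, ⟨hX₂c, hX₂d⟩, hX₂0, hX₂T⟩ := hsol₂ (Φ₁ p)
  set X : ℝ → EuclideanSpace ℝ (Fin d) := fun t => if t ≤ T₁ then X₁ t else X₂ (t - T₁) with hX
  have hXeq1 : ∀ y ∈ Set.Icc (0:ℝ) T₁, X y = X₁ y := fun y hy => if_pos hy.2
  have hXeq2 : ∀ y ∈ Set.Icc T₁ (T₁ + T₂), X y = X₂ (y - T₁) := by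
    intro y hy
    rcases eq_or_lt_of_le hy.1 with h | h
    · rw [hX]; simp only [← h, sub_self, if_pos le_rfl, hX₂0, hX₁T]
    · exact if_neg (not_le.mpr h)
  refine ⟨X, ⟨?_, ?_⟩, ?_, ?_⟩
  · -- continuity
    intro t ht
    have hsub : Set.Icc (0:ℝ) (T₁ + T₂) ⊆ Set.Icc 0 T₁ ∪ Set.Icc T₁ (T₁ + T₂) := by
      intro s hs
      by_cases h : s ≤ T₁
      · exact Or.inl ⟨hs.1, h⟩
      · exact Or.inr ⟨le_of_not_ge h, hs.2⟩
    refine (ContinuousWithinAt.union ?_ ?_).mono hsub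
    · by_cases hmem : t ∈ Set.Icc (0:ℝ) T₁
      · exact ((hX₁c t hmem).congr hXeq1 (hXeq1 t hmem))
      · exact continuousWithinAt_of_notMem_closure (by rwa [closure_Icc])
    · by_cases hmem : t ∈ Set.Icc T₁ (T₁ + T₂)
      · have hcomp : ContinuousWithinAt (fun s => X₂ (s - T₁)) (Set.Icc T₁ (T₁ + T₂)) t := by
          have hmap : Set.MapsTo (fun s : ℝ => s - T₁) (Set.Icc T₁ (T₁ + T₂))
              (Set.Icc 0 T₂) := by
            intro s hs
            simp only [Set.mem_Icc] at hs ⊢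
            constructor <;> linarith [hs.1, hs.2]
          have hcomp0 : ContinuousWithinAt (X₂ ∘ fun s : ℝ => s - T₁)
              (Set.Icc T₁ (T₁ + T₂)) t :=
            ContinuousWithinAt.comp (hX₂c (t - T₁) (hmap hmem))
              ((continuous_id.sub continuous_const).continuousWithinAt) hmap
          exact hcomp0
        exact hcomp.congr hXeq2 (hXeq2 t hmem)
      · exact continuousWithinAt_of_notMem_closure (by rwa [closure_Icc])
  · -- derivative
    intro t ht htS
    have htT₁ : t ≠ T₁ := fun h => htS (by simp [h])
    rcases lt_or_gt_of_ne htT₁ with hlt | hgt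
    · have ht1 : t ∈ Set.Icc (0:ℝ) T₁ := ⟨ht.1, hlt.le⟩
      have hd := hX₁d t ht1 (fun hmem => htS (by simp [hmem]))
      have hnb : Set.Icc (0:ℝ) T₁ ∈ nhdsWithin t (Set.Icc 0 (T₁ + T₂)) := by
        refine Filter.mem_of_superset
          (inter_mem_nhdsWithin _ (Iio_mem_nhds hlt)) ?_
        intro s hs; exact ⟨hs.1.1, hs.2.le⟩
      have hd2 := hd.mono_of_mem_nhdsWithin hnb
      have heq : X =ᶠ[nhdsWithin t (Set.Icc 0 (T₁ + T₂))] X₁ := by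
        filter_upwards [hnb] with s hs using hXeq1 s hs
      have hd3 := hd2.congr_of_eventuallyEq heq (hXeq1 t ht1)
      have hctrl : (if t < T₁ then A₁ t else A₂ (t - T₁)) = A₁ t := if_pos hlt
      have hctrlW : (if t < T₁ then W₁ t else W₂ (t - T₁)) = W₁ t := if_pos hlt
      have hctrlb : (if t < T₁ then b₁ t else b₂ (t - T₁)) = b₁ t := if_pos hlt
      simpa [hctrl, hctrlW, hctrlb, hXeq1 t ht1] using hd3
    · have ht2 : t - T₁ ∈ Set.Icc (0:ℝ) T₂ := ⟨by linarith, by linarith [ht.2]⟩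
      have hd := hX₂d (t - T₁) ht2 (fun hmem => htS (by
        simp only [Finset.mem_union, Finset.mem_image]
        exact Or.inr ⟨t - T₁, hmem, by ring⟩))
      have hnb : Set.Icc (0:ℝ) (T₁ + T₂) ∩ Set.Ioi T₁ ∈
          nhdsWithin t (Set.Icc 0 (T₁ + T₂)) :=
        inter_mem_nhdsWithin _ (Ioi_mem_nhds hgt)
      have hmap : Set.MapsTo (fun s : ℝ => s - T₁)
          (Set.Icc 0 (T₁ + T₂) ∩ Set.Ioi T₁) (Set.Icc 0 T₂) := by
        intro s hs
        have h1 : T₁ < s := hs.2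
        have h2 : s ≤ T₁ + T₂ := hs.1.2
        simp only [Set.mem_Icc]
        constructor <;> linarith
      have hinner : HasDerivWithinAt (fun s : ℝ => s - T₁) 1
          (Set.Icc 0 (T₁ + T₂) ∩ Set.Ioi T₁) t :=
        ((hasDerivAt_id t).sub_const T₁).hasDerivWithinAt
      have hcomp := HasDerivWithinAt.scomp t hd hinner hmap
      have hd2 := (hcomp.mono_of_mem_nhdsWithin hnb)
      have heq : X =ᶠ[nhdsWithin t (Set.Icc 0 (T₁ + T₂))]
          (X₂ ∘ fun s => s - T₁) := by
        filter_upwards [hnb] with s hs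
        exact if_neg (not_le.mpr hs.2.out)
      have hXt : X t = X₂ (t - T₁) := if_neg (not_le.mpr hgt)
      have hd3 := hd2.congr_of_eventuallyEq heq (by simpa [Function.comp] using hXt)
      have hctrl : (if t < T₁ then A₁ t else A₂ (t - T₁)) = A₂ (t - T₁) :=
        if_neg (not_lt.mpr hgt.le)
      have hctrlW : (if t < T₁ then W₁ t else W₂ (t - T₁)) = W₂ (t - T₁) :=
        if_neg (not_lt.mpr hgt.le)
      have hctrlb : (if t < T₁ then b₁ t else b₂ (t - T₁)) = b₂ (t - T₁) :=
        if_neg (not_lt.mpr hgt.le)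
      simpa [hctrl, hctrlW, hctrlb, hXt] using hd3
  · simp [hX, h₁.le, hX₁0]
  · have hne : ¬ (T₁ + T₂ ≤ T₁) := by linarith
    show (if T₁ + T₂ ≤ T₁ then X₁ (T₁ + T₂) else X₂ (T₁ + T₂ - T₁)) = (Φ₂ ∘ Φ₁) p
    rw [if_neg hne, add_sub_cancel_left, hX₂T]
    rfl

lemma realizes_nil [NeZero d] {T : ℝ} (hT : 0 < T) :
    Realizes d T (fun z => z) := by
  refine ⟨fun _ => 0, fun _ => 0, fun _ => 0, ∅, ?_, ?_, ?_, ?_⟩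
  · intro t₁ _ t₂ _ _ _; rfl
  · intro t₁ _ t₂ _ _ _; rfl
  · intro t₁ _ t₂ _ _ _; rfl
  intro p
  have hz : ∀ v : EuclideanSpace ℝ (Fin d),
      mvec (0 : Matrix (Fin d) (Fin d) ℝ) v = 0 := by
    intro v
    ext i
    simp only [mvec, PiLp.toLp_apply, Matrix.zero_apply, zero_mul, Finset.sum_const_zero]
    rfl
  refine ⟨fun _ => p, ⟨continuousOn_const, ?_⟩, rfl, rfl⟩
  intro t ht _
  rw [hz]
  exact hasDerivWithinAt_const t _ p

lemma realizes_applyL [NeZero d] (L : List (GMove d)) :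
    ∀ {T : ℝ}, 0 < T → Realizes d T (applyL L) := by
  induction L with
  | nil => intro T hT; exact realizes_nil hT
  | cons m L ih =>
    intro T hT
    have h2 : (0:ℝ) < T / 2 := by linarith
    have hglue := realizes_glue h2 h2 (realizes_single m h2) (ih h2)
    have hTeq : T / 2 + T / 2 = T := by ring
    rw [hTeq] at hglue
    have hfun : (applyL L ∘ stepM m) = applyL (m :: L) := by
      funext z; rfl
    rwa [hfun] at hglue


lemma dotE_single_left (i : Fin d) (c : ℝ) (z : EuclideanSpace ℝ (Fin d)) :
    dotE (EuclideanSpace.single i c) z = c * z i := by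
  simp only [dotE, EuclideanSpace.single_apply, ite_mul, zero_mul,
    Finset.sum_ite_eq', Finset.mem_univ, if_true]

lemma dotE_sub_right (n z w : EuclideanSpace ℝ (Fin d)) :
    dotE n (z - w) = dotE n z - dotE n w := by
  simp [dotE, PiLp.sub_apply, mul_sub, Finset.sum_sub_distrib]

lemma dotE_add_left (n m z : EuclideanSpace ℝ (Fin d)) :
    dotE (n + m) z = dotE n z + dotE m z := by
  simp [dotE, PiLp.add_apply, add_mul, Finset.sum_add_distrib]

lemma dotE_smul_left (c : ℝ) (n z : EuclideanSpace ℝ (Fin d)) :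
    dotE (c • n) z = c * dotE n z := by
  simp only [dotE, PiLp.smul_apply, smul_eq_mul, Finset.mul_sum]
  exact Finset.sum_congr rfl fun j _ => by ring

lemma dotE_neg_left (n z : EuclideanSpace ℝ (Fin d)) :
    dotE (-n) z = -dotE n z := by
  simp [dotE, PiLp.neg_apply, Finset.sum_neg_distrib]

lemma dotE_sub_left (n m z : EuclideanSpace ℝ (Fin d)) :
    dotE (n - m) z = dotE n z - dotE m z := by
  simp [dotE, PiLp.sub_apply, sub_mul, Finset.sum_sub_distrib]

lemma dotE_self_pos {z : EuclideanSpace ℝ (Fin d)} (hz : z ≠ 0) : 0 < dotE z z := by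
  have h1 : ∃ j, z j ≠ 0 := by
    by_contra h
    push_neg at h
    exact hz (by ext j; simpa using h j)
  obtain ⟨j, hj⟩ := h1
  have : (0:ℝ) < z j * z j := mul_self_pos.mpr hj
  refine Finset.sum_pos' (fun i _ => mul_self_nonneg _) ⟨j, Finset.mem_univ j, this⟩

/-- a linear functional not vanishing on finitely many given nonzero vectors -/
lemma exists_generic : ∀ (l : List (EuclideanSpace ℝ (Fin d))), (∀ v ∈ l, v ≠ 0) →
    ∃ a, ∀ v ∈ l, dotE a v ≠ 0 := by
  intro l
  induction l with
  | nil => exact fun _ => ⟨0, fun v hv => absurd hv List.not_mem_nil⟩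
  | cons w l ih =>
    intro hl
    obtain ⟨a, ha⟩ := ih (fun v hv => hl v (List.mem_cons_of_mem w hv))
    have hw : w ≠ 0 := hl w List.mem_cons_self
    -- bad values of t
    set bad : Finset ℝ :=
      ((w :: l).map (fun v => -dotE a v / dotE w v)).toFinset with hbad
    obtain ⟨t, ht⟩ := Infinite.exists_notMem_finset bad
    refine ⟨a + t • w, fun v hv => ?_⟩
    rw [show dotE (a + t • w) v = dotE a v + t * dotE w v by
      rw [dotE_add_left, dotE_smul_left]]
    intro hcontra
    by_cases hwv : dotE w v = 0
    · rw [hwv, mul_zero, add_zero] at hcontra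
      rcases List.mem_cons.mp hv with rfl | hv'
      · exact absurd hwv (ne_of_gt (dotE_self_pos hw))
      · exact ha v hv' hcontra
    · apply ht
      rw [hbad]
      simp only [List.mem_toFinset, List.mem_map]
      refine ⟨v, hv, ?_⟩
      field_simp
      linarith [hcontra]

/-- pick a point of a nonempty open set whose `k0` coordinate avoids a finite set -/
lemma exists_target (k0 : Fin d) (U : Set (EuclideanSpace ℝ (Fin d))) (hU : IsOpen U)
    (hne : U.Nonempty) (F : Finset ℝ) : ∃ y ∈ U, y k0 ∉ F := by
  obtain ⟨z, hz⟩ := hne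
  obtain ⟨ε, hε, hball⟩ := Metric.isOpen_iff.mp hU z hz
  have hinf : (Set.Ioo (0:ℝ) ε).Infinite := Set.infinite_coe_iff.mp (Set.Ioo.infinite hε)
  have hne2 : (Set.Ioo (0:ℝ) ε \ ↑(F.image (fun f => f - z k0))).Nonempty :=
    (hinf.diff (F.image _).finite_toSet).nonempty
  obtain ⟨t, ht, htF⟩ := hne2
  refine ⟨z + EuclideanSpace.single k0 t, hball ?_, ?_⟩
  · rw [Metric.mem_ball, dist_self_add_left, EuclideanSpace.norm_single]
    calc ‖t‖ = t := by rw [Real.norm_eq_abs, abs_of_pos ht.1]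
    _ < ε := ht.2
  · intro hmem
    apply htF
    simp only [Finset.coe_image, Set.mem_image, Finset.mem_coe]
    refine ⟨(z + EuclideanSpace.single k0 t) k0, hmem, ?_⟩
    simp [PiLp.add_apply, EuclideanSpace.single_apply]

/-- choose targets in the open sets with injective `k0` coordinates -/
lemma exists_targets (k0 : Fin d) {M : ℕ} (O : Fin M → Set (EuclideanSpace ℝ (Fin d)))
    (hOopen : ∀ m, IsOpen (O m)) (hOne : ∀ m, (O m).Nonempty) :
    ∀ {N : ℕ} (lab : Fin N → Fin M),
      ∃ y : Fin N → EuclideanSpace ℝ (Fin d),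
        (∀ i, y i ∈ O (lab i)) ∧ Function.Injective (fun i => y i k0) := by
  intro N
  induction N with
  | zero => exact fun lab => ⟨fun i => i.elim0, fun i => i.elim0, fun i => i.elim0⟩
  | succ n ih =>
    intro lab
    obtain ⟨y', hy'O, hy'inj⟩ := ih (lab ∘ Fin.castSucc)
    obtain ⟨u, huO, huF⟩ := exists_target k0 (O (lab (Fin.last n)))
      (hOopen _) (hOne _) (Finset.univ.image fun j => y' j k0)
    refine ⟨Fin.snoc y' u, ?_, ?_⟩
    · intro i
      refine Fin.lastCases ?_ (fun j => ?_) i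
      · simpa [Fin.snoc_last] using huO
      · simpa [Fin.snoc_castSucc] using hy'O j
    · intro i j hij
      simp only at hij
      rcases Fin.eq_castSucc_or_eq_last i with ⟨i', rfl⟩ | rfl <;>
        rcases Fin.eq_castSucc_or_eq_last j with ⟨j', rfl⟩ | rfl
      · rw [Fin.snoc_castSucc, Fin.snoc_castSucc] at hij
        exact congrArg Fin.castSucc (hy'inj hij)
      · rw [Fin.snoc_castSucc, Fin.snoc_last] at hij
        exact absurd (Finset.mem_image.mpr ⟨i', Finset.mem_univ _, hij⟩) huF
      · rw [Fin.snoc_last, Fin.snoc_castSucc] at hij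
        exact absurd (Finset.mem_image.mpr ⟨j', Finset.mem_univ _, hij.symm⟩) huF
      · rfl

lemma stepM_apply (m : GMove d) (z : EuclideanSpace ℝ (Fin d)) (k : Fin d) :
    stepM m z k = z k + max (dotE m.n z + m.β) 0 * m.u k := by
  simp [stepM, PiLp.add_apply, PiLp.smul_apply, smul_eq_mul]

lemma stepM_frozen (m : GMove d) (z : EuclideanSpace ℝ (Fin d))
    (h : dotE m.n z + m.β ≤ 0) : stepM m z = z := by
  simp [stepM, max_eq_right h]

lemma shift_collapse (z w : EuclideanSpace ℝ (Fin d)) (k1 : Fin d) (a b : ℝ)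
    (hw : w = z + a • EuclideanSpace.single k1 1) :
    w + (b - w k1) • EuclideanSpace.single k1 1 =
      z + (b - z k1) • EuclideanSpace.single k1 1 := by
  have h1 : w k1 = z k1 + a := by
    rw [hw]; simp [PiLp.add_apply, PiLp.smul_apply, EuclideanSpace.single_apply]
  rw [h1, hw, add_assoc, ← add_smul]
  ring_nf

/-- Recursively set the `k1`-coordinates of points with distinct `k0`-coordinates,
without moving anything at `k0`-level `≤ ρ`. -/
lemma setg (k0 k1 : Fin d) (hk : k1 ≠ k0) {ι : Type*} [DecidableEq ι] :
    ∀ (n : ℕ) (s : Finset ι) (_ : s.card = n) (p : ι → EuclideanSpace ℝ (Fin d))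
      (G : ι → ℝ) (ρ : ℝ) (_ : ∀ i ∈ s, ρ < p i k0)
      (_ : ∀ i ∈ s, ∀ j ∈ s, i ≠ j → p i k0 ≠ p j k0),
      ∃ L : List (GMove d),
        (∀ i ∈ s, applyL L (p i) = p i + (G i - p i k1) • EuclideanSpace.single k1 1) ∧
        (∀ z, z k0 ≤ ρ → applyL L z = z) := by
  intro n
  induction n with
  | zero =>
    intro s hcard p G ρ hρ hA
    refine ⟨[], fun i hi => absurd hi ?_, fun z _ => rfl⟩
    simp [Finset.card_eq_zero.mp hcard]
  | succ n ih =>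
    intro s hcard p G ρ hρ hA
    have hne : s.Nonempty := Finset.card_pos.mp (by omega)
    obtain ⟨i₀, hi₀, hmin⟩ := Finset.exists_min_image s (fun j => p j k0) hne
    have hstrict : ∀ j ∈ s, j ≠ i₀ → p i₀ k0 < p j k0 := by
      intro j hj hne'
      rcases lt_or_eq_of_le (hmin j hj) with h | h
      · exact h
      · exact absurd h.symm (hA j hj i₀ hi₀ hne')
    have hθ1 : ρ < p i₀ k0 := hρ i₀ hi₀
    set θ : ℝ := (ρ + p i₀ k0)/2 with hθ
    have hθlt : θ < p i₀ k0 := by rw [hθ]; linarith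
    have hθgt : ρ < θ := by rw [hθ]; linarith
    set c : ℝ := (G i₀ - p i₀ k1)/(p i₀ k0 - θ) with hc
    have hperp : dotE (EuclideanSpace.single k0 1) (c • EuclideanSpace.single k1 1) = 0 := by
      rw [dotE_smul_right, dotE_single_left]
      simp [EuclideanSpace.single_apply, hk, Ne.symm hk]
    set m : GMove d := ⟨EuclideanSpace.single k0 1, -θ, c • EuclideanSpace.single k1 1, hperp⟩
      with hm
    have hcoeff : ∀ z : EuclideanSpace ℝ (Fin d), dotE m.n z + m.β = z k0 - θ := by
      intro z
      rw [hm, dotE_single_left]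
      ring
    have hstepform : ∀ z : EuclideanSpace ℝ (Fin d),
        stepM m z = z + (max (z k0 - θ) 0 * c) • EuclideanSpace.single k1 1 := by
      intro z
      rw [stepM, hcoeff, hm, smul_smul]
    have hstep0 : ∀ z : EuclideanSpace ℝ (Fin d), (stepM m z) k0 = z k0 := by
      intro z
      rw [hstepform, PiLp.add_apply, PiLp.smul_apply]
      simp [EuclideanSpace.single_apply, hk, Ne.symm hk]
    obtain ⟨L', hL'1, hL'2⟩ := ih (s.erase i₀)
      (by rw [Finset.card_erase_of_mem hi₀, hcard]; omega)
      (fun j => stepM m (p j)) G (p i₀ k0)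
      (by intro j hj
          show p i₀ k0 < (stepM m (p j)) k0
          rw [hstep0]
          exact hstrict j (Finset.mem_of_mem_erase hj) (Finset.ne_of_mem_erase hj))
      (by intro i hi j hj hij
          show (stepM m (p i)) k0 ≠ (stepM m (p j)) k0
          rw [hstep0, hstep0]
          exact hA i (Finset.mem_of_mem_erase hi) j (Finset.mem_of_mem_erase hj) hij)
    have hq₀ : stepM m (p i₀) = p i₀ + (G i₀ - p i₀ k1) • EuclideanSpace.single k1 1 := by
      rw [hstepform]
      have hsub : p i₀ k0 - θ ≠ 0 := sub_ne_zero.mpr (ne_of_gt hθlt)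
      have hco : max (p i₀ k0 - θ) 0 * c = G i₀ - p i₀ k1 := by
        rw [max_eq_left (by linarith), hc]
        field_simp
      rw [hco]
    refine ⟨m :: L', ?_, ?_⟩
    · intro i hi
      rw [applyL_cons]
      by_cases hii : i = i₀
      · subst hii
        have hcoord : ((p i + (G i - p i k1) • EuclideanSpace.single k1 1 :
            EuclideanSpace ℝ (Fin d))) k0 = p i k0 := by
          rw [PiLp.add_apply, PiLp.smul_apply]
          simp [EuclideanSpace.single_apply, hk, Ne.symm hk]
        rw [hq₀, hL'2 _ (le_of_eq hcoord)]
      · have hi' : i ∈ s.erase i₀ := Finset.mem_erase.mpr ⟨hii, hi⟩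
        have := hL'1 i hi'
        simp only at this
        rw [this]
        exact shift_collapse (p i) _ k1 _ (G i) (hstepform (p i))
    · intro z hz
      rw [applyL_cons, stepM_frozen m z (by rw [hcoeff]; linarith), hL'2 z (by linarith)]

lemma stepM_coord_other (m : GMove d) (k : Fin d) (h : m.u k = 0)
    (z : EuclideanSpace ℝ (Fin d)) : stepM m z k = z k := by
  rw [stepM_apply, h, mul_zero, add_zero]

/-- The delivery phase: points parked at low distinct `k0`-levels, ordered inversely
to their targets' `k0`-coordinates, are delivered one by one to their targets. -/
lemma deliver (k0 k1 : Fin d) (hk : k1 ≠ k0) {ι : Type*} [Fintype ι] [DecidableEq ι]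
    (y : ι → EuclideanSpace ℝ (Fin d)) :
    ∀ (n : ℕ) (s : Finset ι) (_ : s.card = n) (p : ι → EuclideanSpace ℝ (Fin d))
      (_ : ∀ j ∉ s, p j = y j)
      (_ : ∀ i ∈ s, ∀ j ∈ s, i ≠ j → p i k0 ≠ p j k0)
      (_ : ∀ i ∈ s, ∀ j, j ∉ s → y i k0 < y j k0)
      (_ : ∀ i ∈ s, ∀ j ∈ s, p i k0 < p j k0 → y j k0 < y i k0)
      (_ : ∀ i ∈ s, ∀ j, p i k0 < y j k0),
      ∃ L : List (GMove d), ∀ i, applyL L (p i) = y i := by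
  intro n
  induction n with
  | zero =>
    intro s hcard p hdeliv _ _ _ _
    have hs : s = ∅ := Finset.card_eq_zero.mp hcard
    exact ⟨[], fun i => by rw [applyL_nil, hdeliv i (by simp [hs])]⟩
  | succ n ih =>
    intro s hcard p hdeliv hA hB' hC hF
    have hne : s.Nonempty := Finset.card_pos.mp (by omega)
    obtain ⟨i₀, hi₀, hmin⟩ := Finset.exists_min_image s (fun j => p j k0) hne
    have hstrict : ∀ j ∈ s, j ≠ i₀ → p i₀ k0 < p j k0 := by
      intro j hj hne'
      rcases lt_or_eq_of_le (hmin j hj) with h | h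
      · exact h
      · exact absurd h.symm (hA j hj i₀ hi₀ hne')
    -- abbreviations
    set eB : EuclideanSpace ℝ (Fin d) := EuclideanSpace.single k0 1 with heB
    set gB : EuclideanSpace ℝ (Fin d) := EuclideanSpace.single k1 1 with hgB
    have heBk0 : eB k0 = 1 := by rw [heB]; simp [EuclideanSpace.single_apply]
    have heBk1 : eB k1 = 0 := by rw [heB]; simp [EuclideanSpace.single_apply, hk]
    have hgBk0 : gB k0 = 0 := by rw [hgB]; simp [EuclideanSpace.single_apply, Ne.symm hk]
    have hgBk1 : gB k1 = 1 := by rw [hgB]; simp [EuclideanSpace.single_apply]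
    have hdote : ∀ z : EuclideanSpace ℝ (Fin d), dotE eB z = z k0 := by
      intro z; rw [heB, dotE_single_left, one_mul]
    have hdotg : ∀ z : EuclideanSpace ℝ (Fin d), dotE gB z = z k1 := by
      intro z; rw [hgB, dotE_single_left, one_mul]
    -- constants
    set Bset : Finset ℝ := insert (y i₀ k0)
      (((s.erase i₀).image fun j => p j k0) ∪ (sᶜ.image fun j => y j k0)) with hBset
    have hBne : Bset.Nonempty := ⟨y i₀ k0, by rw [hBset]; exact Finset.mem_insert_self _ _⟩
    set B : ℝ := Bset.min' hBne with hB
    have hlamB : p i₀ k0 < B := by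
      rw [hB, Finset.lt_min'_iff]
      intro b hb
      rw [hBset] at hb
      rcases Finset.mem_insert.mp hb with rfl | hb'
      · exact hF i₀ hi₀ i₀
      rcases Finset.mem_union.mp hb' with hb'' | hb''
      · obtain ⟨j, hj, rfl⟩ := Finset.mem_image.mp hb''
        exact hstrict j (Finset.mem_of_mem_erase hj) (Finset.ne_of_mem_erase hj)
      · obtain ⟨j, _, rfl⟩ := Finset.mem_image.mp hb''
        exact hF i₀ hi₀ j
    set θA : ℝ := (p i₀ k0 + B)/2 with hθA
    have hθA1 : p i₀ k0 < θA := by rw [hθA]; linarith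
    have hθA2 : θA < B := by rw [hθA]; linarith
    set θB : ℝ := 1 + ∑ j, (|p j k1| + |y j k1|) with hθB
    have hθBp : ∀ j, p j k1 ≤ θB - 1 := by
      intro j
      have h1 : |p j k1| + |y j k1| ≤ ∑ j, (|p j k1| + |y j k1|) :=
        Finset.single_le_sum (f := fun i => |p i k1| + |y i k1|)
          (fun i _ => by positivity) (Finset.mem_univ j)
      have h2 : p j k1 ≤ |p j k1| := le_abs_self _
      have h3 : (0:ℝ) ≤ |y j k1| := abs_nonneg _
      rw [hθB]; linarith
    have hθBy : ∀ j, y j k1 ≤ θB - 1 := by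
      intro j
      have h1 : |p j k1| + |y j k1| ≤ ∑ j, (|p j k1| + |y j k1|) :=
        Finset.single_le_sum (f := fun i => |p i k1| + |y i k1|)
          (fun i _ => by positivity) (Finset.mem_univ j)
      have h2 : y j k1 ≤ |y j k1| := le_abs_self _
      have h3 : (0:ℝ) ≤ |p j k1| := abs_nonneg _
      rw [hθB]; linarith
    set H : ℝ := θB + 1 with hH
    -- intermediate positions
    set q : EuclideanSpace ℝ (Fin d) :=
      y i₀ + (p i₀ k0 - y i₀ k0) • eB + (H - y i₀ k1) • gB with hq
    have hqk0 : q k0 = p i₀ k0 := by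
      rw [hq, PiLp.add_apply, PiLp.add_apply, PiLp.smul_apply, PiLp.smul_apply,
        heBk0, hgBk0]
      simp only [smul_eq_mul]; ring
    have hqk1 : q k1 = H := by
      rw [hq, PiLp.add_apply, PiLp.add_apply, PiLp.smul_apply, PiLp.smul_apply,
        heBk1, hgBk1]
      simp only [smul_eq_mul]; ring
    set q' : EuclideanSpace ℝ (Fin d) := y i₀ + (H - y i₀ k1) • gB with hq'
    have hq'k0 : q' k0 = y i₀ k0 := by
      rw [hq', PiLp.add_apply, PiLp.smul_apply, hgBk0]; simp only [smul_eq_mul]; ring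
    have hq'k1 : q' k1 = H := by
      rw [hq', PiLp.add_apply, PiLp.smul_apply, hgBk1]; simp only [smul_eq_mul]; ring
    -- move A
    have hperpA : dotE (-eB) ((θA - p i₀ k0)⁻¹ • (q - p i₀)) = 0 := by
      rw [dotE_neg_left, dotE_smul_right, dotE_sub_right, hdote, hdote, hqk0]
      ring
    set mA : GMove d := ⟨-eB, θA, (θA - p i₀ k0)⁻¹ • (q - p i₀), hperpA⟩ with hmA
    have hcoefA : ∀ z : EuclideanSpace ℝ (Fin d), dotE mA.n z + mA.β = θA - z k0 := by
      intro z; rw [hmA]; rw [dotE_neg_left, hdote]; ring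
    have hAactive : stepM mA (p i₀) = q := by
      rw [stepM, hcoefA, max_eq_left (by linarith)]
      rw [hmA]
      rw [smul_inv_smul₀ (by intro h; rw [sub_eq_zero] at h; linarith)]
      rw [add_comm, sub_add_cancel]
    have hAfrozen : ∀ z : EuclideanSpace ℝ (Fin d), B ≤ z k0 → stepM mA z = z := by
      intro z hz
      exact stepM_frozen mA z (by rw [hcoefA]; linarith)
    -- move B
    have hperpB : dotE gB ((y i₀ k0 - p i₀ k0) • eB) = 0 := by
      rw [dotE_smul_right, hdotg, heBk1]; ring
    set mB : GMove d := ⟨gB, -θB, (y i₀ k0 - p i₀ k0) • eB, hperpB⟩ with hmB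
    have hcoefB : ∀ z : EuclideanSpace ℝ (Fin d), dotE mB.n z + mB.β = z k1 - θB := by
      intro z; rw [hmB]; rw [hdotg]; ring
    have hBactive : stepM mB q = q' := by
      rw [stepM, hcoefB, hqk1]
      have h1 : max (H - θB) 0 = 1 := by rw [hH]; simp
      rw [h1, one_smul, hmB, hq, hq']
      have : (p i₀ k0 - y i₀ k0) • eB + (y i₀ k0 - p i₀ k0) • eB = 0 := by
        rw [← add_smul]
        simp
      rw [add_right_comm, add_assoc, add_assoc, ← add_assoc ((p i₀ k0 - y i₀ k0) • eB), this]
      abel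
    have hBfrozen : ∀ z : EuclideanSpace ℝ (Fin d), z k1 ≤ θB → stepM mB z = z := by
      intro z hz
      exact stepM_frozen mB z (by rw [hcoefB]; linarith)
    -- move C
    set B'set : Finset ℝ := insert (y i₀ k0 + 2) (sᶜ.image fun j => y j k0) with hB'set
    have hB'ne : B'set.Nonempty := ⟨y i₀ k0 + 2, by rw [hB'set]; exact Finset.mem_insert_self _ _⟩
    set B' : ℝ := B'set.min' hB'ne with hB'def
    have hyB' : y i₀ k0 < B' := by
      rw [hB'def, Finset.lt_min'_iff]
      intro b hb
      rw [hB'set] at hb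
      rcases Finset.mem_insert.mp hb with rfl | hb'
      · linarith
      · obtain ⟨j, hj, rfl⟩ := Finset.mem_image.mp hb'
        exact hB' i₀ hi₀ j (Finset.mem_compl.mp hj)
    set θC : ℝ := (y i₀ k0 + B')/2 with hθC
    have hθC1 : y i₀ k0 < θC := by rw [hθC]; linarith
    have hθC2 : θC < B' := by rw [hθC]; linarith
    set cC : ℝ := (θC - y i₀ k0)⁻¹ * (H - y i₀ k1) with hcC
    have hcCpos : 0 < cC := by
      rw [hcC]
      have h1 : 0 < θC - y i₀ k0 := by linarith
      have h2 : 0 < H - y i₀ k1 := by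
        have := hθBy i₀
        rw [hH]; linarith
      positivity
    have hperpC : dotE (-eB) ((-cC) • gB) = 0 := by
      rw [dotE_neg_left, dotE_smul_right, hdote, hgBk0]; ring
    set mC : GMove d := ⟨-eB, θC, (-cC) • gB, hperpC⟩ with hmC
    have hcoefC : ∀ z : EuclideanSpace ℝ (Fin d), dotE mC.n z + mC.β = θC - z k0 := by
      intro z; rw [hmC]; rw [dotE_neg_left, hdote]; ring
    have hCactive : stepM mC q' = y i₀ := by
      rw [stepM, hcoefC, hq'k0, max_eq_left (by linarith)]
      rw [hmC, smul_smul, hcC]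
      have h1 : (θC - y i₀ k0) * ((θC - y i₀ k0)⁻¹ * (H - y i₀ k1)) = H - y i₀ k1 := by
        rw [← mul_assoc, mul_inv_cancel₀ (by intro h; rw [sub_eq_zero] at h; linarith), one_mul]
      have h2 : (θC - y i₀ k0) * -((θC - y i₀ k0)⁻¹ * (H - y i₀ k1)) = -(H - y i₀ k1) := by
        rw [mul_neg, h1]
      rw [h2, hq', add_assoc, ← add_smul]
      simp
    have hCfrozen : ∀ z : EuclideanSpace ℝ (Fin d), B' ≤ z k0 → stepM mC z = z := by
      intro z hz
      exact stepM_frozen mC z (by rw [hcoefC]; linarith)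
    have hCk0 : ∀ z : EuclideanSpace ℝ (Fin d), stepM mC z k0 = z k0 := by
      intro z
      refine stepM_coord_other mC k0 ?_ z
      show ((-cC) • gB) k0 = 0
      rw [PiLp.smul_apply, hgBk0, smul_zero]
    have hBle_er : ∀ j ∈ s.erase i₀, B ≤ p j k0 := by
      intro j hj
      rw [hB]
      refine Finset.min'_le _ _ ?_
      rw [hBset]
      exact Finset.mem_insert_of_mem
        (Finset.mem_union_left _ (Finset.mem_image_of_mem _ hj))
    have hBle_out : ∀ j ∉ s, B ≤ y j k0 := by
      intro j hj
      rw [hB]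
      refine Finset.min'_le _ _ ?_
      rw [hBset]
      exact Finset.mem_insert_of_mem
        (Finset.mem_union_right _ (Finset.mem_image_of_mem _ (Finset.mem_compl.mpr hj)))
    have hB'le_out : ∀ j ∉ s, B' ≤ y j k0 := by
      intro j hj
      rw [hB'def]
      refine Finset.min'_le _ _ ?_
      rw [hB'set]
      exact Finset.mem_insert_of_mem (Finset.mem_image_of_mem _ (Finset.mem_compl.mpr hj))
    set p' : ι → EuclideanSpace ℝ (Fin d) :=
      fun j => stepM mC (stepM mB (stepM mA (p j))) with hp'
    have hp'i₀ : p' i₀ = y i₀ := by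
      rw [hp']
      simp only
      rw [hAactive, hBactive, hCactive]
    have hp'out : ∀ j ∉ s, p' j = y j := by
      intro j hj
      rw [hp']
      simp only
      rw [hdeliv j hj, hAfrozen _ (hBle_out j hj), hBfrozen _ (by linarith [hθBy j]),
        hCfrozen _ (hB'le_out j hj)]
    have hp'er : ∀ j ∈ s.erase i₀, p' j = stepM mC (p j) := by
      intro j hj
      rw [hp']
      simp only
      rw [hAfrozen _ (hBle_er j hj), hBfrozen _ (by linarith [hθBp j])]
    have hp'er0 : ∀ j ∈ s.erase i₀, p' j k0 = p j k0 := by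
      intro j hj
      rw [hp'er j hj, hCk0]
    obtain ⟨L', hL'⟩ := ih (s.erase i₀)
      (by rw [Finset.card_erase_of_mem hi₀, hcard]; omega) p'
      (by intro j hj
          by_cases hjs : j ∈ s
          · have hj0 : j = i₀ := by
              by_contra hne'
              exact hj (Finset.mem_erase.mpr ⟨hne', hjs⟩)
            rw [hj0, hp'i₀]
          · exact hp'out j hjs)
      (by intro i hi j hj hij
          rw [hp'er0 i hi, hp'er0 j hj]
          exact hA i (Finset.mem_of_mem_erase hi) j (Finset.mem_of_mem_erase hj) hij)
      (by intro i hi j hj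
          by_cases hjs : j ∈ s
          · have hj0 : j = i₀ := by
              by_contra hne'
              exact hj (Finset.mem_erase.mpr ⟨hne', hjs⟩)
            subst hj0
            exact hC j hi₀ i (Finset.mem_of_mem_erase hi)
              (hstrict i (Finset.mem_of_mem_erase hi) (Finset.ne_of_mem_erase hi))
          · exact hB' i (Finset.mem_of_mem_erase hi) j hjs)
      (by intro i hi j hj hlt
          rw [hp'er0 i hi, hp'er0 j hj] at hlt
          exact hC i (Finset.mem_of_mem_erase hi) j (Finset.mem_of_mem_erase hj) hlt)
      (by intro i hi j
          rw [hp'er0 i hi]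
          exact hF i (Finset.mem_of_mem_erase hi) j)
    refine ⟨mA :: mB :: mC :: L', ?_⟩
    intro i
    rw [applyL_cons, applyL_cons, applyL_cons]
    exact hL' i

/-- Any family of distinct points can be steered exactly onto targets with
injective `k0`-coordinates by a finite list of moves. -/
lemma geom (k0 k1 : Fin d) (hk : k1 ≠ k0) {N : ℕ} (x : Fin N → EuclideanSpace ℝ (Fin d))
    (hx : Function.Injective x) (y : Fin N → EuclideanSpace ℝ (Fin d))
    (hy : Function.Injective fun i => y i k0) :
    ∃ L : List (GMove d), ∀ i, applyL L (x i) = y i := by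
  rcases Nat.eq_zero_or_pos N with hN | hN
  · subst hN
    exact ⟨[], fun i => i.elim0⟩
  haveI : Nonempty (Fin N) := ⟨⟨0, hN⟩⟩
  set eB : EuclideanSpace ℝ (Fin d) := EuclideanSpace.single k0 1 with heB
  set gB : EuclideanSpace ℝ (Fin d) := EuclideanSpace.single k1 1 with hgB
  have heBk0 : eB k0 = 1 := by rw [heB]; simp [EuclideanSpace.single_apply]
  have heBk1 : eB k1 = 0 := by rw [heB]; simp [EuclideanSpace.single_apply, hk]
  have hgBk0 : gB k0 = 0 := by rw [hgB]; simp [EuclideanSpace.single_apply, Ne.symm hk]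
  have hgBk1 : gB k1 = 1 := by rw [hgB]; simp [EuclideanSpace.single_apply]
  -- step 1 : generic functional
  set l : List (EuclideanSpace ℝ (Fin d)) :=
    gB :: ((List.finRange N ×ˢ List.finRange N).filterMap
      fun ij => if ij.1 ≠ ij.2 then some (x ij.1 - x ij.2) else none) with hl
  have hlne : ∀ v ∈ l, v ≠ 0 := by
    intro v hv
    rw [hl, List.mem_cons] at hv
    rcases hv with rfl | hv
    · intro h
      have := congrArg (fun v : EuclideanSpace ℝ (Fin d) => v k1) h
      rw [hgBk1] at this
      exact one_ne_zero this
    · obtain ⟨ij, _, hij⟩ := List.mem_filterMap.mp hv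
      split_ifs at hij with hne'
      · cases Option.some_injective _ hij
        exact sub_ne_zero.mpr fun h => hne' (hx h)
  obtain ⟨a, ha⟩ := exists_generic l hlne
  have hag : dotE a gB ≠ 0 := ha gB (by rw [hl]; exact List.mem_cons_self)
  have hax : ∀ i j : Fin N, i ≠ j → dotE a (x i) ≠ dotE a (x j) := by
    intro i j hij h
    refine ha (x i - x j) ?_ ?_
    · rw [hl, List.mem_cons]
      right
      refine List.mem_filterMap.mpr ⟨(i, j), ?_, by rw [if_pos hij]⟩
      exact List.pair_mem_product.mpr ⟨List.mem_finRange i, List.mem_finRange j⟩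
    · rw [dotE_sub_right, h, sub_self]
  set u : EuclideanSpace ℝ (Fin d) := (dotE a gB) • eB - (dotE a eB) • gB with hu
  have hperpu : dotE a u = 0 := by
    rw [hu, dotE_sub_right, dotE_smul_right, dotE_smul_right]
    ring
  have hu0 : u k0 = dotE a gB := by
    rw [hu, PiLp.sub_apply, PiLp.smul_apply, PiLp.smul_apply, heBk0, hgBk0]
    simp
  have hu0ne : u k0 ≠ 0 := by rw [hu0]; exact hag
  set α : Fin N → ℝ := fun i => dotE a (x i) with hα
  set β₁ : ℝ := 1 + ∑ i, |α i| with hβ₁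
  have hαβ : ∀ i, 0 < α i + β₁ := by
    intro i
    have h1 : |α i| ≤ ∑ j, |α j| :=
      Finset.single_le_sum (f := fun j => |α j|) (fun j _ => abs_nonneg _) (Finset.mem_univ i)
    have h2 : -α i ≤ |α i| := neg_le_abs _
    rw [hβ₁]; linarith
  set badτ : Finset ℝ := Finset.univ.image
    (fun ij : Fin N × Fin N => (x ij.2 k0 - x ij.1 k0) / ((α ij.1 - α ij.2) * u k0)) with hbadτ
  obtain ⟨τ, hτ⟩ := Infinite.exists_notMem_finset badτ
  have hperp₁ : dotE a (τ • u) = 0 := by rw [dotE_smul_right, hperpu, mul_zero]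
  set m₁ : GMove d := ⟨a, β₁, τ • u, hperp₁⟩ with hm₁
  set z : Fin N → EuclideanSpace ℝ (Fin d) := fun i => stepM m₁ (x i) with hzdef
  have hz : ∀ i, z i = x i + ((α i + β₁) * τ) • u := by
    intro i
    rw [hzdef]
    simp only
    rw [stepM, hm₁]
    rw [show dotE a (x i) = α i from rfl]
    rw [max_eq_left (hαβ i).le, smul_smul]
  set ℓ : Fin N → ℝ := fun i => z i k0 with hℓdef
  have hℓ : ∀ i, ℓ i = x i k0 + (α i + β₁) * τ * u k0 := by
    intro i
    rw [hℓdef]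
    simp only
    rw [hz i, PiLp.add_apply, PiLp.smul_apply, smul_eq_mul, mul_assoc]
  have hℓinj : ∀ i j : Fin N, i ≠ j → ℓ i ≠ ℓ j := by
    intro i j hij h
    apply hτ
    rw [hbadτ]
    rw [Finset.mem_image]
    refine ⟨(i, j), Finset.mem_univ _, ?_⟩
    have hne2 : (α i - α j) * u k0 ≠ 0 :=
      mul_ne_zero (sub_ne_zero.mpr (hax i j hij)) hu0ne
    show (x j k0 - x i k0) / ((α i - α j) * u k0) = τ
    rw [div_eq_iff hne2]
    rw [hℓ i, hℓ j] at h
    linear_combination -h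
  -- step 3 : ranks and park levels
  set η : Fin N → ℝ := fun i => y i k0 with hη
  set r : Fin N → ℕ := fun i => (Finset.univ.filter (fun j => η j < η i)).card with hr
  have hrmono : ∀ i j, η i < η j → r i < r j := by
    intro i j hij
    rw [hr]
    refine Finset.card_lt_card ?_
    rw [Finset.ssubset_iff_of_subset]
    · exact ⟨i, Finset.mem_filter.mpr ⟨Finset.mem_univ _, hij⟩,
        fun hmem => absurd (Finset.mem_filter.mp hmem).2 (lt_irrefl _)⟩
    · intro k hk'
      rw [Finset.mem_filter] at hk' ⊢
      exact ⟨hk'.1, hk'.2.trans hij⟩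
  have hrinj : ∀ i j, r i = r j → i = j := by
    intro i j hrr
    rcases lt_trichotomy (η i) (η j) with h | h | h
    · exact absurd hrr (Nat.ne_of_lt (hrmono i j h))
    · exact hy h
    · exact absurd hrr.symm (Nat.ne_of_lt (hrmono j i h))
  set R : ℝ := 1 + (∑ j, |η j|) + (∑ j, |ℓ j|) with hR
  have hRpos : 0 < R := by
    rw [hR]
    have h1 : (0:ℝ) ≤ ∑ j, |η j| := Finset.sum_nonneg fun j _ => abs_nonneg _
    have h2 : (0:ℝ) ≤ ∑ j, |ℓ j| := Finset.sum_nonneg fun j _ => abs_nonneg _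
    linarith
  have hRη : ∀ j, |η j| < R := by
    intro j
    have h1 : |η j| ≤ ∑ i, |η i| :=
      Finset.single_le_sum (f := fun i => |η i|) (fun i _ => abs_nonneg _) (Finset.mem_univ j)
    have h2 : (0:ℝ) ≤ ∑ i, |ℓ i| := Finset.sum_nonneg fun i _ => abs_nonneg _
    rw [hR]; linarith
  have hRℓ : ∀ j, |ℓ j| < R := by
    intro j
    have h1 : |ℓ j| ≤ ∑ i, |ℓ i| :=
      Finset.single_le_sum (f := fun i => |ℓ i|) (fun i _ => abs_nonneg _) (Finset.mem_univ j)
    have h2 : (0:ℝ) ≤ ∑ i, |η i| := Finset.sum_nonneg fun i _ => abs_nonneg _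
    rw [hR]; linarith
  set Λ : Fin N → ℝ := fun i => -(R * (1 + r i)) with hΛ
  have hΛlow : ∀ i, Λ i ≤ -R := by
    intro i
    rw [hΛ]
    simp only [neg_le_neg_iff]
    have h0 : (0:ℝ) ≤ (r i : ℝ) := Nat.cast_nonneg _
    nlinarith
  have hΛℓ : ∀ i j, Λ i < ℓ j := by
    intro i j
    have h1 := hRℓ j
    have h2 := hΛlow i
    have h3 : -R < ℓ j := by
      have := abs_lt.mp h1
      linarith [this.1]
    linarith
  have hΛη : ∀ i j, Λ i < η j := by
    intro i j
    have h1 := hRη j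
    have h2 := hΛlow i
    have := abs_lt.mp h1
    linarith [this.1]
  have hΛinj : ∀ i j, i ≠ j → Λ i ≠ Λ j := by
    intro i j hij h
    rw [hΛ] at h
    simp only [neg_inj] at h
    have h2 : (1 : ℝ) + r i = 1 + r j := mul_left_cancel₀ (ne_of_gt hRpos) h
    have h3 : (r i : ℝ) = r j := by linarith
    exact hij (hrinj i j (Nat.cast_injective h3))
  have hΛC : ∀ i j, Λ i < Λ j → η j < η i := by
    intro i j hij
    have hrr : r j < r i := by
      rw [hΛ] at hij
      simp only [neg_lt_neg_iff] at hij
      have h2 : (1 : ℝ) + r j < 1 + r i := lt_of_mul_lt_mul_left hij hRpos.le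
      have h3 : (r j : ℝ) < r i := by linarith
      exact_mod_cast h3
    rcases lt_trichotomy (η i) (η j) with h | h | h
    · exact absurd (hrmono i j h) (by omega)
    · exact absurd (congrArg r (hy h)) (by omega)
    · exact h
  -- step 4 : encode target levels in the k1 coordinate
  set τ₂ : ℝ := ∑ j, (ℓ j - Λ j) with hτ₂
  have hτ₂pos : 0 < τ₂ := by
    rw [hτ₂]
    refine Finset.sum_pos (fun j _ => by linarith [hΛℓ j j]) Finset.univ_nonempty
  have hτ₂ge : ∀ i, ℓ i - Λ i ≤ τ₂ := by
    intro i
    rw [hτ₂]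
    exact Finset.single_le_sum (f := fun j => ℓ j - Λ j)
      (fun j _ => by linarith [hΛℓ j j]) (Finset.mem_univ i)
  set G : Fin N → ℝ := fun i => (ℓ i - Λ i) / τ₂ with hG
  have hGpos : ∀ i, 0 < G i := by
    intro i
    rw [hG]
    exact div_pos (by linarith [hΛℓ i i]) hτ₂pos
  obtain ⟨L₂, hL₂, _⟩ := setg k0 k1 hk N Finset.univ (by simp) z G (-R)
    (by intro i _
        show -R < ℓ i
        have := abs_lt.mp (hRℓ i)
        linarith [this.1])
    (by intro i _ j _ hij
        exact hℓinj i j hij)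
  set w : Fin N → EuclideanSpace ℝ (Fin d) :=
    fun i => z i + (G i - z i k1) • EuclideanSpace.single k1 1 with hw
  have hwkey : ∀ i, applyL L₂ (z i) = w i := fun i => hL₂ i (Finset.mem_univ i)
  have hw0 : ∀ i, w i k0 = ℓ i := by
    intro i
    rw [hw]
    simp only
    rw [PiLp.add_apply, PiLp.smul_apply]
    have : EuclideanSpace.single k1 (1:ℝ) k0 = 0 := by
      simp [EuclideanSpace.single_apply, Ne.symm hk]
    rw [this, smul_zero, add_zero]
  have hw1 : ∀ i, w i k1 = G i := by
    intro i
    rw [hw]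
    simp only
    rw [PiLp.add_apply, PiLp.smul_apply]
    have : EuclideanSpace.single k1 (1:ℝ) k1 = 1 := by
      simp [EuclideanSpace.single_apply]
    rw [this, smul_eq_mul, mul_one]
    ring
  -- step 5 : drop to park levels
  have hperp₃ : dotE gB ((-τ₂) • eB) = 0 := by
    rw [dotE_smul_right, hgB, dotE_single_left, one_mul]
    rw [show eB k1 = 0 from heBk1]
    ring
  set m₃ : GMove d := ⟨gB, 0, (-τ₂) • eB, hperp₃⟩ with hm₃
  set p0 : Fin N → EuclideanSpace ℝ (Fin d) := fun i => w i + (Λ i - ℓ i) • eB with hp0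
  have hstep₃ : ∀ i, stepM m₃ (w i) = p0 i := by
    intro i
    rw [stepM, hm₃]
    simp only
    rw [show dotE gB (w i) = w i k1 by rw [hgB, dotE_single_left, one_mul]]
    rw [hw1, add_zero, max_eq_left (hGpos i).le, smul_smul, hp0]
    congr 2
    rw [hG]
    field_simp
    ring
  have hp00 : ∀ i, p0 i k0 = Λ i := by
    intro i
    rw [hp0]
    simp only
    rw [PiLp.add_apply, PiLp.smul_apply, heBk0, smul_eq_mul, mul_one, hw0]
    ring
  -- step 6 : deliver
  obtain ⟨L₄, hL₄⟩ := deliver k0 k1 hk y N Finset.univ (by simp) p0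
    (fun j hj => absurd (Finset.mem_univ j) hj)
    (by intro i _ j _ hij
        rw [hp00, hp00]
        exact hΛinj i j hij)
    (fun i _ j hj => absurd (Finset.mem_univ j) hj)
    (by intro i _ j _ hlt
        rw [hp00, hp00] at hlt
        exact hΛC i j hlt)
    (by intro i _ j
        rw [hp00]
        exact hΛη i j)
  refine ⟨m₁ :: (L₂ ++ (m₃ :: L₄)), ?_⟩
  intro i
  rw [applyL_cons, applyL_append]
  rw [show stepM m₁ (x i) = z i from rfl]
  rw [hwkey i, applyL_cons, hstep₃ i]
  exact hL₄ i

end NODE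

/-- **Classification into arbitrary disjoint open sets.**
Given pairwise distinct points in `ℝ^d` (`d ≥ 2`), pairwise disjoint nonempty
open sets `O 1, …, O M` and any label assignment, there are piecewise constant
controls whose neural-ODE flow sends each point into the open set of its label. -/


theorem classification_open_sets
    (d M N : ℕ) (hd : 2 ≤ d) (T : ℝ) (hT : 0 < T)
    (x : Fin N → EuclideanSpace ℝ (Fin d)) (hx : Function.Injective x)
    (O : Fin M → Set (EuclideanSpace ℝ (Fin d)))
    (hOopen : ∀ m, IsOpen (O m)) (hOne : ∀ m, (O m).Nonempty)
    (hOdisj : ∀ m m', m ≠ m' → Disjoint (O m) (O m'))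
    (lab : Fin N → Fin M) :
    ∃ (A W : ℝ → Matrix (Fin d) (Fin d) ℝ) (b : ℝ → EuclideanSpace ℝ (Fin d))
      (S : Finset ℝ),
      PCOn A T S ∧ PCOn W T S ∧ PCOn b T S ∧
      ∃ X : Fin N → ℝ → EuclideanSpace ℝ (Fin d),
        (∀ i, SolvesNODE A W b T S (X i)) ∧
        (∀ i, X i 0 = x i) ∧
        (∀ i, X i T ∈ O (lab i)) := by
  haveI : NeZero d := ⟨by omega⟩
  set k0 : Fin d := ⟨0, by omega⟩ with hk0
  set k1 : Fin d := ⟨1, by omega⟩ with hk1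
  have hk : k1 ≠ k0 := by
    intro h
    have h2 := congrArg Fin.val h
    rw [hk0, hk1] at h2
    simp at h2
  obtain ⟨y, hyO, hyinj⟩ := NODE.exists_targets k0 O hOopen hOne lab
  obtain ⟨L, hL⟩ := NODE.geom k0 k1 hk x hx y hyinj
  obtain ⟨A, W, b, S, hA, hW, hb, hsol⟩ := NODE.realizes_applyL L hT
  refine ⟨A, W, b, S, hA, hW, hb, ?_⟩
  choose X hXs hX0 hXT using fun i => hsol (x i)
  refine ⟨X, hXs, hX0, fun i => ?_⟩
  rw [hXT i, hL i]
  exact hyO i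
end
end

section
/- Let d ≥ 2 and T > 0. Let {x_i}_{i=1}^N ⊂ ℝ^d be pairwise distinct initial points and {z_i}_{i=1}^N ⊂ ℝ^d be pairwise distinct target points. Then there exist piecewise constant controls A, W : [0,T] → ℝ^{d×d} and b : [0,T] → ℝ^d such that the flow of the Neural ODE satisfies φ_T(x_i; A, W, b) = z_i for every i ∈ {1,…,N}. -/
open MeasureTheory Set

noncomputable section

namespace NODEAux

abbrev E (d : ℕ) := EuclideanSpace ℝ (Fin d)

def stepm {d : ℕ} (k : Fin d) (c : ℝ) (v : E d) (p : E d) : E d :=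
  p + (max (p k - c) 0) • v

lemma stepm_apply {d : ℕ} (k : Fin d) (c : ℝ) (v p : E d) (j : Fin d) :
    stepm k c v p j = p j + max (p k - c) 0 * v j := by
  simp [stepm]

lemma stepm_gate {d : ℕ} {k : Fin d} {c : ℝ} {v : E d} (hv : v k = 0) (p : E d) :
    stepm k c v p k = p k := by
  simp [stepm_apply, hv]

lemma stepm_injective {d : ℕ} {k : Fin d} {c : ℝ} {v : E d} (hv : v k = 0) :
    Function.Injective (stepm k c v) := by
  intro p q h
  have hk : p k = q k := by
    have := congrArg (fun w : E d => w k) h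
    simpa [stepm_gate hv] using this
  rw [stepm, stepm, ← hk] at h
  exact add_right_cancel h

def StepRel {d N : ℕ} (x y : Fin N → E d) : Prop :=
  ∃ (k : Fin d) (c : ℝ) (v : E d), v k = 0 ∧ ∀ i, y i = stepm k c v (x i)

def Reach {d N : ℕ} : (Fin N → E d) → (Fin N → E d) → Prop :=
  Relation.ReflTransGen StepRel

lemma stepRel_symm {d N : ℕ} : Symmetric (@StepRel d N) := by
  rintro x y ⟨k, c, v, hv, hy⟩
  refine ⟨k, c, -v, by simp [hv], fun i => ?_⟩
  have hk : y i k = x i k := by rw [hy i]; exact stepm_gate hv _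
  rw [hy i]
  ext j
  simp [stepm_apply, hk, hv]

lemma reach_symm {d N : ℕ} {x y : Fin N → E d} (h : Reach x y) : Reach y x :=
  (@Relation.ReflTransGen.stdSymm _ _ ⟨fun a b h => stepRel_symm h⟩).symm _ _ h


def GPC {α : Type*} (a b : ℝ) (f : ℝ → α) (S : Finset ℝ) : Prop :=
  ∀ t₁ ∈ Set.Icc a b, ∀ t₂ ∈ Set.Icc a b, t₁ ≤ t₂ →
    (∀ s ∈ S, s ∉ Set.Ioc t₁ t₂) → f t₁ = f t₂

lemma GPC.const {α : Type*} (a b : ℝ) (g : α) (S : Finset ℝ) : GPC a b (fun _ => g) S :=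
  fun _ _ _ _ _ _ => rfl

def GReal {d N : ℕ} (a b : ℝ) (x z : Fin N → E d) : Prop :=
  ∃ (A W : ℝ → Matrix (Fin d) (Fin d) ℝ) (bb : ℝ → E d) (S : Finset ℝ)
    (X : Fin N → ℝ → E d),
    GPC a b A S ∧ GPC a b W S ∧ GPC a b bb S ∧
    (∀ i, Continuous (X i)) ∧
    (∀ i, ∀ t ∈ Set.Icc a b, t ∉ S →
      HasDerivWithinAt (X i) (mvec (W t) (reluVec (mvec (A t) (X i t) + bb t)))
        (Set.Icc a b) t) ∧
    (∀ i, X i a = x i) ∧ (∀ i, X i b = z i)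

lemma mvec_zero {d : ℕ} (p : E d) : mvec 0 p = 0 := by
  ext i
  simp [mvec]

lemma GReal_refl {d N : ℕ} (a b : ℝ) (x : Fin N → E d) : GReal a b x x := by
  refine ⟨fun _ => 0, fun _ => 0, fun _ => 0, ∅, fun i _ => x i,
    GPC.const _ _ _ _, GPC.const _ _ _ _, GPC.const _ _ _ _,
    fun i => continuous_const, fun i t ht hs => ?_, fun i => rfl, fun i => rfl⟩
  rw [mvec_zero]
  exact hasDerivWithinAt_const t _ (x i)

def gateA {d : ℕ} (k : Fin d) : Matrix (Fin d) (Fin d) ℝ :=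
  fun i' j => if i' = k ∧ j = k then 1 else 0

def gateb {d : ℕ} (k : Fin d) (c : ℝ) : E d := EuclideanSpace.single k (-c)

def gateW {d : ℕ} (k : Fin d) (r : ℝ) (v : E d) : Matrix (Fin d) (Fin d) ℝ :=
  fun i' j => if j = k then r * v i' else 0

lemma mvec_relu_formula {d : ℕ} (k : Fin d) (c r : ℝ) (v : E d) (p : E d) :
    mvec (gateW k r v) (reluVec (mvec (gateA k) p + gateb k c)) =
    (r * max (p k - c) 0) • v := by
  ext i'
  have hadd : ∀ (u w : E d) (j : Fin d), (u + w) j = u j + w j := fun _ _ _ => rfl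
  have hsmul : ∀ (t : ℝ) (w : E d) (j : Fin d), (t • w) j = t * w j := fun _ _ _ => rfl
  rw [hsmul]
  have hrelu : ∀ j : Fin d, (reluVec (mvec (gateA k) p + gateb k c)) j
      = if j = k then max (p k - c) 0 else 0 := by
    intro j
    show max _ 0 = _
    rw [hadd]
    have h1 : (mvec (gateA k) p) j = if j = k then p k else 0 := by
      show (∑ j', (if j = k ∧ j' = k then 1 else 0) * p j') = _
      by_cases h : j = k <;> simp [h]
    rw [h1]
    have h2 : gateb k c j = if j = k then -c else 0 := by
      simp [gateb, EuclideanSpace.single_apply]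
    rw [h2]
    by_cases h : j = k <;> simp [h]
    ring_nf
  show (∑ j, (if j = k then r * v i' else 0) * (reluVec (mvec (gateA k) p + gateb k c)) j) = _
  rw [Finset.sum_congr rfl (fun j _ => by rw [hrelu j])]
  rw [Finset.sum_eq_single k]
  · simp; ring
  · intro j _ hj; simp [hj]
  · simp

lemma GReal_step {d N : ℕ} {x y : Fin N → E d} (h : StepRel x y) (a b : ℝ) (hab : a < b) :
    GReal a b x y := by
  obtain ⟨k, c, v, hv, hy⟩ := h
  set r : ℝ := (b - a)⁻¹ with hr
  refine ⟨fun _ => gateA k, fun _ => gateW k r v, fun _ => gateb k c, ∅,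
    fun i t => x i + ((r * max (x i k - c) 0) * (t - a)) • v,
    GPC.const _ _ _ _, GPC.const _ _ _ _, GPC.const _ _ _ _,
    fun i => ?_, fun i t ht hs => ?_, fun i => ?_, fun i => ?_⟩
  · exact continuous_const.add ((continuous_const.mul (continuous_id.sub continuous_const)).smul continuous_const)
  · have hgate : (x i + ((r * max (x i k - c) 0) * (t - a)) • v) k = x i k := by
      have h2 : ((r * max (x i k - c) 0 * (t - a)) • v) k
          = (r * max (x i k - c) 0 * (t - a)) * v k := rfl
      show x i k + ((r * max (x i k - c) 0 * (t - a)) • v) k = _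
      rw [h2, hv]
      ring
    rw [mvec_relu_formula k c r v _]
    beta_reduce
    rw [hgate]
    have hd : HasDerivAt (fun t : ℝ => x i + ((r * max (x i k - c) 0) * (t - a)) • v)
        ((r * max (x i k - c) 0) • v) t := by
      have h1 : HasDerivAt (fun t : ℝ => (r * max (x i k - c) 0) * (t - a))
          (r * max (x i k - c) 0) t := by
        simpa using ((hasDerivAt_id t).sub_const a).const_mul (r * max (x i k - c) 0)
      simpa using (h1.smul_const v).const_add (x i)
    exact hd.hasDerivWithinAt
  · simp
  · rw [hy i]
    ext j
    rw [stepm_apply]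
    have h3 : ((r * max (x i k - c) 0 * (b - a)) • v) j
        = (r * max (x i k - c) 0 * (b - a)) * v j := rfl
    show x i j + ((r * max (x i k - c) 0 * (b - a)) • v) j = _
    rw [h3, hr]
    have hba : b - a ≠ 0 := sub_ne_zero.mpr hab.ne'
    field_simp


lemma GPC_glue {α : Type*} {a m b : ℝ} (hmb : m < b)
    {f g : ℝ → α} {S₁ S₂ : Finset ℝ} (hf : GPC a m f S₁) (hg : GPC m b g S₂) :
    GPC a b (fun t => if t < m then f t else g t) (S₁ ∪ S₂ ∪ {m}) := by
  intro t₁ ht₁ t₂ ht₂ h12 hS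
  have hm : m ∉ Set.Ioc t₁ t₂ := hS m (by simp)
  rw [Set.mem_Ioc, not_and_or, not_lt, not_le] at hm
  rcases hm with hm | hm
  · -- m ≤ t₁
    have e1 : ¬ t₁ < m := not_lt.mpr hm
    have e2 : ¬ t₂ < m := not_lt.mpr (hm.trans h12)
    simp only [e1, e2, if_false]
    exact hg t₁ ⟨hm, ht₁.2⟩ t₂ ⟨hm.trans h12, ht₂.2⟩ h12
      (fun s hs => hS s (by simp [hs]))
  · -- t₂ < m
    have e1 : t₁ < m := lt_of_le_of_lt h12 hm
    simp only [e1, hm, if_true]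
    exact hf t₁ ⟨ht₁.1, e1.le⟩ t₂ ⟨ht₂.1, hm.le⟩ h12
      (fun s hs => hS s (by simp [hs]))

lemma GReal_glue {d N : ℕ} {a m b : ℝ} (ham : a < m) (hmb : m < b)
    {x w z : Fin N → E d} (h1 : GReal a m x w) (h2 : GReal m b w z) :
    GReal a b x z := by
  obtain ⟨A₁, W₁, b₁, S₁, X₁, hA₁, hW₁, hb₁, hC₁, hD₁, ha₁, hm₁⟩ := h1
  obtain ⟨A₂, W₂, b₂, S₂, X₂, hA₂, hW₂, hb₂, hC₂, hD₂, hm₂, hb₂'⟩ := h2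
  refine ⟨fun t => if t < m then A₁ t else A₂ t,
    fun t => if t < m then W₁ t else W₂ t,
    fun t => if t < m then b₁ t else b₂ t,
    S₁ ∪ S₂ ∪ {m},
    fun i t => if t ≤ m then X₁ i t else X₂ i t,
    GPC_glue hmb hA₁ hA₂, GPC_glue hmb hW₁ hW₂, GPC_glue hmb hb₁ hb₂,
    fun i => ?_, fun i t ht htS => ?_, fun i => ?_, fun i => ?_⟩
  · exact Continuous.if_le (hC₁ i) (hC₂ i) continuous_id continuous_const
      (fun t' htm => by rw [htm, hm₁ i, hm₂ i])
  · have htm : t ≠ m := by intro h; exact htS (by simp [h])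
    have htS₁ : t ∉ S₁ := fun h => htS (by simp [h])
    have htS₂ : t ∉ S₂ := fun h => htS (by simp [h])
    rcases lt_or_gt_of_ne htm with hlt | hgt
    · have e1 : (if t < m then A₁ t else A₂ t) = A₁ t := if_pos hlt
      have e2 : (if t < m then W₁ t else W₂ t) = W₁ t := if_pos hlt
      have e3 : (if t < m then b₁ t else b₂ t) = b₁ t := if_pos hlt
      have e4 : (if t ≤ m then X₁ i t else X₂ i t) = X₁ i t := if_pos hlt.le
      simp only [e1, e2, e3, e4]
      have H : HasDerivWithinAt (X₁ i)
          (mvec (W₁ t) (reluVec (mvec (A₁ t) (X₁ i t) + b₁ t))) (Set.Icc a m) t :=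
        hD₁ i t ⟨ht.1, hlt.le⟩ htS₁
      have H2 : HasDerivWithinAt (X₁ i) _ (Set.Icc a b ∩ Set.Iio m) t :=
        H.mono (fun u hu => ⟨hu.1.1, hu.2.le⟩)
      have H3 : HasDerivWithinAt (fun t => if t ≤ m then X₁ i t else X₂ i t)
          (mvec (W₁ t) (reluVec (mvec (A₁ t) (X₁ i t) + b₁ t)))
          (Set.Icc a b ∩ Set.Iio m) t := by
        refine H2.congr (fun u hu => ?_) (by rw [if_pos hlt.le])
        rw [if_pos (le_of_lt hu.2)]
      exact (hasDerivWithinAt_inter (Iio_mem_nhds hlt)).mp H3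
    · have e1 : (if t < m then A₁ t else A₂ t) = A₂ t := if_neg (not_lt.mpr hgt.le)
      have e2 : (if t < m then W₁ t else W₂ t) = W₂ t := if_neg (not_lt.mpr hgt.le)
      have e3 : (if t < m then b₁ t else b₂ t) = b₂ t := if_neg (not_lt.mpr hgt.le)
      have e4 : (if t ≤ m then X₁ i t else X₂ i t) = X₂ i t := if_neg (not_le.mpr hgt)
      simp only [e1, e2, e3, e4]
      have H : HasDerivWithinAt (X₂ i)
          (mvec (W₂ t) (reluVec (mvec (A₂ t) (X₂ i t) + b₂ t))) (Set.Icc m b) t :=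
        hD₂ i t ⟨hgt.le, ht.2⟩ htS₂
      have H2 : HasDerivWithinAt (X₂ i) _ (Set.Icc a b ∩ Set.Ioi m) t :=
        H.mono (fun u hu => ⟨hu.2.le, hu.1.2⟩)
      have H3 : HasDerivWithinAt (fun t => if t ≤ m then X₁ i t else X₂ i t)
          (mvec (W₂ t) (reluVec (mvec (A₂ t) (X₂ i t) + b₂ t)))
          (Set.Icc a b ∩ Set.Ioi m) t := by
        refine H2.congr (fun u hu => ?_) (by rw [if_neg (not_le.mpr hgt)])
        rw [if_neg (not_le.mpr hu.2)]
      exact (hasDerivWithinAt_inter (Ioi_mem_nhds hgt)).mp H3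
  · show (if a ≤ m then X₁ i a else X₂ i a) = x i
    rw [if_pos ham.le]; exact ha₁ i
  · show (if b ≤ m then X₁ i b else X₂ i b) = z i
    rw [if_neg (not_le.mpr hmb)]; exact hb₂' i

lemma GReal_of_reach {d N : ℕ} {x z : Fin N → E d} (h : Reach x z) :
    ∀ a b : ℝ, a < b → GReal a b x z := by
  induction h using Relation.ReflTransGen.head_induction_on with
  | refl => exact fun a b _ => GReal_refl a b z
  | head hstep _ ih =>
    intro a b hab
    have ham : a < (a + b) / 2 := by linarith
    have hmb : (a + b) / 2 < b := by linarith
    exact GReal_glue ham hmb (GReal_step hstep a _ ham) (ih _ b hmb)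


lemma reach_place {d N : ℕ} (k0 : Fin d) (y : Fin N → E d)
    (hinj : Function.Injective (fun i => y i k0)) :
    ∀ F : Finset (Fin N), ∀ w : Fin N → E d,
      (∀ i, w i k0 = y i k0) →
      (∀ i, i ∉ F → w i = y i) →
      (∀ i ∈ F, ∀ j, j ∉ F → y j k0 < y i k0) →
      Reach w y := by
  intro F
  induction F using Finset.strongInduction with
  | _ F ih =>
    intro w hgate hplaced horder
    by_cases hFe : F = ∅
    · have : w = y := funext fun i => hplaced i (by simp [hFe])
      rw [this]
      exact Relation.ReflTransGen.refl
    · obtain ⟨i, hiF, hmin⟩ :=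
        Finset.exists_min_image F (fun i => y i k0) (Finset.nonempty_of_ne_empty hFe)
      have hcex : ∃ c : ℝ, c < y i k0 ∧ ∀ j, j ∉ F → y j k0 ≤ c := by
        set G : Finset ℝ := (Finset.univ \ F).image (fun j => y j k0) with hG
        by_cases hGne : G.Nonempty
        · refine ⟨G.max' hGne, ?_, ?_⟩
          · rw [Finset.max'_lt_iff]
            intro r hr
            rw [hG, Finset.mem_image] at hr
            obtain ⟨j, hj, rfl⟩ := hr
            exact horder i hiF j (by simpa using hj)
          · intro j hj
            exact Finset.le_max' G _
              (by rw [hG]; exact Finset.mem_image_of_mem _ (by simpa using hj))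
        · refine ⟨y i k0 - 1, by linarith, fun j hj => absurd ?_ hGne⟩
          exact ⟨y j k0, by rw [hG]; exact Finset.mem_image_of_mem _ (by simpa using hj)⟩
      obtain ⟨c, hc1, hc2⟩ := hcex
      set v : E d := (y i k0 - c)⁻¹ • (y i - w i) with hv
      have hvk : v k0 = 0 := by
        have h1 : v k0 = (y i k0 - c)⁻¹ * (y i k0 - w i k0) := rfl
        rw [h1, hgate i]
        ring
      have hstep : StepRel w (fun j => stepm k0 c v (w j)) := ⟨k0, c, v, hvk, fun j => rfl⟩
      have hgate' : ∀ j, stepm k0 c v (w j) k0 = y j k0 := fun j => by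
        rw [stepm_gate hvk]; exact hgate j
      have hplaced' : ∀ j, j ∉ F.erase i → stepm k0 c v (w j) = y j := by
        intro j hj
        by_cases hji : j = i
        · subst hji
          have hmax : max (w j k0 - c) 0 = y j k0 - c := by
            rw [hgate j]; exact max_eq_left (by linarith)
          rw [stepm, hmax, hv, smul_smul, mul_inv_cancel₀ (by linarith), one_smul]
          abel
        · have hjF : j ∉ F := by
            intro hjF
            exact hj (Finset.mem_erase.mpr ⟨hji, hjF⟩)
          have hmax : max (w j k0 - c) 0 = 0 := by
            rw [hgate j]
            exact max_eq_right (by linarith [hc2 j hjF])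
          rw [stepm, hmax, zero_smul, add_zero]
          exact hplaced j hjF
      have horder' : ∀ a ∈ F.erase i, ∀ j, j ∉ F.erase i → y j k0 < y a k0 := by
        intro a ha j hj
        obtain ⟨hai, haF⟩ := Finset.mem_erase.mp ha
        by_cases hji : j = i
        · subst hji
          have hle : y j k0 ≤ y a k0 := hmin a haF
          rcases hle.lt_or_eq with h | h
          · exact h
          · exact absurd (hinj h).symm hai
        · exact horder a haF j (fun hjF => hj (Finset.mem_erase.mpr ⟨hji, hjF⟩))
      exact Relation.ReflTransGen.head hstep
        (ih (F.erase i) (Finset.erase_ssubset hiF) _ hgate' hplaced' horder')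

lemma max_mid_ne {p q : ℝ} (h : p ≠ q) :
    max (p - (p + q) / 2) 0 ≠ max (q - (p + q) / 2) 0 := by
  have key : ∀ p q : ℝ, p < q → max (p - (p + q) / 2) 0 < max (q - (p + q) / 2) 0 := by
    intro p q hpq
    rw [max_eq_right (by linarith)]
    exact lt_max_iff.mpr (Or.inl (by linarith))
  rcases h.lt_or_gt with h' | h'
  · exact (key p q h').ne
  · have := key q p h'
    rw [add_comm q p] at this
    exact this.ne'

lemma reach_separate {d N : ℕ} (k0 : Fin d) :
    ∀ n : ℕ, ∀ x : Fin N → E d, Function.Injective x →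
      ((Finset.univ : Finset (Fin N × Fin N)).filter
        (fun p => p.1 ≠ p.2 ∧ x p.1 k0 = x p.2 k0)).card ≤ n →
      ∃ y : Fin N → E d, Reach x y ∧ Function.Injective (fun i => y i k0) := by
  intro n
  induction n with
  | zero =>
    intro x hx hcard
    refine ⟨x, Relation.ReflTransGen.refl, fun i j hij => ?_⟩
    by_contra hne
    have : (i, j) ∈ (Finset.univ : Finset (Fin N × Fin N)).filter
        (fun p => p.1 ≠ p.2 ∧ x p.1 k0 = x p.2 k0) := by
      simp only [Finset.mem_filter, Finset.mem_univ, true_and]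
      exact ⟨hne, hij⟩
    rw [Finset.card_eq_zero.mp (Nat.le_zero.mp hcard)] at this
    exact absurd this (Finset.notMem_empty _)
  | succ n IH =>
    intro x hx hcard
    set bad := (Finset.univ : Finset (Fin N × Fin N)).filter
        (fun p => p.1 ≠ p.2 ∧ x p.1 k0 = x p.2 k0) with hbad
    by_cases hbe : bad = ∅
    · refine ⟨x, Relation.ReflTransGen.refl, fun i j hij => ?_⟩
      by_contra hne
      have : (i, j) ∈ bad := by
        rw [hbad]
        simp only [Finset.mem_filter, Finset.mem_univ, true_and]
        exact ⟨hne, hij⟩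
      rw [hbe] at this
      exact absurd this (Finset.notMem_empty _)
    · obtain ⟨⟨i, j⟩, hij⟩ := Finset.nonempty_of_ne_empty hbe
      rw [hbad, Finset.mem_filter] at hij
      obtain ⟨-, hne, heq⟩ := hij
      have hxij : x i ≠ x j := fun h => hne (hx h)
      have hkex : ∃ k, x i k ≠ x j k := by
        by_contra hk
        push_neg at hk
        exact hxij (by ext k; exact hk k)
      obtain ⟨k, hk⟩ := hkex
      have hkk0 : k ≠ k0 := fun h => hk (h ▸ heq)
      set c : ℝ := (x i k + x j k) / 2 with hc
      set g : Fin N → ℝ := fun m => max (x m k - c) 0 with hg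
      have hgij : g i ≠ g j := max_mid_ne hk
      set B : Finset ℝ := Finset.image
        (fun p : Fin N × Fin N => (x p.2 k0 - x p.1 k0) / (g p.1 - g p.2)) Finset.univ with hB
      obtain ⟨τ, hτ⟩ := Infinite.exists_notMem_finset B
      set v : E d := EuclideanSpace.single k0 τ with hv
      have hvk : v k = 0 := by
        rw [hv, EuclideanSpace.single_apply, if_neg hkk0]
      set y : Fin N → E d := fun m => stepm k c v (x m) with hy
      have hstep : StepRel x y := ⟨k, c, v, hvk, fun m => rfl⟩
      have hyk0 : ∀ m, y m k0 = x m k0 + g m * τ := by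
        intro m
        rw [hy]; beta_reduce
        rw [stepm_apply, hv, EuclideanSpace.single_apply, if_pos rfl]
      have hyinj : Function.Injective y := fun a b h => hx (stepm_injective hvk h)
      have hsub : ((Finset.univ : Finset (Fin N × Fin N)).filter
          (fun p => p.1 ≠ p.2 ∧ y p.1 k0 = y p.2 k0)) ⊆ bad.erase (i, j) := by
        intro p hp
        rw [Finset.mem_filter] at hp
        obtain ⟨-, hp1, hp2⟩ := hp
        rw [hyk0, hyk0] at hp2
        have hgp : g p.1 = g p.2 := by
          by_contra hgne
          apply hτ
          rw [hB, Finset.mem_image]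
          refine ⟨p, Finset.mem_univ _, ?_⟩
          have hsub : g p.1 - g p.2 ≠ 0 := sub_ne_zero.mpr hgne
          field_simp
          linarith
        have hxp : x p.1 k0 = x p.2 k0 := by
          rw [hgp] at hp2
          linarith
        refine Finset.mem_erase.mpr ⟨?_, ?_⟩
        · intro hpij
          rw [hpij] at hgp
          exact hgij hgp
        · rw [hbad, Finset.mem_filter]
          exact ⟨Finset.mem_univ _, hp1, hxp⟩
      have hij_mem : (i, j) ∈ bad := by
        rw [hbad, Finset.mem_filter]
        exact ⟨Finset.mem_univ _, hne, heq⟩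
      have hcard' : ((Finset.univ : Finset (Fin N × Fin N)).filter
          (fun p => p.1 ≠ p.2 ∧ y p.1 k0 = y p.2 k0)).card ≤ n := by
        calc _ ≤ (bad.erase (i, j)).card := Finset.card_le_card hsub
        _ = bad.card - 1 := Finset.card_erase_of_mem hij_mem
        _ ≤ n := by omega
      obtain ⟨y', hry', hinj'⟩ := IH y hyinj hcard'
      exact ⟨y', Relation.ReflTransGen.head hstep hry', hinj'⟩

lemma reach_to_canonical {d N : ℕ} (hd : 2 ≤ d) (x : Fin N → E d)
    (hx : Function.Injective x) :
    Reach x (fun i => EuclideanSpace.single (⟨1, by omega⟩ : Fin d) ((i : ℕ) + 1 : ℝ)) := by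
  set k0 : Fin d := ⟨0, by omega⟩ with hk0
  set k1 : Fin d := ⟨1, by omega⟩ with hk1
  have hk01 : k0 ≠ k1 := by simp [hk0, hk1, Fin.ext_iff]
  obtain ⟨y, hry, hyinj⟩ := reach_separate k0 _ x hx le_rfl
  set u : Fin N → E d := fun i =>
    EuclideanSpace.single k0 (y i k0) + EuclideanSpace.single k1 ((i : ℕ) + 1 : ℝ) with hu
  set q : Fin N → E d := fun i => EuclideanSpace.single k1 ((i : ℕ) + 1 : ℝ) with hq
  have huk0 : ∀ i, u i k0 = y i k0 := by
    intro i
    have h1 : u i k0 = (EuclideanSpace.single k0 (y i k0)) k0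
        + (EuclideanSpace.single k1 ((i : ℕ) + 1 : ℝ)) k0 := rfl
    rw [h1, EuclideanSpace.single_apply, EuclideanSpace.single_apply,
      if_pos rfl, if_neg hk01]
    ring
  have huk1 : ∀ i, u i k1 = (i : ℕ) + 1 := by
    intro i
    have h1 : u i k1 = (EuclideanSpace.single k0 (y i k0)) k1
        + (EuclideanSpace.single k1 ((i : ℕ) + 1 : ℝ)) k1 := rfl
    rw [h1, EuclideanSpace.single_apply, EuclideanSpace.single_apply,
      if_pos rfl, if_neg (Ne.symm hk01)]
    ring
  have hqk1 : ∀ i : Fin N, q i k1 = (i : ℕ) + 1 := by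
    intro i
    have h1 : q i k1 = (EuclideanSpace.single k1 ((i : ℕ) + 1 : ℝ)) k1 := rfl
    rw [h1, EuclideanSpace.single_apply, if_pos rfl]
  have hnatinj : Function.Injective (fun i : Fin N => ((i : ℕ) : ℝ) + 1) := by
    intro i j h
    simp only [add_left_inj, Nat.cast_inj] at h
    exact Fin.val_injective h
  have huinj : Function.Injective (fun i => u i k0) := by
    have : (fun i => u i k0) = fun i => y i k0 := funext huk0
    rw [this]
    exact hyinj
  have hqinj : Function.Injective (fun i => q i k1) := by
    have : (fun i => q i k1) = fun i : Fin N => ((i : ℕ) : ℝ) + 1 := funext hqk1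
    rw [this]
    exact hnatinj
  have hr2 : Reach y u := by
    refine reach_place k0 u huinj Finset.univ y (fun i => (huk0 i).symm) ?_ ?_
    · intro i hi
      exact absurd (Finset.mem_univ i) hi
    · intro i _ j hj
      exact absurd (Finset.mem_univ j) hj
  have hr3 : Reach u q := by
    refine reach_place k1 q hqinj Finset.univ u (fun i => by rw [huk1 i, hqk1 i]) ?_ ?_
    · intro i hi
      exact absurd (Finset.mem_univ i) hi
    · intro i _ j hj
      exact absurd (Finset.mem_univ j) hj
  exact (hry.trans hr2).trans hr3

lemma reach_main {d N : ℕ} (hd : 2 ≤ d) (x z : Fin N → E d)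
    (hx : Function.Injective x) (hz : Function.Injective z) : Reach x z :=
  (reach_to_canonical hd x hx).trans (reach_symm (reach_to_canonical hd z hz))

end NODEAux

/-- **Exact simultaneous control** (Theorem 2 of the paper).
Given pairwise distinct initial points and pairwise distinct targets in `ℝ^d`
(`d ≥ 2`), there are piecewise constant controls whose neural-ODE flow drives
each initial point exactly onto its target at time `T`. -/
theorem exact_simultaneous_control
    (d N : ℕ) (hd : 2 ≤ d) (T : ℝ) (hT : 0 < T)
    (x z : Fin N → EuclideanSpace ℝ (Fin d))
    (hx : Function.Injective x) (hz : Function.Injective z) :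
    ∃ (A W : ℝ → Matrix (Fin d) (Fin d) ℝ) (b : ℝ → EuclideanSpace ℝ (Fin d))
      (S : Finset ℝ),
      PCOn A T S ∧ PCOn W T S ∧ PCOn b T S ∧
      ∃ X : Fin N → ℝ → EuclideanSpace ℝ (Fin d),
        (∀ i, SolvesNODE A W b T S (X i)) ∧
        (∀ i, X i 0 = x i) ∧
        (∀ i, X i T = z i) := by
  obtain ⟨A, W, bb, S, X, hA, hW, hb, hC, hD, h0, hT'⟩ :=
    NODEAux.GReal_of_reach (NODEAux.reach_main hd x z hx hz) 0 T hT
  exact ⟨A, W, bb, S, hA, hW, hb, X, fun i => ⟨(hC i).continuousOn, hD i⟩, h0, hT'⟩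
end
end

section
/- Let d ≥ 2 and T > 0. Let {x_i}_{i=1}^N ⊂ ℝ^d be pairwise distinct initial points and {z_i}_{i=1}^N ⊂ ℝ^d be arbitrary (not necessarily distinct) target points. Then for every ε > 0 there exist piecewise constant controls A, W : [0,T] → ℝ^{d×d} and b : [0,T] → ℝ^d such that the flow of the Neural ODE satisfies |φ_T(x_i; A, W, b) − z_i| ≤ ε for every i ∈ {1,…,N}. -/
open MeasureTheory Set

noncomputable section

namespace ApxCtrl


abbrev E (d : ℕ) := EuclideanSpace ℝ (Fin d)

def dotp {d : ℕ} (a x : E d) : ℝ := ∑ k, a k * x k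

variable {d : ℕ}

lemma dotp_add_right (a x y : E d) : dotp a (x + y) = dotp a x + dotp a y := by
  simp [dotp, PiLp.add_apply, mul_add, Finset.sum_add_distrib]

lemma dotp_smul_right (a : E d) (r : ℝ) (x : E d) : dotp a (r • x) = r * dotp a x := by
  simp only [dotp, PiLp.smul_apply, smul_eq_mul, Finset.mul_sum]
  congr 1; funext k; ring

lemma dotp_sub_right (a x y : E d) : dotp a (x - y) = dotp a x - dotp a y := by
  simp [dotp, PiLp.sub_apply, mul_sub, Finset.sum_sub_distrib]

lemma dotp_self_pos {a : E d} (ha : a ≠ 0) : 0 < dotp a a := by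
  have h : dotp a a = ∑ k, (a k)^2 := by simp [dotp, sq]
  rw [h]
  have hnn : ∀ k ∈ Finset.univ, (0:ℝ) ≤ (a k)^2 := fun k _ => sq_nonneg _
  rcases lt_or_eq_of_le (Finset.sum_nonneg hnn) with h' | h'
  · exact h'
  · exfalso
    apply ha
    ext k
    have hz := (Finset.sum_eq_zero_iff_of_nonneg hnn).mp h'.symm k (Finset.mem_univ k)
    have : a k = 0 := by nlinarith [hz]
    simpa using this

/-- Field building blocks -/
def Amat (i0 i1 : Fin d) (n : E d) : Matrix (Fin d) (Fin d) ℝ :=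
  fun i j => if i = i0 ∨ i = i1 then n j else 0

def bvec (i0 i1 : Fin d) (α β : ℝ) : E d :=
  WithLp.toLp 2 (fun k => if k = i0 then -α else if k = i1 then -β else 0)

def Wmat (i0 i1 : Fin d) (w : E d) : Matrix (Fin d) (Fin d) ℝ :=
  fun i j => if j = i0 then w i else if j = i1 then -(w i) else 0

lemma field_eval {i0 i1 : Fin d} (h01 : i0 ≠ i1) (n w : E d) (α β : ℝ) (x : E d) :
    mvec (Wmat i0 i1 w) (reluVec (mvec (Amat i0 i1 n) x + bvec i0 i1 α β))
      = (max (dotp n x - α) 0 - max (dotp n x - β) 0) • w := by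
  set L := dotp n x with hL
  have hA : ∀ i, mvec (Amat i0 i1 n) x i = if i = i0 ∨ i = i1 then L else 0 := by
    intro i
    simp only [mvec, Amat]
    by_cases h : i = i0 ∨ i = i1 <;> simp [h, dotp, hL]
  set y := reluVec (mvec (Amat i0 i1 n) x + bvec i0 i1 α β) with hy
  have hy0 : y i0 = max (L - α) 0 := by
    simp only [hy, reluVec, PiLp.add_apply, hA, bvec]
    simp [h01, sub_eq_add_neg]
  have hy1 : y i1 = max (L - β) 0 := by
    simp only [hy, reluVec, PiLp.add_apply, hA, bvec]
    simp [h01.symm, sub_eq_add_neg]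
  have hyo : ∀ j, j ≠ i0 → j ≠ i1 → y j = 0 := by
    intro j hj0 hj1
    simp only [hy, reluVec, PiLp.add_apply, hA, bvec]
    simp [hj0, hj1]
  ext i
  have : mvec (Wmat i0 i1 w) y i = ∑ j, ((if j = i0 then w i * y j else 0)
      + (if j = i1 then -(w i) * y j else 0)) := by
    simp only [mvec, Wmat, PiLp.toLp_apply]
    congr 1; funext j
    by_cases hj0 : j = i0
    · simp [hj0, h01]
    · by_cases hj1 : j = i1
      · simp [hj1, Ne.symm h01]
      · simp [hj0, hj1]
  rw [this, Finset.sum_add_distrib, Finset.sum_ite_eq' Finset.univ i0,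
    Finset.sum_ite_eq' Finset.univ i1]
  simp only [Finset.mem_univ, if_true, hy0, hy1]
  simp [PiLp.smul_apply, smul_eq_mul]
  ring

lemma field_frozen {i0 i1 : Fin d} (h01 : i0 ≠ i1) {n : E d} (w : E d) {α : ℝ} (β : ℝ) {x : E d}
    (hβ : α ≤ β) (h : dotp n x ≤ α) :
    mvec (Wmat i0 i1 w) (reluVec (mvec (Amat i0 i1 n) x + bvec i0 i1 α β)) = 0 := by
  rw [field_eval h01]
  have h1 : max (dotp n x - α) 0 = 0 := max_eq_right (by linarith)
  have h2 : max (dotp n x - β) 0 = 0 := max_eq_right (by linarith)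
  rw [h1, h2]; simp

lemma field_moving {i0 i1 : Fin d} (h01 : i0 ≠ i1) {n : E d} (w : E d) {α β : ℝ} {x : E d}
    (hβ : α ≤ β) (h : β ≤ dotp n x) :
    mvec (Wmat i0 i1 w) (reluVec (mvec (Amat i0 i1 n) x + bvec i0 i1 α β)) = (β - α) • w := by
  rw [field_eval h01]
  have h1 : max (dotp n x - α) 0 = dotp n x - α := max_eq_left (by linarith)
  have h2 : max (dotp n x - β) 0 = dotp n x - β := max_eq_left (by linarith)
  rw [h1, h2]
  congr 1; ring


lemma dotp_comm (a b : E d) : dotp a b = dotp b a := by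
  unfold dotp; congr 1; funext k; ring

lemma dotp_add_left (a b x : E d) : dotp (a + b) x = dotp a x + dotp b x := by
  rw [dotp_comm, dotp_add_right, dotp_comm x a, dotp_comm x b]

lemma dotp_smul_left (r : ℝ) (a x : E d) : dotp (r • a) x = r * dotp a x := by
  rw [dotp_comm, dotp_smul_right, dotp_comm x a]

lemma dotp_zero_right (a : E d) : dotp a 0 = 0 := by
  unfold dotp
  have : ∀ k, (0 : E d) k = 0 := fun k => rfl
  simp [this]

lemma dotp_sum_right {ι : Type*} (a : E d) (s : Finset ι) (f : ι → E d) :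
    dotp a (∑ i ∈ s, f i) = ∑ i ∈ s, dotp a (f i) := by
  classical
  induction s using Finset.induction_on with
  | empty => simp [dotp_zero_right]
  | @insert i s hi ih =>
    rw [Finset.sum_insert hi, Finset.sum_insert hi, dotp_add_right, ih]

lemma exists_sep (v : Finset (E d)) (hv : ∀ w ∈ v, w ≠ 0) :
    ∃ a : E d, ∀ w ∈ v, dotp a w ≠ 0 := by
  classical
  induction v using Finset.induction_on with
  | empty => exact ⟨0, by simp⟩
  | @insert w₀ v hw₀ ih =>
    rcases ih (fun w hw => hv w (Finset.mem_insert_of_mem hw)) with ⟨a, ha⟩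
    have hw₀ne : w₀ ≠ 0 := hv w₀ (Finset.mem_insert_self _ _)
    have hw₀pos : 0 < dotp w₀ w₀ := dotp_self_pos hw₀ne
    by_cases h0 : dotp a w₀ ≠ 0
    · exact ⟨a, fun w hw => (Finset.mem_insert.mp hw).elim (fun h => h ▸ h0) (ha w)⟩
    · push_neg at h0
      -- perturb: a + ε • w₀
      set F : Finset ℝ := (v.image (fun w => -(dotp a w) / dotp w₀ w)) ∪ {0} with hF
      obtain ⟨ε, hε⟩ := Infinite.exists_notMem_finset F
      refine ⟨a + ε • w₀, ?_⟩
      have hεne : ε ≠ 0 := by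
        intro h; apply hε; rw [hF, h]; simp
      intro w hw
      rcases Finset.mem_insert.mp hw with rfl | hw'
      · rw [dotp_add_left, dotp_smul_left, h0]
        simp only [zero_add]
        exact mul_ne_zero hεne (ne_of_gt hw₀pos)
      · rw [dotp_add_left, dotp_smul_left]
        intro hcon
        by_cases hz : dotp w₀ w = 0
        · rw [hz] at hcon
          exact ha w hw' (by linarith [hcon])
        · apply hε
          rw [hF]
          apply Finset.mem_union_left
          apply Finset.mem_image.mpr
          refine ⟨w, hw', ?_⟩
          field_simp
          linarith [hcon]

lemma exists_perp (hd : 2 ≤ d) {a : E d} (ha : a ≠ 0) :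
    ∃ u : E d, dotp a u = 0 ∧ u ≠ 0 := by
  classical
  have hk : ∃ k, a k ≠ 0 := by
    by_contra h
    push_neg at h
    apply ha; ext k; simpa using h k
  obtain ⟨k, hk⟩ := hk
  set m : Fin d := if k = ⟨0, by omega⟩ then ⟨1, by omega⟩ else ⟨0, by omega⟩ with hm
  have hmk : m ≠ k := by
    rw [hm]
    by_cases h : k = ⟨0, by omega⟩
    · rw [if_pos h, h]
      intro hc; exact absurd (congrArg Fin.val hc) (by simp)
    · rw [if_neg h]
      exact fun hc => h hc.symm
  set u : E d := (WithLp.toLp 2 (fun r => if r = m then a k else if r = k then -(a m) else 0) : E d) with hu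
  refine ⟨u, ?_, ?_⟩
  · unfold dotp
    have : ∀ r, a r * u r = (if r = m then a m * a k else 0) + (if r = k then -(a k * a m) else 0) := by
      intro r
      rw [hu]
      by_cases h1 : r = m
      · subst h1; simp [hmk, mul_comm]
      · by_cases h2 : r = k
        · subst h2; simp [h1, Ne.symm h1, mul_comm]
        · simp [h1, h2]
    rw [Finset.sum_congr rfl (fun r _ => this r), Finset.sum_add_distrib,
      Finset.sum_ite_eq' Finset.univ m, Finset.sum_ite_eq' Finset.univ k]
    simp; ring
  · intro h
    have : u m = 0 := by rw [h]; rfl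
    rw [hu] at this
    simp at this
    exact hk this


def traj (P0 : E d) (V : ℕ → E d) (K : ℕ) (Δ : ℝ) (t : ℝ) : E d :=
  P0 + ∑ k ∈ Finset.range K, (min t ((k+1)*Δ) - min t (k*Δ)) • V k

lemma traj_continuous (P0 : E d) (V : ℕ → E d) (K : ℕ) (Δ : ℝ) :
    Continuous (traj P0 V K Δ) := by
  apply continuous_const.add
  apply continuous_finset_sum
  intro k _
  exact ((continuous_id.min continuous_const).sub (continuous_id.min continuous_const)).smul
    continuous_const

lemma traj_zero (P0 : E d) (V : ℕ → E d) (K : ℕ) {Δ : ℝ} (hΔ : 0 ≤ Δ) :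
    traj P0 V K Δ 0 = P0 := by
  unfold traj
  have : ∀ k ∈ Finset.range K, (min 0 ((k+1)*Δ) - min 0 ((k:ℝ)*Δ)) • V k = 0 := by
    intro k _
    rw [min_eq_left (by positivity), min_eq_left (by positivity)]
    simp
  rw [Finset.sum_congr rfl this]
  simp

lemma traj_on_interval (P0 : E d) (V : ℕ → E d) (K : ℕ) {Δ : ℝ} (hΔ : 0 < Δ)
    {m : ℕ} (hm : m < K) {t : ℝ} (ht1 : (m:ℝ)*Δ ≤ t) (ht2 : t ≤ ((m:ℝ)+1)*Δ) :
    traj P0 V K Δ t = (P0 + ∑ k ∈ Finset.range m, Δ • V k) + (t - (m:ℝ)*Δ) • V m := by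
  unfold traj
  have hK : K = m + ((K - m - 1) + 1) := by omega
  rw [hK, Finset.sum_range_add]
  have h1 : ∀ k ∈ Finset.range m, (min t ((k+1)*Δ) - min t ((k:ℝ)*Δ)) • V k = Δ • V k := by
    intro k hk
    rw [Finset.mem_range] at hk
    have hk1 : ((k:ℝ)+1)*Δ ≤ t := le_trans (by
      have : ((k:ℝ)+1) ≤ (m:ℝ) := by exact_mod_cast Nat.succ_le_of_lt hk
      nlinarith) ht1
    have hk0 : (k:ℝ)*Δ ≤ t := le_trans (by nlinarith [hk1]) le_rfl
    rw [min_eq_right hk1, min_eq_right (by nlinarith)]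
    congr 1; ring
  rw [Finset.sum_congr rfl h1]
  rw [Finset.sum_range_succ']
  have h2 : ∀ k ∈ Finset.range (K - m - 1),
      (min t ((((m + (k+1) : ℕ):ℝ)+1)*Δ) - min t (((m + (k+1) : ℕ):ℝ)*Δ)) • V (m + (k+1)) = 0 := by
    intro k _
    have hle : t ≤ ((m + (k+1) : ℕ):ℝ)*Δ := by
      push_cast
      nlinarith [ht2]
    rw [min_eq_left hle, min_eq_left (by push_cast; nlinarith [ht2])]
    simp
  rw [Finset.sum_congr rfl h2]
  push_cast
  rw [min_eq_left (by push_cast at ht2 ⊢; linarith), min_eq_right (by push_cast; linarith)]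
  simp
  exact (add_assoc _ _ _).symm


lemma traj_T (P0 : E d) (V : ℕ → E d) (K : ℕ) {Δ : ℝ} (hΔ : 0 < Δ) :
    traj P0 V K Δ ((K:ℝ)*Δ) = P0 + ∑ k ∈ Finset.range K, Δ • V k := by
  unfold traj
  congr 1
  apply Finset.sum_congr rfl
  intro k hk
  rw [Finset.mem_range] at hk
  have h1 : ((k:ℝ)+1)*Δ ≤ (K:ℝ)*Δ := by
    have : ((k:ℝ)+1) ≤ (K:ℝ) := by exact_mod_cast Nat.succ_le_of_lt hk
    nlinarith
  rw [min_eq_right h1, min_eq_right (by nlinarith)]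
  congr 1; ring

/-- switching index -/
def idx (Δ t : ℝ) : ℕ := ⌊t/Δ⌋₊

lemma pcOn_pw {α : Type*} (f : ℕ → α) (K : ℕ) {Δ : ℝ} (hΔ : 0 < Δ) :
    PCOn (fun t => f (idx Δ t)) ((K:ℝ)*Δ)
      ((Finset.range (K+1)).image (fun k : ℕ => (k:ℝ)*Δ)) := by
  intro t₁ ht₁ t₂ ht₂ hle hS
  simp only
  congr 1
  unfold idx
  by_contra hne
  have hmono : ⌊t₁/Δ⌋₊ ≤ ⌊t₂/Δ⌋₊ := Nat.floor_le_floor (by gcongr)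
  have hlt : ⌊t₁/Δ⌋₊ < ⌊t₂/Δ⌋₊ := lt_of_le_of_ne hmono hne
  set m₂ := ⌊t₂/Δ⌋₊ with hm₂
  have hm₂K : m₂ ≤ K := by
    have : t₂/Δ ≤ (K:ℝ) := by
      rw [div_le_iff₀ hΔ]; exact ht₂.2
    calc m₂ ≤ ⌊(K:ℝ)⌋₊ := Nat.floor_le_floor this
    _ = K := Nat.floor_natCast K
  have hmem : ((m₂:ℝ)*Δ) ∈ (Finset.range (K+1)).image (fun k : ℕ => (k:ℝ)*Δ) := by
    apply Finset.mem_image_of_mem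
    rw [Finset.mem_range]; omega
  apply hS _ hmem
  constructor
  · -- t₁ < m₂ * Δ
    have h1 : t₁ < (⌊t₁/Δ⌋₊ + 1 : ℝ)*Δ := by
      have := Nat.lt_floor_add_one (t₁/Δ)
      calc t₁ = (t₁/Δ)*Δ := by field_simp
      _ < (⌊t₁/Δ⌋₊ + 1 : ℝ)*Δ := by
        apply mul_lt_mul_of_pos_right _ hΔ
        exact_mod_cast this
    calc t₁ < (⌊t₁/Δ⌋₊ + 1 : ℝ)*Δ := h1
    _ ≤ (m₂:ℝ)*Δ := by
      apply mul_le_mul_of_nonneg_right _ hΔ.le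
      exact_mod_cast hlt
  · -- m₂ Δ ≤ t₂
    have h2 : (m₂:ℝ) ≤ t₂/Δ := Nat.floor_le (div_nonneg ht₂.1 hΔ.le)
    calc (m₂:ℝ)*Δ ≤ (t₂/Δ)*Δ := mul_le_mul_of_nonneg_right h2 hΔ.le
    _ = t₂ := by field_simp


lemma solves_pw (An Wn : ℕ → Matrix (Fin d) (Fin d) ℝ) (bn : ℕ → E d)
    (K : ℕ) {Δ : ℝ} (hΔ : 0 < Δ) (P0 : E d) (V : ℕ → E d)
    (hfield : ∀ m, m < K → ∀ s ∈ Set.Icc (0:ℝ) Δ,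
      mvec (Wn m) (reluVec (mvec (An m)
        ((P0 + ∑ k ∈ Finset.range m, Δ • V k) + s • V m) + bn m)) = V m) :
    SolvesNODE (fun t => An (idx Δ t)) (fun t => Wn (idx Δ t)) (fun t => bn (idx Δ t))
      ((K:ℝ)*Δ) ((Finset.range (K+1)).image (fun k : ℕ => (k:ℝ)*Δ)) (traj P0 V K Δ) := by
  constructor
  · exact (traj_continuous P0 V K Δ).continuousOn
  · intro t ht hS
    have hne : ∀ k : ℕ, k ≤ K → t ≠ (k:ℝ)*Δ := by
      intro k hk h
      apply hS
      rw [h]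
      exact Finset.mem_image_of_mem _ (Finset.mem_range.mpr (by omega))
    have ht0 : 0 < t := by
      rcases lt_or_eq_of_le ht.1 with h | h
      · exact h
      · exact absurd h.symm (by simpa using hne 0 (by omega))
    have htT : t < (K:ℝ)*Δ := lt_of_le_of_ne ht.2 (hne K le_rfl)
    set m := ⌊t/Δ⌋₊ with hm
    have hmK : m < K := by
      have h1 : t/Δ < (K:ℕ) := by rw [div_lt_iff₀ hΔ]; exact_mod_cast htT
      exact (Nat.floor_lt (div_nonneg ht.1 hΔ.le)).mpr h1
    have hlow : (m:ℝ)*Δ ≤ t := by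
      have h1 : (m:ℝ) ≤ t/Δ := Nat.floor_le (div_nonneg ht.1 hΔ.le)
      calc (m:ℝ)*Δ ≤ (t/Δ)*Δ := mul_le_mul_of_nonneg_right h1 hΔ.le
      _ = t := by field_simp
    have hlow' : (m:ℝ)*Δ < t := lt_of_le_of_ne hlow (fun h => hne m (by omega) h.symm)
    have hhigh : t < ((m:ℝ)+1)*Δ := by
      have h1 := Nat.lt_floor_add_one (t/Δ)
      calc t = (t/Δ)*Δ := by field_simp
      _ < ((m:ℝ)+1)*Δ := by
        apply mul_lt_mul_of_pos_right _ hΔ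
        exact_mod_cast h1
    have hloc : ∀ s ∈ Set.Ioo ((m:ℝ)*Δ) (((m:ℝ)+1)*Δ),
        traj P0 V K Δ s = (P0 + ∑ k ∈ Finset.range m, Δ • V k) + (s - (m:ℝ)*Δ) • V m :=
      fun s hs => traj_on_interval P0 V K hΔ hmK hs.1.le hs.2.le
    have haff : HasDerivAt (fun s : ℝ =>
        (P0 + ∑ k ∈ Finset.range m, Δ • V k) + (s - (m:ℝ)*Δ) • V m) (V m) t := by
      have h1 : HasDerivAt (fun s : ℝ => s - (m:ℝ)*Δ) 1 t := (hasDerivAt_id t).sub_const _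
      have h2 := h1.smul_const (V m)
      simpa using h2.const_add (P0 + ∑ k ∈ Finset.range m, Δ • V k)
    have hev : traj P0 V K Δ =ᶠ[nhds t] (fun s : ℝ =>
        (P0 + ∑ k ∈ Finset.range m, Δ • V k) + (s - (m:ℝ)*Δ) • V m) := by
      filter_upwards [Ioo_mem_nhds hlow' hhigh] with s hs
      exact hloc s hs
    have hd : HasDerivAt (traj P0 V K Δ) (V m) t := haff.congr_of_eventuallyEq hev
    have hXt : traj P0 V K Δ t = (P0 + ∑ k ∈ Finset.range m, Δ • V k) + (t - (m:ℝ)*Δ) • V m :=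
      hloc t ⟨hlow', hhigh⟩
    have hidx : idx Δ t = m := rfl
    simp only [hidx, hXt]
    rw [hfield m hmK (t - (m:ℝ)*Δ) ⟨by linarith, by nlinarith⟩]
    exact hd.hasDerivWithinAt




/-- Gap lemma. -/
lemma exists_gap {N : ℕ} (c : Fin N → ℝ) (hc : Function.Injective c) :
    ∃ η > (0:ℝ), ∀ i j, i ≠ j → 2*η ≤ |c i - c j| := by
  classical
  set F : Finset ℝ := (Finset.univ.offDiag).image (fun p : Fin N × Fin N => |c p.1 - c p.2|)
  rcases F.eq_empty_or_nonempty with hF | hF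
  · refine ⟨1, one_pos, fun i j hij => ?_⟩
    exfalso
    have hm : ((i, j) : Fin N × Fin N) ∈ Finset.univ.offDiag :=
      Finset.mem_offDiag.mpr ⟨Finset.mem_univ _, Finset.mem_univ _, hij⟩
    have : |c i - c j| ∈ F := Finset.mem_image_of_mem _ hm
    simp [hF] at this
  · refine ⟨F.min' hF / 2, ?_, fun i j hij => ?_⟩
    · have hmem := F.min'_mem hF
      simp only [F, Finset.mem_image] at hmem
      rcases hmem with ⟨p, hp, hpe⟩
      have hne : p.1 ≠ p.2 := (Finset.mem_offDiag.mp hp).2.2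
      have : 0 < |c p.1 - c p.2| := abs_pos.mpr (sub_ne_zero.mpr (fun h => hne (hc h)))
      rw [hpe] at this
      linarith
    · have hm2 : ((i, j) : Fin N × Fin N) ∈ Finset.univ.offDiag :=
        Finset.mem_offDiag.mpr ⟨Finset.mem_univ _, Finset.mem_univ _, hij⟩
      have hmem : |c i - c j| ∈ F := Finset.mem_image_of_mem _ hm2
      have := F.min'_le _ hmem
      linarith

/-- Telescoping: auxiliary defs. -/
def Bset {N : ℕ} (κ : Fin N → ℝ) (i : Fin N) : Finset (Fin N) :=
  Finset.univ.filter (fun j => κ j < κ i)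

def argmaxB {N : ℕ} [Nonempty (Fin N)] (κ : Fin N → ℝ) (i : Fin N)
    (h : (Bset κ i).Nonempty) : Fin N :=
  Function.invFun κ (((Bset κ i).image κ).max' (h.image κ))

def rho {N : ℕ} {M : Type*} [AddCommGroup M] [Nonempty (Fin N)]
    (κ : Fin N → ℝ) (D : Fin N → M) (i : Fin N) : M :=
  if h : (Bset κ i).Nonempty then D i - D (argmaxB κ i h) else D i

lemma argmaxB_spec {N : ℕ} [Nonempty (Fin N)] {κ : Fin N → ℝ}
    (hκ : Function.Injective κ) (i : Fin N) (h : (Bset κ i).Nonempty) :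
    argmaxB κ i h ∈ Bset κ i ∧ ∀ j ∈ Bset κ i, κ j ≤ κ (argmaxB κ i h) := by
  have hmax := ((Bset κ i).image κ).max'_mem (h.image κ)
  rcases Finset.mem_image.mp hmax with ⟨j, hj, hje⟩
  have hinv : argmaxB κ i h = j := by
    rw [argmaxB, ← hje]
    exact Function.leftInverse_invFun hκ j
  constructor
  · rw [hinv]; exact hj
  · intro j' hj'
    rw [hinv, hje]
    exact Finset.le_max' _ _ (Finset.mem_image_of_mem _ hj')

/-- Telescoping lemma. -/
lemma telescope {N : ℕ} {M : Type*} [AddCommGroup M] (κ : Fin N → ℝ)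
    (hκ : Function.Injective κ) (D : Fin N → M) :
    ∃ ρ : Fin N → M,
      (∀ i, ∑ j ∈ Finset.univ.filter (fun j => κ j ≤ κ i), ρ j = D i) ∧
      (∀ j, (∃ k, ρ j = D k) ∨ (∃ k l, ρ j = D k - D l)) := by
  classical
  rcases Nat.eq_zero_or_pos N with rfl | hN
  · exact ⟨D, fun i => i.elim0, fun j => j.elim0⟩
  have : Nonempty (Fin N) := ⟨⟨0, hN⟩⟩
  refine ⟨rho κ D, ?_, ?_⟩
  swap
  · intro j
    by_cases h : (Bset κ j).Nonempty
    · right; exact ⟨j, argmaxB κ j h, by rw [rho]; simp [h]⟩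
    · left; exact ⟨j, by rw [rho]; simp [h]⟩
  · suffices H : ∀ n (i : Fin N), (Bset κ i).card = n →
        ∑ j ∈ Finset.univ.filter (fun j => κ j ≤ κ i), rho κ D j = D i by
      intro i; exact H _ i rfl
    intro n
    induction n using Nat.strong_induction_on with
    | _ n ih =>
      intro i hcard
      by_cases h : (Bset κ i).Nonempty
      · set j := argmaxB κ i h with hj
        have hjprop := argmaxB_spec hκ i h
        have hκji : κ j < κ i := by
          have := hjprop.1
          rw [Bset] at this
          simpa using (Finset.mem_filter.mp this).2
        have hLij : Finset.univ.filter (fun k => κ k ≤ κ i)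
            = insert i (Finset.univ.filter (fun k => κ k ≤ κ j)) := by
          ext k
          simp only [Finset.mem_filter, Finset.mem_univ, true_and, Finset.mem_insert]
          constructor
          · intro hk
            rcases lt_or_eq_of_le hk with hk' | hk'
            · right
              have := hjprop.2 k (by rw [Bset]; simp [hk'])
              exact this
            · left; exact hκ hk'
          · rintro (rfl | hk)
            · exact le_rfl
            · exact hk.trans hκji.le
        have hinot : i ∉ Finset.univ.filter (fun k => κ k ≤ κ j) := by
          simp only [Finset.mem_filter, Finset.mem_univ, true_and]
          exact not_le.mpr hκji
        have hBsub : Bset κ j ⊂ Bset κ i := by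
          constructor
          · intro k hk
            rw [Bset] at hk ⊢
            simp only [Finset.mem_filter, Finset.mem_univ, true_and] at *
            exact hk.trans hκji
          · intro hsub
            have h2 : j ∈ Bset κ j := hsub (by rw [Bset]; simp [hκji])
            rw [Bset] at h2
            simp at h2
        have hcardlt : (Bset κ j).card < n := by
          rw [← hcard]
          exact Finset.card_lt_card hBsub
        rw [hLij, Finset.sum_insert hinot, ih _ hcardlt j rfl]
        have hρi : rho κ D i = D i - D j := by rw [rho]; simp [h, hj]
        rw [hρi]
        abel
      · have hL : Finset.univ.filter (fun k => κ k ≤ κ i) = {i} := by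
          ext k
          simp only [Finset.mem_filter, Finset.mem_univ, true_and, Finset.mem_singleton]
          constructor
          · intro hk
            rcases lt_or_eq_of_le hk with hk' | hk'
            · exfalso; exact h ⟨k, by rw [Bset]; simp [hk']⟩
            · exact hκ hk'
          · rintro rfl; exact le_rfl
        rw [hL, Finset.sum_singleton, rho]
        simp [h]


end ApxCtrl

open ApxCtrl

set_option maxHeartbeats 2000000

/-- **Approximate simultaneous control.**
Given pairwise distinct initial points and arbitrary (not necessarily distinct)
targets in `ℝ^d` (`d ≥ 2`), for every `ε > 0` there are piecewise constant
controls whose neural-ODE flow drives each initial point within distance `ε` of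
its target at time `T`. -/
theorem approximate_simultaneous_control
    (d N : ℕ) (hd : 2 ≤ d) (T : ℝ) (hT : 0 < T)
    (x z : Fin N → EuclideanSpace ℝ (Fin d))
    (hx : Function.Injective x)
    (ε : ℝ) (hε : 0 < ε) :
    ∃ (A W : ℝ → Matrix (Fin d) (Fin d) ℝ) (b : ℝ → EuclideanSpace ℝ (Fin d))
      (S : Finset ℝ),
      PCOn A T S ∧ PCOn W T S ∧ PCOn b T S ∧
      ∃ X : Fin N → ℝ → EuclideanSpace ℝ (Fin d),
        (∀ i, SolvesNODE A W b T S (X i)) ∧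
        (∀ i, X i 0 = x i) ∧
        (∀ i, ‖X i T - z i‖ ≤ ε) := by
  classical
  rcases Nat.eq_zero_or_pos N with rfl | hN
  · refine ⟨fun _ => 0, fun _ => 0, fun _ => 0, ∅, ?_, ?_, ?_,
      fun i => i.elim0, ?_, ?_, ?_⟩
    · intro t₁ _ t₂ _ _ _; rfl
    · intro t₁ _ t₂ _ _ _; rfl
    · intro t₁ _ t₂ _ _ _; rfl
    · intro i; exact i.elim0
    · intro i; exact i.elim0
    · intro i; exact i.elim0
  -- distinguished coordinates
  set i0 : Fin d := ⟨0, by omega⟩ with hi0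
  set i1 : Fin d := ⟨1, by omega⟩ with hi1
  have h01 : i0 ≠ i1 := by
    intro h; exact absurd (congrArg Fin.val h) (by simp [hi0, hi1])
  -- generic direction a
  have hex : ∃ a : E d, a ≠ 0 ∧ Function.Injective (fun i => dotp a (x i)) := by
    obtain ⟨a₀, ha₀⟩ := exists_sep
      ((Finset.univ.offDiag).image (fun p : Fin N × Fin N => x p.1 - x p.2))
      (by
        intro w hw
        rcases Finset.mem_image.mp hw with ⟨p, hp, rfl⟩
        have hne := (Finset.mem_offDiag.mp hp).2.2
        exact sub_ne_zero.mpr (fun h => hne (hx h)))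
    by_cases haz : a₀ = 0
    · -- then no pairs, so Fin N is subsingleton
      have hsub : ∀ i j : Fin N, i = j := by
        intro i j; by_contra hij
        have hm : ((i, j) : Fin N × Fin N) ∈ Finset.univ.offDiag :=
          Finset.mem_offDiag.mpr ⟨Finset.mem_univ _, Finset.mem_univ _, hij⟩
        have := ha₀ _ (Finset.mem_image_of_mem _ hm)
        apply this
        rw [haz]
        unfold dotp
        simp
      refine ⟨EuclideanSpace.single i0 1, ?_, fun i j _ => hsub i j⟩
      intro h
      have : (EuclideanSpace.single i0 (1:ℝ)) i0 = 0 := by rw [h]; rfl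
      simp at this
    · refine ⟨a₀, haz, ?_⟩
      intro i j hij
      by_contra hne
      have hm : ((i, j) : Fin N × Fin N) ∈ Finset.univ.offDiag :=
        Finset.mem_offDiag.mpr ⟨Finset.mem_univ _, Finset.mem_univ _, hne⟩
      apply ha₀ _ (Finset.mem_image_of_mem _ hm)
      rw [dotp_sub_right]
      simpa [sub_eq_zero] using hij
  obtain ⟨a, haz, hainj⟩ := hex
  set c : Fin N → ℝ := fun i => dotp a (x i) with hc
  have haa : 0 < dotp a a := dotp_self_pos haz
  obtain ⟨u, hau, hune⟩ := exists_perp hd haz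
  have huu : 0 < dotp u u := dotp_self_pos hune
  have hua : dotp u a = 0 := by rw [dotp_comm]; exact hau
  obtain ⟨ηc, hηc, hgapc⟩ := exists_gap c hainj
  -- ranks
  set rnk : Fin N → ℕ := fun i => (Finset.univ.filter (fun j => c j ≤ c i)).card with hrnkdef
  have hrnk : ∀ i j, c j < c i → rnk j < rnk i := by
    intro i j hij
    apply Finset.card_lt_card
    constructor
    · intro k hk
      simp only [Finset.mem_filter, Finset.mem_univ, true_and] at *
      exact hk.trans hij.le
    · intro hsup
      have : i ∈ Finset.univ.filter (fun k => c k ≤ c j) :=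
        hsup (by simp only [Finset.mem_filter, Finset.mem_univ, true_and]; exact le_rfl)
      simp only [Finset.mem_filter, Finset.mem_univ, true_and] at this
      exact absurd this (not_le.mpr hij)
  have hrnkne : ∀ i j, i ≠ j → (rnk i : ℝ) ≠ (rnk j : ℝ) := by
    intro i j hij
    have hcne : c i ≠ c j := fun h => hij (hainj h)
    rcases lt_or_gt_of_ne hcne with h | h
    · exact fun hcon => absurd (Nat.cast_injective hcon) (Nat.ne_of_lt (hrnk j i h))
    · exact fun hcon => absurd (Nat.cast_injective hcon) (Nat.ne_of_gt (hrnk i j h))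
  -- choice of δ2
  set F2 : Finset ℝ := ((Finset.univ.offDiag).image
    (fun p : Fin N × Fin N =>
      (dotp u (x p.2) - dotp u (x p.1)) / (((rnk p.1 : ℝ) - (rnk p.2 : ℝ)) * dotp u u))) ∪ {0}
    with hF2
  obtain ⟨δ2, hδ2⟩ := Infinite.exists_notMem_finset F2
  set U : Fin N → ℝ := fun i => dotp u (x i) + δ2 * (rnk i : ℝ) * dotp u u with hU
  have hUinj : Function.Injective U := by
    intro i j hij
    by_contra hne
    apply hδ2
    rw [hF2]
    apply Finset.mem_union_left
    apply Finset.mem_image.mpr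
    refine ⟨(i, j), Finset.mem_offDiag.mpr ⟨Finset.mem_univ _, Finset.mem_univ _, hne⟩, ?_⟩
    have hden : ((rnk i : ℝ) - (rnk j : ℝ)) * dotp u u ≠ 0 :=
      mul_ne_zero (sub_ne_zero.mpr (hrnkne i j hne)) (ne_of_gt huu)
    rw [hU] at hij
    simp only at hij
    rw [div_eq_iff hden]
    linarith [hij]
  obtain ⟨ηU, hηU, hgapU⟩ := exists_gap U hUinj
  set p : Fin N → E d := fun i => x i + (δ2 * (rnk i : ℝ)) • u with hp
  have hup : ∀ i, dotp u (p i) = U i := by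
    intro i
    rw [hp]
    simp only
    rw [dotp_add_right, dotp_smul_right, hU]
  have hap : ∀ i, dotp a (p i) = c i := by
    intro i
    rw [hp]
    simp only
    rw [dotp_add_right, dotp_smul_right, hau, hc]
    simp
  -- choice of δ3 and perturbed targets
  set F3 : Finset ℝ := (Finset.univ.offDiag).image
    (fun pp : Fin N × Fin N =>
      (dotp a (z pp.2) - dotp a (z pp.1)) / ((((pp.1 : ℕ) : ℝ) - ((pp.2 : ℕ) : ℝ)) * dotp a a))
    with hF3
  have hbd : (0:ℝ) < ε / ((N:ℝ) * ‖a‖ + 1) := by positivity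
  obtain ⟨δ3, hδ3mem, hδ3F⟩ := (Set.Ioo_infinite hbd).exists_notMem_finset F3
  rw [Set.mem_Ioo] at hδ3mem
  set z' : Fin N → E d := fun i => z i + (δ3 * (((i : ℕ) : ℝ) + 1)) • a with hz'
  have hz'c : ∀ i, ‖z' i - z i‖ ≤ ε := by
    intro i
    rw [hz']
    simp only [add_sub_cancel_left]
    rw [norm_smul]
    simp only [Real.norm_eq_abs]
    have h1 : |δ3 * (((i : ℕ) : ℝ) + 1)| = δ3 * (((i : ℕ) : ℝ) + 1) := by
      apply abs_of_pos
      have : (0:ℝ) < ((i : ℕ) : ℝ) + 1 := by positivity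
      exact mul_pos hδ3mem.1 this
    rw [h1]
    have h2 : (((i : ℕ) : ℝ) + 1) ≤ (N : ℝ) := by
      have := i.isLt
      exact_mod_cast Nat.succ_le_of_lt this
    have hpos1 : (0:ℝ) < (N:ℝ)*‖a‖+1 := by positivity
    have h4 : δ3 * ((N:ℝ)*‖a‖+1) < ε := (lt_div_iff₀ hpos1).mp hδ3mem.2
    have hna : (0:ℝ) ≤ ‖a‖ := norm_nonneg a
    have h3 : δ3 * (((i : ℕ) : ℝ) + 1) * ‖a‖ ≤ δ3 * ((N:ℝ)*‖a‖+1) := by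
      nlinarith [mul_nonneg (mul_nonneg hδ3mem.1.le hna) (sub_nonneg.mpr h2), hδ3mem.1]
    linarith
  set tt : Fin N → ℝ := fun i => dotp a (z' i) with htt
  have httv : ∀ i, tt i = dotp a (z i) + δ3 * (((i : ℕ) : ℝ) + 1) * dotp a a := by
    intro i
    rw [htt, hz']
    simp only
    rw [dotp_add_right, dotp_smul_right]
  have httinj : Function.Injective tt := by
    intro i j hij
    by_contra hne
    apply hδ3F
    rw [hF3]
    apply Finset.mem_image.mpr
    refine ⟨(i, j), Finset.mem_offDiag.mpr ⟨Finset.mem_univ _, Finset.mem_univ _, hne⟩, ?_⟩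
    have hvne : ((i : ℕ) : ℝ) ≠ ((j : ℕ) : ℝ) := by
      exact_mod_cast fun h => hne (Fin.val_injective (by exact_mod_cast h))
    have hden : (((i : ℕ) : ℝ) - ((j : ℕ) : ℝ)) * dotp a a ≠ 0 :=
      mul_ne_zero (sub_ne_zero.mpr hvne) (ne_of_gt haa)
    rw [httv i, httv j] at hij
    field_simp
    linarith [hij]
  obtain ⟨ηt, hηt, hgapt⟩ := exists_gap tt httinj
  set q : Fin N → E d := fun i => z' i + ((U i - dotp u (z' i)) / dotp u u) • u with hq
  have huq : ∀ i, dotp u (q i) = U i := by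
    intro i
    rw [hq]
    simp only
    rw [dotp_add_right, dotp_smul_right, div_mul_cancel₀ _ (ne_of_gt huu)]
    ring
  have haq : ∀ i, dotp a (q i) = tt i := by
    intro i
    rw [hq]
    simp only
    rw [dotp_add_right, dotp_smul_right, hau, htt]
    simp
  -- telescopes
  obtain ⟨ρ₂, hρ₂sum, hρ₂form⟩ := telescope U hUinj (fun i => q i - p i)
  have hρ₂perp : ∀ j, dotp u (ρ₂ j) = 0 := by
    intro j
    have hqp : ∀ k, dotp u (q k - p k) = 0 := by
      intro k; rw [dotp_sub_right, huq, hup, sub_self]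
    rcases hρ₂form j with ⟨k, hk⟩ | ⟨k, l, hkl⟩
    · rw [hk]; exact hqp k
    · rw [hkl, dotp_sub_right, hqp, hqp, sub_self]
  obtain ⟨ρ₃, hρ₃sum, hρ₃form⟩ := telescope tt httinj
    (fun i => ((dotp u (z' i) - U i) / dotp u u) • u)
  have hρ₃a : ∀ j, dotp a (ρ₃ j) = 0 := by
    intro j
    have hD : ∀ k, dotp a (((dotp u (z' k) - U k) / dotp u u) • u) = 0 := by
      intro k; rw [dotp_smul_right, hau, mul_zero]
    rcases hρ₃form j with ⟨k, hk⟩ | ⟨k, l, hkl⟩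
    · rw [hk]; exact hD k
    · rw [hkl, dotp_sub_right, hD, hD, sub_self]
  -- time grid
  set K : ℕ := 3 * N with hK
  set Δ : ℝ := T / ((K : ℕ) : ℝ) with hΔdef
  have hKpos : 0 < K := by omega
  have hΔ : 0 < Δ := by
    rw [hΔdef]
    apply div_pos hT
    exact_mod_cast hKpos
  have hKΔ : ((K : ℕ) : ℝ) * Δ = T := by
    rw [hΔdef]
    field_simp
  -- step data
  set stepn : ℕ → E d := fun k => if k < N then a else if k < 2*N then u else a with hstepn
  set stepα : ℕ → ℝ := fun k =>
    if h1 : k < N then c ⟨k, h1⟩ - ηc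
    else if h2 : k < 2*N then U ⟨k - N, by omega⟩ - ηU
    else if h3 : k < 3*N then tt ⟨k - 2*N, by omega⟩ - ηt
    else 0 with hstepα
  set stepβ : ℕ → ℝ := fun k =>
    if h1 : k < N then c ⟨k, h1⟩
    else if h2 : k < 2*N then U ⟨k - N, by omega⟩
    else if h3 : k < 3*N then tt ⟨k - 2*N, by omega⟩
    else 1 with hstepβ
  set stepw : ℕ → E d := fun k =>
    if h1 : k < N then (δ2 / (Δ * ηc)) • u
    else if h2 : k < 2*N then (1 / (Δ * ηU)) • ρ₂ ⟨k - N, by omega⟩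
    else if h3 : k < 3*N then (1 / (Δ * ηt)) • ρ₃ ⟨k - 2*N, by omega⟩
    else 0 with hstepw
  set V : Fin N → ℕ → E d := fun i k =>
    if h1 : k < N then (if c ⟨k, h1⟩ ≤ c i then (δ2 / Δ) • u else 0)
    else if h2 : k < 2*N then
      (if U ⟨k - N, by omega⟩ ≤ U i then Δ⁻¹ • ρ₂ ⟨k - N, by omega⟩ else 0)
    else if h3 : k < 3*N then
      (if tt ⟨k - 2*N, by omega⟩ ≤ tt i then Δ⁻¹ • ρ₃ ⟨k - 2*N, by omega⟩ else 0)
    else 0 with hV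
  have hΔne : Δ ≠ 0 := ne_of_gt hΔ
  -- per-step displacement formulas
  have hV1 : ∀ i k (h1 : k < N),
      Δ • V i k = (if c ⟨k, h1⟩ ≤ c i then δ2 • u else 0) := by
    intro i k h1
    rw [hV]
    simp only [dif_pos h1]
    by_cases hcc : c ⟨k, h1⟩ ≤ c i
    · rw [if_pos hcc, if_pos hcc, smul_smul]
      congr 1
      field_simp
    · rw [if_neg hcc, if_neg hcc, smul_zero]
  have hV2 : ∀ i k (h2a : N ≤ k) (h2b : k < 2*N),
      Δ • V i k = (if U ⟨k - N, by omega⟩ ≤ U i then ρ₂ ⟨k - N, by omega⟩ else 0) := by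
    intro i k h2a h2b
    rw [hV]
    simp only [dif_neg (show ¬ k < N from by omega), dif_pos h2b]
    by_cases hcc : U ⟨k - N, by omega⟩ ≤ U i
    · rw [if_pos hcc, if_pos hcc, smul_smul, mul_inv_cancel₀ hΔne, one_smul]
    · rw [if_neg hcc, if_neg hcc, smul_zero]
  have hV3 : ∀ i k (h3a : 2*N ≤ k) (h3b : k < 3*N),
      Δ • V i k = (if tt ⟨k - 2*N, by omega⟩ ≤ tt i then ρ₃ ⟨k - 2*N, by omega⟩ else 0) := by
    intro i k h3a h3b
    rw [hV]
    simp only [dif_neg (show ¬ k < N from by omega), dif_neg (show ¬ k < 2*N from by omega),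
      dif_pos h3b]
    by_cases hcc : tt ⟨k - 2*N, by omega⟩ ≤ tt i
    · rw [if_pos hcc, if_pos hcc, smul_smul, mul_inv_cancel₀ hΔne, one_smul]
    · rw [if_neg hcc, if_neg hcc, smul_zero]
  -- full stage sums
  have hsumN : ∀ i, ∑ k ∈ Finset.range N, Δ • V i k = (δ2 * (rnk i : ℝ)) • u := by
    intro i
    have h1 : ∀ k ∈ Finset.range N, Δ • V i k
        = (fun k => if h : k < N then (if c ⟨k, h⟩ ≤ c i then δ2 • u else 0) else 0) k := by
      intro k hk
      rw [Finset.mem_range] at hk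
      simp only [dif_pos hk]
      exact hV1 i k hk
    rw [Finset.sum_congr rfl h1, ← Fin.sum_univ_eq_sum_range
        (fun k => if h : k < N then (if c ⟨k, h⟩ ≤ c i then δ2 • u else 0) else 0) N]
    have h2 : ∀ j : Fin N, (if h : (j:ℕ) < N then (if c ⟨(j:ℕ), h⟩ ≤ c i then δ2 • u else 0) else 0)
        = (if c j ≤ c i then δ2 • u else 0) := by
      intro j
      rw [dif_pos j.isLt]
    rw [Finset.sum_congr rfl (fun j _ => h2 j), Finset.sum_ite,
      Finset.sum_const, Finset.sum_const_zero, add_zero, hrnkdef]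
    rw [← Nat.cast_smul_eq_nsmul ℝ, smul_smul]
    congr 1
    ring
  have htail2 : ∀ i j, j < N → Δ • V i (N + j)
      = (if h : j < N then (if U ⟨j, h⟩ ≤ U i then ρ₂ ⟨j, h⟩ else 0) else 0) := by
    intro i j hj
    rw [dif_pos hj, hV2 i (N+j) (by omega) (by omega)]
    have he : (⟨N + j - N, by omega⟩ : Fin N) = ⟨j, hj⟩ := by
      congr 1
      omega
    rw [he]
  have htail3 : ∀ i j, j < N → Δ • V i (2*N + j)
      = (if h : j < N then (if tt ⟨j, h⟩ ≤ tt i then ρ₃ ⟨j, h⟩ else 0) else 0) := by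
    intro i j hj
    rw [dif_pos hj, hV3 i (2*N+j) (by omega) (by omega)]
    have he : (⟨2*N + j - 2*N, by omega⟩ : Fin N) = ⟨j, hj⟩ := by
      congr 1
      omega
    rw [he]
  have hsum2Ntail : ∀ i, ∑ k ∈ Finset.range N, Δ • V i (N + k)
      = ∑ j ∈ Finset.univ.filter (fun j => U j ≤ U i), ρ₂ j := by
    intro i
    rw [Finset.sum_congr rfl (fun k hk => htail2 i k (Finset.mem_range.mp hk)), ← Fin.sum_univ_eq_sum_range
        (fun k => if h : k < N then (if U ⟨k, h⟩ ≤ U i then ρ₂ ⟨k, h⟩ else 0) else 0) N]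
    have h2 : ∀ j : Fin N, (if h : (j:ℕ) < N then (if U ⟨(j:ℕ), h⟩ ≤ U i then ρ₂ ⟨(j:ℕ), h⟩ else 0) else 0)
        = (if U j ≤ U i then ρ₂ j else 0) := by
      intro j
      rw [dif_pos j.isLt]
    rw [Finset.sum_congr rfl (fun j _ => h2 j), ← Finset.sum_filter]
  have hsum3Ntail : ∀ i, ∑ k ∈ Finset.range N, Δ • V i (2*N + k)
      = ∑ j ∈ Finset.univ.filter (fun j => tt j ≤ tt i), ρ₃ j := by
    intro i
    rw [Finset.sum_congr rfl (fun k hk => htail3 i k (Finset.mem_range.mp hk)), ← Fin.sum_univ_eq_sum_range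
        (fun k => if h : k < N then (if tt ⟨k, h⟩ ≤ tt i then ρ₃ ⟨k, h⟩ else 0) else 0) N]
    have h2 : ∀ j : Fin N, (if h : (j:ℕ) < N then (if tt ⟨(j:ℕ), h⟩ ≤ tt i then ρ₃ ⟨(j:ℕ), h⟩ else 0) else 0)
        = (if tt j ≤ tt i then ρ₃ j else 0) := by
      intro j
      rw [dif_pos j.isLt]
    rw [Finset.sum_congr rfl (fun j _ => h2 j), ← Finset.sum_filter]
  have hsum2N : ∀ i, x i + ∑ k ∈ Finset.range (2*N), Δ • V i k = q i := by
    intro i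
    rw [show 2*N = N + N from by omega, Finset.sum_range_add, hsumN i, hsum2Ntail i, hρ₂sum i]
    rw [hp]
    simp only
    abel
  have hsum3N : ∀ i, x i + ∑ k ∈ Finset.range (3*N), Δ • V i k = z' i := by
    intro i
    rw [show 3*N = 2*N + N from by omega, Finset.sum_range_add, ← add_assoc, hsum2N i,
      hsum3Ntail i, hρ₃sum i, hq]
    simp only
    rw [add_assoc, ← add_smul]
    have hcoef : (U i - dotp u (z' i)) / dotp u u + (dotp u (z' i) - U i) / dotp u u = 0 := by
      field_simp
      ring
    rw [hcoef, zero_smul, add_zero]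
  have hηcne : ηc ≠ 0 := ne_of_gt hηc
  have hηUne : ηU ≠ 0 := ne_of_gt hηU
  have hηtne : ηt ≠ 0 := ne_of_gt hηt
  -- the master field condition
  have hfield : ∀ i : Fin N, ∀ m, m < K → ∀ s ∈ Set.Icc (0:ℝ) Δ,
      mvec (Wmat i0 i1 (stepw m)) (reluVec (mvec (Amat i0 i1 (stepn m))
        ((x i + ∑ k ∈ Finset.range m, Δ • V i k) + s • V i m)
        + bvec i0 i1 (stepα m) (stepβ m))) = V i m := by
    intro i m hmK s _
    have hm3 : m < 3*N := by rw [hK] at hmK; exact hmK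
    by_cases h1 : m < N
    · -- stage 1
      have hsn : stepn m = a := by rw [hstepn]; simp only [if_pos h1]
      have hsα : stepα m = c ⟨m, h1⟩ - ηc := by rw [hstepα]; simp only [dif_pos h1]
      have hsβ : stepβ m = c ⟨m, h1⟩ := by rw [hstepβ]; simp only [dif_pos h1]
      have hsw : stepw m = (δ2 / (Δ * ηc)) • u := by rw [hstepw]; simp only [dif_pos h1]
      have hVm : V i m = (if c ⟨m, h1⟩ ≤ c i then (δ2 / Δ) • u else 0) := by
        rw [hV]; simp only [dif_pos h1]
      have hkey : dotp a ((x i + ∑ k ∈ Finset.range m, Δ • V i k) + s • V i m) = c i := by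
        rw [dotp_add_right, dotp_add_right, dotp_sum_right]
        have hz1 : ∀ k ∈ Finset.range m, dotp a (Δ • V i k) = 0 := by
          intro k hk
          rw [Finset.mem_range] at hk
          rw [hV1 i k (by omega)]
          by_cases hcc : c ⟨k, by omega⟩ ≤ c i
          · rw [if_pos hcc, dotp_smul_right, hau, mul_zero]
          · rw [if_neg hcc, dotp_zero_right]
        have hz2 : dotp a (s • V i m) = 0 := by
          rw [hVm]
          by_cases hcc : c ⟨m, h1⟩ ≤ c i
          · rw [if_pos hcc, dotp_smul_right, dotp_smul_right, hau]; ring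
          · rw [if_neg hcc, smul_zero, dotp_zero_right]
        rw [Finset.sum_eq_zero hz1, hz2, add_zero, add_zero]
      rw [hsn, hsα, hsβ, hsw]
      have hαβ : c ⟨m, h1⟩ - ηc ≤ c ⟨m, h1⟩ := by linarith
      by_cases hcc : c ⟨m, h1⟩ ≤ c i
      · have hmov := field_moving h01 ((δ2 / (Δ * ηc)) • u) hαβ
          (show c ⟨m, h1⟩ ≤ dotp a ((x i + ∑ k ∈ Finset.range m, Δ • V i k) + s • V i m)
            from by rw [hkey]; exact hcc)
        rw [hmov, hVm, if_pos hcc, sub_sub_cancel, smul_smul]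
        congr 1
        field_simp <;> ring
      · have hne2 : i ≠ ⟨m, h1⟩ := by
          intro h
          rw [← h] at hcc
          exact hcc le_rfl
        have hgap := hgapc i ⟨m, h1⟩ hne2
        have hlt : c i < c ⟨m, h1⟩ := not_le.mp hcc
        have habs : |c i - c ⟨m, h1⟩| = c ⟨m, h1⟩ - c i := by
          rw [abs_of_neg (by linarith), neg_sub]
        rw [habs] at hgap
        have hfro := field_frozen h01 ((δ2 / (Δ * ηc)) • u) (c ⟨m, h1⟩) hαβ
          (show dotp a ((x i + ∑ k ∈ Finset.range m, Δ • V i k) + s • V i m) ≤ c ⟨m, h1⟩ - ηc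
            from by rw [hkey]; linarith)
        rw [hfro, hVm, if_neg hcc]
    · by_cases h2 : m < 2*N
      · -- stage 2
        have hmN : m - N < N := by omega
        have hsn : stepn m = u := by rw [hstepn]; simp only [if_neg h1, if_pos h2]
        have hsα : stepα m = U ⟨m - N, hmN⟩ - ηU := by
          rw [hstepα]; simp only [dif_neg h1, dif_pos h2]
        have hsβ : stepβ m = U ⟨m - N, hmN⟩ := by
          rw [hstepβ]; simp only [dif_neg h1, dif_pos h2]
        have hsw : stepw m = (1 / (Δ * ηU)) • ρ₂ ⟨m - N, hmN⟩ := by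
          rw [hstepw]; simp only [dif_neg h1, dif_pos h2]
        have hVm : V i m = (if U ⟨m - N, hmN⟩ ≤ U i
            then Δ⁻¹ • ρ₂ ⟨m - N, hmN⟩ else 0) := by
          rw [hV]; simp only [dif_neg h1, dif_pos h2]
        have hpos : x i + ∑ k ∈ Finset.range m, Δ • V i k
            = p i + ∑ k ∈ Finset.range (m - N), Δ • V i (N + k) := by
          conv_lhs => rw [show m = N + (m - N) from by omega]
          rw [Finset.sum_range_add, hsumN i, ← add_assoc]
        have hkey : dotp u ((x i + ∑ k ∈ Finset.range m, Δ • V i k) + s • V i m) = U i := by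
          rw [hpos, dotp_add_right, dotp_add_right, dotp_sum_right, hup i]
          have hz1 : ∀ k ∈ Finset.range (m - N), dotp u (Δ • V i (N + k)) = 0 := by
            intro k hk
            rw [Finset.mem_range] at hk
            rw [htail2 i k (by omega), dif_pos (show k < N from by omega)]
            by_cases hcc : U ⟨k, show k < N from by omega⟩ ≤ U i
            · rw [if_pos hcc]; exact hρ₂perp _
            · rw [if_neg hcc, dotp_zero_right]
          have hz2 : dotp u (s • V i m) = 0 := by
            rw [hVm]
            by_cases hcc : U ⟨m - N, hmN⟩ ≤ U i
            · rw [if_pos hcc, dotp_smul_right, dotp_smul_right, hρ₂perp]; ring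
            · rw [if_neg hcc, smul_zero, dotp_zero_right]
          rw [Finset.sum_eq_zero hz1, hz2, add_zero, add_zero]
        rw [hsn, hsα, hsβ, hsw]
        have hαβ : U ⟨m - N, hmN⟩ - ηU ≤ U ⟨m - N, hmN⟩ := by linarith
        by_cases hcc : U ⟨m - N, hmN⟩ ≤ U i
        · have hmov := field_moving h01 ((1 / (Δ * ηU)) • ρ₂ ⟨m - N, hmN⟩) hαβ
            (show U ⟨m - N, hmN⟩
                ≤ dotp u ((x i + ∑ k ∈ Finset.range m, Δ • V i k) + s • V i m)
              from by rw [hkey]; exact hcc)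
          rw [hmov, hVm, if_pos hcc, sub_sub_cancel, smul_smul]
          congr 1
          field_simp <;> ring
        · have hne2 : i ≠ ⟨m - N, hmN⟩ := by
            intro h
            rw [← h] at hcc
            exact hcc le_rfl
          have hgap := hgapU i ⟨m - N, hmN⟩ hne2
          have hlt : U i < U ⟨m - N, hmN⟩ := not_le.mp hcc
          have habs : |U i - U ⟨m - N, hmN⟩| = U ⟨m - N, hmN⟩ - U i := by
            rw [abs_of_neg (by linarith), neg_sub]
          rw [habs] at hgap
          have hfro := field_frozen h01 ((1 / (Δ * ηU)) • ρ₂ ⟨m - N, hmN⟩)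
            (U ⟨m - N, hmN⟩) hαβ
            (show dotp u ((x i + ∑ k ∈ Finset.range m, Δ • V i k) + s • V i m)
                ≤ U ⟨m - N, hmN⟩ - ηU
              from by rw [hkey]; linarith)
          rw [hfro, hVm, if_neg hcc]
      · -- stage 3
        have hmN2 : m - 2*N < N := by omega
        have h3 : m < 3*N := hm3
        have hsn : stepn m = a := by rw [hstepn]; simp only [if_neg h1, if_neg h2]
        have hsα : stepα m = tt ⟨m - 2*N, hmN2⟩ - ηt := by
          rw [hstepα]; simp only [dif_neg h1, dif_neg h2, dif_pos h3]
        have hsβ : stepβ m = tt ⟨m - 2*N, hmN2⟩ := by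
          rw [hstepβ]; simp only [dif_neg h1, dif_neg h2, dif_pos h3]
        have hsw : stepw m = (1 / (Δ * ηt)) • ρ₃ ⟨m - 2*N, hmN2⟩ := by
          rw [hstepw]; simp only [dif_neg h1, dif_neg h2, dif_pos h3]
        have hVm : V i m = (if tt ⟨m - 2*N, hmN2⟩ ≤ tt i
            then Δ⁻¹ • ρ₃ ⟨m - 2*N, hmN2⟩ else 0) := by
          rw [hV]; simp only [dif_neg h1, dif_neg h2, dif_pos h3]
        have hpos : x i + ∑ k ∈ Finset.range m, Δ • V i k
            = q i + ∑ k ∈ Finset.range (m - 2*N), Δ • V i (2*N + k) := by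
          conv_lhs => rw [show m = 2*N + (m - 2*N) from by omega]
          rw [Finset.sum_range_add, ← add_assoc, hsum2N i]
        have hkey : dotp a ((x i + ∑ k ∈ Finset.range m, Δ • V i k) + s • V i m) = tt i := by
          rw [hpos, dotp_add_right, dotp_add_right, dotp_sum_right, haq i]
          have hz1 : ∀ k ∈ Finset.range (m - 2*N), dotp a (Δ • V i (2*N + k)) = 0 := by
            intro k hk
            rw [Finset.mem_range] at hk
            rw [htail3 i k (by omega), dif_pos (show k < N from by omega)]
            by_cases hcc : tt ⟨k, show k < N from by omega⟩ ≤ tt i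
            · rw [if_pos hcc]; exact hρ₃a _
            · rw [if_neg hcc, dotp_zero_right]
          have hz2 : dotp a (s • V i m) = 0 := by
            rw [hVm]
            by_cases hcc : tt ⟨m - 2*N, hmN2⟩ ≤ tt i
            · rw [if_pos hcc, dotp_smul_right, dotp_smul_right, hρ₃a]; ring
            · rw [if_neg hcc, smul_zero, dotp_zero_right]
          rw [Finset.sum_eq_zero hz1, hz2, add_zero, add_zero]
        rw [hsn, hsα, hsβ, hsw]
        have hαβ : tt ⟨m - 2*N, hmN2⟩ - ηt ≤ tt ⟨m - 2*N, hmN2⟩ := by linarith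
        by_cases hcc : tt ⟨m - 2*N, hmN2⟩ ≤ tt i
        · have hmov := field_moving h01 ((1 / (Δ * ηt)) • ρ₃ ⟨m - 2*N, hmN2⟩) hαβ
            (show tt ⟨m - 2*N, hmN2⟩
                ≤ dotp a ((x i + ∑ k ∈ Finset.range m, Δ • V i k) + s • V i m)
              from by rw [hkey]; exact hcc)
          rw [hmov, hVm, if_pos hcc, sub_sub_cancel, smul_smul]
          congr 1
          field_simp <;> ring
        · have hne2 : i ≠ ⟨m - 2*N, hmN2⟩ := by
            intro h
            rw [← h] at hcc
            exact hcc le_rfl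
          have hgap := hgapt i ⟨m - 2*N, hmN2⟩ hne2
          have hlt : tt i < tt ⟨m - 2*N, hmN2⟩ := not_le.mp hcc
          have habs : |tt i - tt ⟨m - 2*N, hmN2⟩| = tt ⟨m - 2*N, hmN2⟩ - tt i := by
            rw [abs_of_neg (by linarith), neg_sub]
          rw [habs] at hgap
          have hfro := field_frozen h01 ((1 / (Δ * ηt)) • ρ₃ ⟨m - 2*N, hmN2⟩)
            (tt ⟨m - 2*N, hmN2⟩) hαβ
            (show dotp a ((x i + ∑ k ∈ Finset.range m, Δ • V i k) + s • V i m)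
                ≤ tt ⟨m - 2*N, hmN2⟩ - ηt
              from by rw [hkey]; linarith)
          rw [hfro, hVm, if_neg hcc]
  -- final assembly
  refine ⟨fun t => Amat i0 i1 (stepn (idx Δ t)), fun t => Wmat i0 i1 (stepw (idx Δ t)),
    fun t => bvec i0 i1 (stepα (idx Δ t)) (stepβ (idx Δ t)),
    (Finset.range (K+1)).image (fun k : ℕ => (k:ℝ)*Δ), ?_, ?_, ?_,
    fun i => traj (x i) (V i) K Δ, ?_, ?_, ?_⟩
  · have h := pcOn_pw (fun k => Amat i0 i1 (stepn k)) K hΔ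
    rw [hKΔ] at h
    exact h
  · have h := pcOn_pw (fun k => Wmat i0 i1 (stepw k)) K hΔ
    rw [hKΔ] at h
    exact h
  · have h := pcOn_pw (fun k => bvec i0 i1 (stepα k) (stepβ k)) K hΔ
    rw [hKΔ] at h
    exact h
  · intro i
    have h := solves_pw (fun k => Amat i0 i1 (stepn k)) (fun k => Wmat i0 i1 (stepw k))
      (fun k => bvec i0 i1 (stepα k) (stepβ k)) K hΔ (x i) (V i) (hfield i)
    rw [hKΔ] at h
    exact h
  · intro i
    exact traj_zero (x i) (V i) K hΔ.le
  · intro i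
    have hXT : traj (x i) (V i) K Δ T = z' i := by
      rw [← hKΔ, traj_T (x i) (V i) K hΔ]
      exact hsum3N i
    simp only
    rw [hXT]
    exact hz'c i
end
end
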